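/- arXiv:1303.0955 — 8 statements merged into one kernel-verified Lean document; each statement's English description precedes it below -/
import Mathlib

section
/- An ideal J on a countable set has a topological representation if and only if J is dense and countably separated. -/
open Set TopologicalSpace

/-- An ideal of subsets of `α`: closed under subsets and finite unions,
and containing all singletons. -/
def IsIdeal {α : Type*} (J : Set (Set α)) : Prop :=
  (∀ a b : Set α, a ⊆ b → b ∈ J → a ∈ J) ∧
  (∀ a b : Set α, a ∈ J → b ∈ J → a ∪ b ∈ J) ∧
  (∀ x : α, {x} ∈ J)

/-- A σ-ideal on `X`: closed under subsets and countable unions,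
and containing all singletons. -/
def IsSigmaIdeal {X : Type*} (I : Set (Set X)) : Prop :=
  (∀ A B : Set X, A ⊆ B → B ∈ I → A ∈ I) ∧
  (∀ f : ℕ → Set X, (∀ n, f n ∈ I) → (⋃ n, f n) ∈ I) ∧
  (∀ x : X, {x} ∈ I)

/-- `J` has a topological representation: there are a separable metrizable space `X`,
a σ-ideal `I` on `X` containing all singletons, a countable dense set `D ⊆ X`
(the range of the bijection `ρ`) such that `J = {a : cl(ρ(a)) ∈ I}`. -/
def HasTopRep {E : Type*} (J : Set (Set E)) : Prop :=
  ∃ (X : Type) (_t : TopologicalSpace X),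
    MetrizableSpace X ∧ SeparableSpace X ∧
      ∃ I : Set (Set X), IsSigmaIdeal I ∧
        ∃ ρ : E → X, Function.Injective ρ ∧ (Set.range ρ).Countable ∧
          Dense (Set.range ρ) ∧ ∀ a : Set E, a ∈ J ↔ closure (ρ '' a) ∈ I

/-- An ideal is dense if every infinite set contains an infinite set in the ideal. -/
def IdealDense {α : Type*} (J : Set (Set α)) : Prop :=
  ∀ b : Set α, b.Infinite → ∃ a : Set α, a ⊆ b ∧ a.Infinite ∧ a ∈ J

/-- The family `c` separates the ideal `J`: for every `a ∈ J` and `J`-positive `b`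
there is `n` with `a ∩ c n = ∅` and `b ∩ c n ∉ J`. -/
def SeparatesIdeal {α : Type*} (J : Set (Set α)) (c : ℕ → Set α) : Prop :=
  ∀ a ∈ J, ∀ b : Set α, b ∉ J → ∃ n, a ∩ c n = ∅ ∧ b ∩ c n ∉ J

/-- An ideal is countably separated if some countable family separates it. -/
def CtblySeparated {α : Type*} (J : Set (Set α)) : Prop :=
  ∃ c : ℕ → Set α, SeparatesIdeal J c

section Machinery
open Filter

lemma ctble_mem_sigma {X : Type*} {I : Set (Set X)} (hI : IsSigmaIdeal I)
    {A : Set X} (hc : A.Countable) (hne : A.Nonempty) : A ∈ I := by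
  obtain ⟨f, hf⟩ := hc.exists_eq_range hne
  have : A = ⋃ n, {f n} := by simp [hf]
  rw [this]
  exact hI.2.1 _ (fun n => hI.2.2 _)

lemma rep_imp {α : Type} [Countable α] (J : Set (Set α)) (h : HasTopRep J) :
    IdealDense J ∧ CtblySeparated J := by
  classical
  obtain ⟨X, _t, hm, hs, I, hI, ρ, hρi, hρc, hρd, hiff⟩ := h
  letI : MetricSpace X := TopologicalSpace.metrizableSpaceMetric X
  haveI : SecondCountableTopology X := UniformSpace.secondCountable_of_separable X
  constructor
  · -- dense
    intro b hb
    set S : Set X := ρ '' b with hS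
    by_cases hy : ∃ y, y ∈ closure S \ S
    · obtain ⟨y, hyc, hyS⟩ := hy
      obtain ⟨f, hfS, hfl⟩ := mem_closure_iff_seq_limit.mp hyc
      have hrange : (range f).Infinite := by
        by_contra hfin
        rw [Set.not_infinite] at hfin
        have hcl : IsClosed (range f) := hfin.isClosed
        have hy2 : y ∈ range f := by
          have : y ∈ closure (range f) :=
            mem_closure_of_tendsto hfl (Eventually.of_forall (fun n => mem_range_self n))
          rwa [hcl.closure_eq] at this
        obtain ⟨n, hn⟩ := hy2
        exact hyS (hn ▸ hfS n)
      refine ⟨b ∩ ρ ⁻¹' (range f), inter_subset_left, ?_, ?_⟩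
      · have himg : ρ '' (b ∩ ρ ⁻¹' (range f)) = range f := by
          rw [Set.image_inter_preimage]
          exact inter_eq_right.mpr (range_subset_iff.mpr hfS)
        intro hfin
        exact hrange (himg ▸ hfin.image ρ)
      · rw [hiff]
        have himg : ρ '' (b ∩ ρ ⁻¹' (range f)) = range f := by
          rw [Set.image_inter_preimage]
          exact inter_eq_right.mpr (range_subset_iff.mpr hfS)
        rw [himg]
        have hcpt : IsCompact (insert y (range f)) := hfl.isCompact_insert_range
        have hsub : closure (range f) ⊆ insert y (range f) :=
          closure_minimal (subset_insert _ _) hcpt.isClosed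
        refine hI.1 _ _ hsub (ctble_mem_sigma hI ?_ ⟨y, mem_insert _ _⟩)
        exact (countable_range f).insert y
    · push_neg at hy
      have hcl : closure S = S := by
        apply Subset.antisymm _ subset_closure
        intro z hz
        by_contra hzS
        exact (hy z ⟨hz, hzS⟩)
      refine ⟨b, Subset.rfl, hb, ?_⟩
      rw [hiff]
      refine ctble_mem_sigma hI (hcl ▸ (b.to_countable.image ρ)) ?_
      rw [← hS, hcl]
      exact (hb.nonempty).image ρ
  · -- countably separated
    obtain ⟨U, hU⟩ := ((countable_countableBasis X).insert (∅ : Set X)).exists_eq_range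
      (insert_nonempty _ _)
    have hUopen : ∀ n, IsOpen (U n) := by
      intro n
      have : U n ∈ insert (∅ : Set X) (countableBasis X) := hU ▸ mem_range_self n
      rcases this with h | h
      · rw [h]; exact isOpen_empty
      · exact (isBasis_countableBasis X).isOpen h
    have hbasis : ∀ (V : Set X) (x : X), IsOpen V → x ∈ V → ∃ n, x ∈ U n ∧ U n ⊆ V := by
      intro V x hV hx
      obtain ⟨t, ht, hxt, htV⟩ := (isBasis_countableBasis X).exists_subset_of_mem_open hx hV
      have : t ∈ range U := hU ▸ (mem_insert_of_mem _ ht)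
      obtain ⟨n, hn⟩ := this
      exact ⟨n, hn ▸ hxt, hn ▸ htV⟩
    refine ⟨fun n => ρ ⁻¹' (U n), ?_⟩
    intro a ha b hb
    by_contra hcon
    push_neg at hcon
    apply hb
    rw [hiff]
    set A := closure (ρ '' a) with hA
    have hAI : A ∈ I := (hiff a).mp ha
    set g : ℕ → Set X := fun n => Nat.rec A
      (fun m _ => if a ∩ (ρ ⁻¹' (U m)) = ∅ then closure (ρ '' (b ∩ ρ ⁻¹' (U m))) else A) n with hg
    have hgI : ∀ n, g n ∈ I := by
      intro n
      cases n with
      | zero => exact hAI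
      | succ m =>
        show (if a ∩ (ρ ⁻¹' (U m)) = ∅ then closure (ρ '' (b ∩ ρ ⁻¹' (U m))) else A) ∈ I
        split_ifs with hc
        · exact (hiff _).mp (hcon m hc)
        · exact hAI
    have hcover : closure (ρ '' b) ⊆ ⋃ n, g n := by
      intro x hx
      by_cases hxA : x ∈ A
      · exact mem_iUnion.mpr ⟨0, hxA⟩
      · obtain ⟨n, hxU, hUA⟩ := hbasis Aᶜ x (isClosed_closure.isOpen_compl) hxA
        have hdisj : a ∩ (ρ ⁻¹' (U n)) = ∅ := by
          rw [← Set.image_eq_empty (f := ρ)]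
          rw [Set.image_inter_preimage]
          apply eq_empty_of_subset_empty
          intro z ⟨hz1, hz2⟩
          exact (hUA hz2) (subset_closure hz1)
        refine mem_iUnion.mpr ⟨n + 1, ?_⟩
        show x ∈ (if a ∩ (ρ ⁻¹' (U n)) = ∅ then closure (ρ '' (b ∩ ρ ⁻¹' (U n))) else A)
        rw [if_pos hdisj]
        rw [Set.image_inter_preimage, inter_comm]
        exact (hUopen n).inter_closure ⟨hxU, hx⟩
    exact hI.1 _ _ hcover (hI.2.1 g hgI)

inductive Tm (α : Type) : Type where
  | base : ℕ → Tm α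
  | sngl : α → Tm α
  | top : Tm α
  | compl : Tm α → Tm α
  | inter : Tm α → Tm α → Tm α

namespace Tm

variable {α : Type}

def enc (ι : α → ℕ) : Tm α → ℕ
  | base n => Nat.pair 0 n
  | sngl a => Nat.pair 1 (ι a)
  | top => Nat.pair 2 0
  | compl t => Nat.pair 3 (enc ι t)
  | inter s t => Nat.pair 4 (Nat.pair (enc ι s) (enc ι t))

lemma enc_inj {ι : α → ℕ} (hι : Function.Injective ι) :
    Function.Injective (enc ι) := by
  intro s t h
  induction s generalizing t with
  | base n =>
      cases t <;> simp only [enc, Nat.pair_eq_pair] at h <;> try omega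
      rw [h.2]
  | sngl a =>
      cases t <;> simp only [enc, Nat.pair_eq_pair] at h <;> try omega
      rw [hι h.2]
  | top =>
      cases t <;> simp only [enc, Nat.pair_eq_pair] at h <;> try omega
      rfl
  | compl s ih =>
      cases t <;> simp only [enc, Nat.pair_eq_pair] at h <;> try omega
      rw [ih h.2]
  | inter s₁ s₂ ih₁ ih₂ =>
      cases t <;> simp only [enc, Nat.pair_eq_pair] at h <;> try omega
      rw [ih₁ h.2.1, ih₂ h.2.2]

instance : Nonempty (Tm α) := ⟨Tm.top⟩

instance [Countable α] : Countable (Tm α) := by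
  obtain ⟨ι, hι⟩ := (countable_iff_exists_injective α).mp inferInstance
  exact (countable_iff_exists_injective _).mpr ⟨enc ι, enc_inj hι⟩

def eval (c : ℕ → Set α) : Tm α → Set α
  | base n => c n
  | sngl a => {a}
  | top => Set.univ
  | compl t => (eval c t)ᶜ
  | inter s t => eval c s ∩ eval c t

end Tm

/-- All data for the main construction. -/
structure Setup (α : Type) where
  J : Set (Set α)
  γ : ℕ → Set α
  hmono : ∀ a b : Set α, a ⊆ b → b ∈ J → a ∈ J
  hunion : ∀ a b : Set α, a ∈ J → b ∈ J → a ∪ b ∈ J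
  hempty : ∅ ∈ J
  hsingl : ∀ d : α, {d} ∈ J
  htall : IdealDense J
  hsep : ∀ a ∈ J, ∀ b ∉ J, ∃ k, a ∩ γ k = ∅ ∧ b ∩ γ k ∉ J
  hcompl : ∀ n, ∃ k, γ k = (γ n)ᶜ
  hinter : ∀ n m, ∃ k, γ k = γ n ∩ γ m
  hsngls : ∀ d : α, ∃ k, γ k = {d}
  htop : ∃ k, γ k = Set.univ

namespace Setup

variable {α : Type} (S : Setup α)

lemma finite_mem {s : Set α} (hs : s.Finite) : s ∈ S.J := by
  refine Set.Finite.induction_on (motive := fun s _ => s ∈ S.J) s hs S.hempty ?_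
  intro a s _ _ ih
  rw [Set.insert_eq]
  exact S.hunion _ _ (S.hsingl _) ih

lemma pos_infinite {b : Set α} (hb : b ∉ S.J) : b.Infinite := by
  by_contra h
  rw [Set.not_infinite] at h
  exact hb (S.finite_mem h)

lemma pos_nonempty {b : Set α} (hb : b ∉ S.J) : b.Nonempty :=
  (S.pos_infinite hb).nonempty

lemma diff_pos {b a : Set α} (hb : b ∉ S.J) (ha : a ∈ S.J) : b \ a ∉ S.J := by
  intro h
  exact hb (S.hmono b ((b \ a) ∪ a) (fun x hx => by
    by_cases hxa : x ∈ a
    · exact Or.inr hxa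
    · exact Or.inl ⟨hx, hxa⟩) (S.hunion _ _ h ha))

lemma biUnion_mem {ι : Type*} (F : Finset ι) (f : ι → Set α) (hf : ∀ i ∈ F, f i ∈ S.J) :
    (⋃ i ∈ F, f i) ∈ S.J := by
  classical
  revert hf
  induction F using Finset.induction_on with
  | empty => intro _; simpa using S.hempty
  | insert _ _ ha ih =>
      intro hf
      rw [Finset.set_biUnion_insert]
      exact S.hunion _ _ (hf _ (Finset.mem_insert_self _ _))
        (ih (fun i hi => hf i (Finset.mem_insert_of_mem hi)))

/-- The splitting lemma: every positive set is split into two positive pieces by some `γ m`. -/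
lemma split {b : Set α} (hb : b ∉ S.J) : ∃ m, b ∩ S.γ m ∉ S.J ∧ b \ S.γ m ∉ S.J := by
  classical
  by_contra hcon
  push_neg at hcon
  -- hcon : ∀ m, b ∩ γ m ∉ J → b \ γ m ∈ J
  set D : ℕ → Set α := fun i => if b ∩ S.γ i ∈ S.J then ∅ else b \ S.γ i with hD
  have hDJ : ∀ i, D i ∈ S.J := by
    intro i
    rw [hD]
    dsimp only
    split_ifs with h
    · exact S.hempty
    · exact hcon i h
  set G : ℕ → Set α := fun k => b \ ⋃ i ∈ Finset.range (k+1), D i with hG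
  have hGpos : ∀ k, G k ∉ S.J := by
    intro k h
    apply hb
    refine S.hmono b ((G k) ∪ ⋃ i ∈ Finset.range (k+1), D i) ?_
      (S.hunion _ _ h (S.biUnion_mem _ _ (fun i _ => hDJ i)))
    intro x hx
    by_cases hxu : x ∈ ⋃ i ∈ Finset.range (k+1), D i
    · exact Or.inr hxu
    · exact Or.inl ⟨hx, hxu⟩
  have hGsub : ∀ k, G k ⊆ b := fun k => diff_subset
  have hGdec : ∀ j k, j ≤ k → G k ⊆ G j := by
    intro j k hjk x hx
    exact ⟨hx.1, fun hmem => hx.2 (by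
      rw [Set.mem_iUnion₂] at hmem ⊢
      obtain ⟨i, hi, hxi⟩ := hmem
      exact ⟨i, Finset.mem_range.mpr (lt_of_lt_of_le (Finset.mem_range.mp hi)
        (by omega)), hxi⟩)⟩
  have hGavoid : ∀ a ∈ S.J, ∃ k, G k ∩ a = ∅ := by
    intro a ha
    obtain ⟨k, hk1, hk2⟩ := S.hsep a ha b hb
    refine ⟨k, ?_⟩
    apply eq_empty_of_subset_empty
    rintro x ⟨hxG, hxa⟩
    have hxb : x ∈ b := hxG.1
    have hxD : x ∉ D k := by
      intro h
      exact hxG.2 (Set.mem_iUnion₂.mpr ⟨k, Finset.mem_range.mpr (by omega), h⟩)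
    have hxγ : x ∈ S.γ k := by
      rw [hD] at hxD
      dsimp only at hxD
      rw [if_neg hk2] at hxD
      by_contra h
      exact hxD ⟨hxb, h⟩
    have : x ∈ a ∩ S.γ k := ⟨hxa, hxγ⟩
    rw [hk1] at this
    exact this
  -- diagonal sequence
  have hpick : ∀ (k : ℕ) (s : Finset α), ∃ d, d ∈ G k ∧ d ∉ s := by
    intro k s
    obtain ⟨d, hd1, hd2⟩ := (S.pos_infinite (hGpos k)).exists_notMem_finset s
    exact ⟨d, hd1, hd2⟩
  set PF : ℕ → Finset α := fun k => Nat.rec ∅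
    (fun k prev => insert (hpick k prev).choose prev) k with hPF
  set d : ℕ → α := fun k => (hpick k (PF k)).choose with hd
  have hdG : ∀ k, d k ∈ G k := fun k => (hpick k (PF k)).choose_spec.1
  have hdP : ∀ k, d k ∉ PF k := fun k => (hpick k (PF k)).choose_spec.2
  have hPFsucc : ∀ k, PF (k+1) = insert (d k) (PF k) := fun k => rfl
  have hPFmono : ∀ j k, j ≤ k → PF j ⊆ PF k := by
    intro j k hjk
    induction k with
    | zero => simp_all
    | succ n ih =>
        rcases Nat.lt_or_ge j (n+1) with h | h
        · exact subset_trans (ih (by omega)) (by rw [hPFsucc]; exact Finset.subset_insert _ _)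
        · have : j = n + 1 := by omega
          subst this; rfl
  have hdinj : Function.Injective d := by
    intro j k hjk
    by_contra hne
    rcases Nat.lt_or_ge j k with h | h
    · have : d j ∈ PF k := hPFmono (j+1) k h (by rw [hPFsucc]; exact Finset.mem_insert_self _ _)
      exact hdP k (hjk ▸ this)
    · have hkj : k < j := by omega
      have : d k ∈ PF j := hPFmono (k+1) j hkj (by rw [hPFsucc]; exact Finset.mem_insert_self _ _)
      exact hdP j (hjk ▸ this)
  have hrange_inf : (Set.range d).Infinite := Set.infinite_range_of_injective hdinj
  have hrange_sub : Set.range d ⊆ b := by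
    rintro _ ⟨k, rfl⟩
    exact hGsub k (hdG k)
  obtain ⟨s', hs'sub, hs'inf, hs'J⟩ := S.htall (Set.range d) hrange_inf
  obtain ⟨k, hk⟩ := hGavoid s' hs'J
  have hT : {m : ℕ | d m ∈ s'}.Infinite := by
    intro hfin
    apply hs'inf
    have : s' ⊆ d '' {m | d m ∈ s'} := by
      intro z hz
      obtain ⟨m, rfl⟩ := hs'sub hz
      exact ⟨m, hz, rfl⟩
    exact Set.Finite.subset (hfin.image d) this
  obtain ⟨m, hm1, hm2⟩ := hT.exists_gt k
  have : d m ∈ G k ∩ s' := ⟨hGdec k m (by omega) (hdG m), hm1⟩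
  rw [hk] at this
  exact this

end Setup

-- ## Topological part

lemma coord_open (k : ℕ) (v : Bool) : IsOpen {y : ℕ → Bool | y k = v} := by
  have h : {y : ℕ → Bool | y k = v} = (fun y : ℕ → Bool => y k) ⁻¹' {v} := rfl
  rw [h]
  exact (continuous_apply k).isOpen_preimage _ (isOpen_discrete _)

lemma cyl_open (x : ℕ → Bool) (F : Finset ℕ) : IsOpen {y : ℕ → Bool | ∀ i ∈ F, y i = x i} := by
  have : {y : ℕ → Bool | ∀ i ∈ F, y i = x i} = ⋂ i ∈ F, {y : ℕ → Bool | y i = x i} := by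
    ext y; simp
  rw [this]
  exact isOpen_biInter_finset (fun i _ => coord_open i (x i))

lemma cyl_subset {V : Set (ℕ → Bool)} (hV : IsOpen V) {x : ℕ → Bool} (hx : x ∈ V) :
    ∃ F : Finset ℕ, {y : ℕ → Bool | ∀ i ∈ F, y i = x i} ⊆ V := by
  obtain ⟨F, u, h1, h2⟩ := isOpen_pi_iff.mp hV x hx
  refine ⟨F, fun y hy => h2 ?_⟩
  intro i hi
  have hiF : i ∈ F := hi
  rw [hy i hiF]
  exact (h1 i hiF).2

namespace Setup

open scoped Classical

variable {α : Type} (S : Setup α)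

def Good (x : ℕ → Bool) : Prop :=
  (∀ k, S.γ k = ∅ → x k = false) ∧
  (∀ k n, S.γ k = (S.γ n)ᶜ → x k = !x n) ∧
  (∀ k n m, S.γ k = S.γ n ∩ S.γ m → x k = (x n && x m))

abbrev X : Type := ↥{x : ℕ → Bool | S.Good x}

lemma good_true_ne {x : ℕ → Bool} (hx : S.Good x) {k : ℕ} (h : x k = true) : S.γ k ≠ ∅ :=
  fun he => by rw [hx.1 k he] at h; cases h

lemma good_univ {x : ℕ → Bool} (hx : S.Good x) {k : ℕ} (h : S.γ k = Set.univ) :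
    x k = true := by
  obtain ⟨k', hk'⟩ := S.hcompl k
  have h1 : S.γ k' = ∅ := by rw [hk', h, compl_univ]
  have h3 := hx.2.1 k' k hk'
  rw [hx.1 k' h1] at h3
  cases h' : x k
  · rw [h'] at h3; cases h3
  · rfl

def lit (x : ℕ → Bool) (i : ℕ) : Set α := if x i = true then S.γ i else (S.γ i)ᶜ

lemma exists_index {x : ℕ → Bool} (hx : S.Good x) (F : Finset ℕ) :
    ∃ k, S.γ k = (⋂ i ∈ F, S.lit x i) ∧ x k = true := by
  classical
  induction F using Finset.induction_on with
  | empty =>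
      obtain ⟨k, hk⟩ := S.htop
      exact ⟨k, by simp [hk], S.good_univ hx hk⟩
  | @insert a F' ha ih =>
      obtain ⟨k₀, hk₀, hxk₀⟩ := ih
      by_cases hxa : x a = true
      · obtain ⟨k, hk⟩ := S.hinter a k₀
        refine ⟨k, ?_, ?_⟩
        · rw [hk, hk₀, Finset.set_biInter_insert]
          congr 1
          rw [lit, if_pos hxa]
        · rw [hx.2.2 k a k₀ hk, hxa, hxk₀]; rfl
      · obtain ⟨m, hm⟩ := S.hcompl a
        have hxm : x m = true := by
          rw [hx.2.1 m a hm]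
          cases h' : x a
          · rfl
          · exact absurd h' hxa
        obtain ⟨k, hk⟩ := S.hinter m k₀
        refine ⟨k, ?_, ?_⟩
        · rw [hk, hm, hk₀, Finset.set_biInter_insert]
          congr 1
          rw [lit, if_neg hxa]
        · rw [hx.2.2 k m k₀ hk, hxm, hxk₀]; rfl

noncomputable def e (d : α) : ℕ → Bool := fun k => decide (d ∈ S.γ k)

lemma e_good (d : α) : S.Good (S.e d) := by
  refine ⟨?_, ?_, ?_⟩
  · intro k hk; simp [e, hk]
  · intro k n hk; simp [e, hk]
  · intro k n m hk; simp [e, hk, Bool.decide_and]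

noncomputable def ρ (d : α) : S.X := ⟨S.e d, S.e_good d⟩

lemma e_eq_true {d : α} {k : ℕ} : S.e d k = true ↔ d ∈ S.γ k := by simp [e]

lemma mem_lit_iff {x : ℕ → Bool} {d : α} {i : ℕ} : d ∈ S.lit x i ↔ S.e d i = x i := by
  unfold lit e
  cases h : x i <;> simp [h]

lemma ρ_inj : Function.Injective S.ρ := by
  intro d d' h
  obtain ⟨k, hk⟩ := S.hsngls d
  have h1 : S.e d k = true := by simp [e, hk]
  have h2 : S.e d' k = S.e d k := by rw [show S.e d' = S.e d from congrArg Subtype.val h.symm]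
  rw [h1] at h2
  have : d' ∈ S.γ k := by simpa [e] using h2
  rw [hk] at this
  exact this.symm

lemma good_closed : IsClosed {x : ℕ → Bool | S.Good x} := by
  rw [← isOpen_compl_iff]
  rw [isOpen_iff_forall_mem_open]
  intro x hx
  simp only [mem_compl_iff, mem_setOf_eq, Good, not_and_or] at hx
  rcases hx with h | h | h
  · push_neg at h
    obtain ⟨k, hk, hxk⟩ := h
    refine ⟨({y | y k = x k} : Set (ℕ → Bool)), ?_, coord_open k (x k), rfl⟩
    intro y hy
    simp only [mem_compl_iff, mem_setOf_eq, Good, not_and_or]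
    exact Or.inl (by push_neg; exact ⟨k, hk, by rw [hy]; exact hxk⟩)
  · push_neg at h
    obtain ⟨k, n, hk, hxk⟩ := h
    refine ⟨({y | y k = x k} ∩ {y | y n = x n} : Set (ℕ → Bool)), ?_, (coord_open k (x k)).inter (coord_open n (x n)), ⟨rfl, rfl⟩⟩
    rintro y ⟨hy1, hy2⟩
    simp only [mem_compl_iff, mem_setOf_eq, Good, not_and_or]
    exact Or.inr (Or.inl (by push_neg; exact ⟨k, n, hk, by rw [hy1, hy2]; exact hxk⟩))
  · push_neg at h
    obtain ⟨k, n, m, hk, hxk⟩ := h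
    refine ⟨({y | y k = x k} ∩ ({y | y n = x n} ∩ {y | y m = x m}) : Set (ℕ → Bool)), ?_,
      (coord_open k (x k)).inter ((coord_open n (x n)).inter (coord_open m (x m))), ⟨rfl, rfl, rfl⟩⟩
    rintro y ⟨hy1, hy2, hy3⟩
    simp only [mem_compl_iff, mem_setOf_eq, Good, not_and_or]
    exact Or.inr (Or.inr (by push_neg; exact ⟨k, n, m, hk, by rw [hy1, hy2, hy3]; exact hxk⟩))

lemma compactSpace_X : CompactSpace S.X :=
  isCompact_iff_compactSpace.mp (S.good_closed.isCompact)

def Z (b : Set α) : Set S.X := {x | ∀ n, x.1 n = true → b ∩ S.γ n ∉ S.J}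

lemma Z_mono {b b' : Set α} (h : b' ⊆ b) : S.Z b' ⊆ S.Z b := by
  intro x hx n hn hJ
  exact hx n hn (S.hmono _ _ (inter_subset_inter_left _ h) hJ)

lemma Z_closed (b : Set α) : IsClosed (S.Z b) := by
  rw [← isOpen_compl_iff, isOpen_iff_forall_mem_open]
  intro x hx
  simp only [mem_compl_iff, Z, mem_setOf_eq, not_forall] at hx
  obtain ⟨n, hn, hJ⟩ := hx
  rw [not_not] at hJ
  refine ⟨{y : S.X | y.1 n = true}, ?_, ?_, hn⟩
  · intro y hy
    simp only [mem_compl_iff, Z, mem_setOf_eq, not_forall]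
    exact ⟨n, hy, by rw [not_not]; exact hJ⟩
  · exact (coord_open n true).preimage continuous_subtype_val

lemma exists_point {b : Set α} (hb : b ∉ S.J) :
    ∃ y : S.X, y ∈ S.Z b ∧ (∀ i, b ⊆ S.γ i → y.1 i = true) ∧
      (∀ i, b ⊆ (S.γ i)ᶜ → y.1 i = false) := by
  classical
  set G : Filter α :=
    { sets := {s | b \ s ∈ S.J}
      univ_sets := by simp only [mem_setOf_eq, diff_univ]; exact S.hempty
      sets_of_superset := by
        intro s t hs hst
        exact S.hmono _ _ (diff_subset_diff_right hst) hs
      inter_sets := by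
        intro s t hs ht
        simp only [mem_setOf_eq, Set.diff_inter]
        exact S.hunion _ _ hs ht } with hG
  haveI : G.NeBot := by
    refine ⟨fun h => hb ?_⟩
    have h2 : (∅ : Set α) ∈ G := h ▸ Filter.mem_bot
    have h3 : b \ (∅ : Set α) ∈ S.J := h2
    simpa using h3
  obtain ⟨U, hU⟩ := Ultrafilter.exists_le G
  have hmemG : ∀ s : Set α, b \ s ∈ S.J → s ∈ U := fun s hs => hU hs
  have hgood : S.Good (fun n => decide (S.γ n ∈ U)) := by
    refine ⟨?_, ?_, ?_⟩
    · intro k hk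
      simp only [hk, decide_eq_false_iff_not]
      exact Filter.empty_notMem (U : Filter α)
    · intro k n hk
      simp [hk, Ultrafilter.compl_mem_iff_notMem]
    · intro k n m hk
      simp only [hk]
      rw [← Bool.decide_and]
      exact decide_eq_decide.mpr Filter.inter_mem_iff
  refine ⟨⟨fun n => decide (S.γ n ∈ U), hgood⟩, ?_, ?_, ?_⟩
  · intro n hn hJn
    have hnU : S.γ n ∈ U := by simpa using hn
    have : (S.γ n)ᶜ ∈ U := hmemG _ (by rw [Set.diff_compl]; exact hJn)
    exact (Ultrafilter.compl_mem_iff_notMem.mp this) hnU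
  · intro i hi
    have : S.γ i ∈ U := hmemG _ (by rw [diff_eq_empty.mpr hi]; exact S.hempty)
    simpa using this
  · intro i hi
    have : (S.γ i)ᶜ ∈ U := hmemG _ (by rw [diff_eq_empty.mpr hi]; exact S.hempty)
    have := Ultrafilter.compl_mem_iff_notMem.mp this
    simpa using this

lemma exists_match {x : ℕ → Bool} (hx : S.Good x) (F : Finset ℕ) {b₁ : Set α}
    (hb : b₁ ∉ S.J) (hsub : b₁ ⊆ ⋂ i ∈ F, S.lit x i) :
    ∃ y : S.X, y ∈ S.Z b₁ ∧ (∀ i ∈ F, y.1 i = x i) ∧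
      (∀ i, b₁ ⊆ S.γ i → y.1 i = true) ∧ (∀ i, b₁ ⊆ (S.γ i)ᶜ → y.1 i = false) := by
  obtain ⟨y, hyZ, hyt, hyf⟩ := S.exists_point hb
  refine ⟨y, hyZ, ?_, hyt, hyf⟩
  intro i hi
  have hl : b₁ ⊆ S.lit x i := hsub.trans (Set.biInter_subset_of_mem hi)
  rw [lit] at hl
  by_cases h' : x i = true
  · rw [if_pos h'] at hl
    rw [hyt i hl, h']
  · rw [if_neg h'] at hl
    rw [hyf i hl]
    cases h'' : x i
    · rfl
    · exact absurd h'' h'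

lemma dense_ρ : Dense (Set.range S.ρ) := by
  rw [dense_iff_inter_open]
  rintro O hO ⟨x, hxO⟩
  obtain ⟨V, hV, hVO⟩ := isOpen_induced_iff.mp hO
  have hxV : x.1 ∈ V := by rw [← hVO] at hxO; exact hxO
  obtain ⟨F, hF⟩ := cyl_subset hV hxV
  obtain ⟨k, hk, hxk⟩ := S.exists_index x.2 F
  obtain ⟨d, hd⟩ := nonempty_iff_ne_empty.mpr (S.good_true_ne x.2 hxk)
  refine ⟨S.ρ d, ?_, ⟨d, rfl⟩⟩
  rw [← hVO]
  apply hF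
  intro i hi
  have hdl : d ∈ S.lit x.1 i := by
    rw [hk] at hd
    exact Set.biInter_subset_of_mem hi hd
  exact S.mem_lit_iff.mp hdl

lemma Z_subset_closure (b : Set α) : S.Z b ⊆ closure (S.ρ '' b) := by
  intro x hx
  rw [mem_closure_iff]
  intro O hO hxO
  obtain ⟨V, hV, hVO⟩ := isOpen_induced_iff.mp hO
  have hxV : x.1 ∈ V := by rw [← hVO] at hxO; exact hxO
  obtain ⟨F, hF⟩ := cyl_subset hV hxV
  obtain ⟨k, hk, hxk⟩ := S.exists_index x.2 F
  have hpos : b ∩ S.γ k ∉ S.J := hx k hxk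
  obtain ⟨d, hdb, hdγ⟩ := S.pos_nonempty hpos
  refine ⟨S.ρ d, ?_, ⟨d, hdb, rfl⟩⟩
  rw [← hVO]
  apply hF
  intro i hi
  have hdl : d ∈ S.lit x.1 i := by
    rw [hk] at hdγ
    exact Set.biInter_subset_of_mem hi hdγ
  exact S.mem_lit_iff.mp hdl

lemma meagre_of_avoid {b : Set α} (C : Set S.X) (hC : IsClosed C)
    (h : ∀ z : S.X, z ∈ S.Z b → ∀ V : Set (ℕ → Bool), IsOpen V → z.1 ∈ V →
      ∃ y : S.X, y ∈ S.Z b ∧ y.1 ∈ V ∧ y ∉ C) :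
    IsMeagre (Subtype.val ⁻¹' C : Set (S.Z b)) := by
  have hclosed : IsClosed (Subtype.val ⁻¹' C : Set (S.Z b)) :=
    hC.preimage continuous_subtype_val
  rw [IsMeagre]
  apply residual_of_dense_open hclosed.isOpen_compl
  rw [dense_iff_inter_open]
  rintro O hO ⟨z, hzO⟩
  obtain ⟨O₁, hO₁, hO₁e⟩ := isOpen_induced_iff.mp hO
  obtain ⟨V, hV, hVe⟩ := isOpen_induced_iff.mp hO₁
  have hz₁ : (z : S.X) ∈ O₁ := by rw [← hO₁e] at hzO; exact hzO
  have hzV : (z : S.X).1 ∈ V := by rw [← hVe] at hz₁; exact hz₁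
  obtain ⟨y, hyZ, hyV, hyC⟩ := h z z.2 V hV hzV
  refine ⟨⟨y, hyZ⟩, ?_, ?_⟩
  · rw [← hO₁e]
    show (y : S.X) ∈ O₁
    rw [← hVe]
    exact hyV
  · exact hyC

lemma meagre_closure {b : Set α} {a : Set α} (ha : a ∈ S.J) :
    IsMeagre (Subtype.val ⁻¹' (closure (S.ρ '' a)) : Set (S.Z b)) := by
  apply S.meagre_of_avoid _ isClosed_closure
  intro z hz V hV hzV
  obtain ⟨F, hF⟩ := cyl_subset hV hzV
  obtain ⟨k, hk, hzk⟩ := S.exists_index z.2 F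
  have hb₀ : b ∩ S.γ k ∉ S.J := hz k hzk
  obtain ⟨k', hk'1, hk'2⟩ := S.hsep a ha _ hb₀
  set b₁ : Set α := (b ∩ S.γ k) ∩ S.γ k' with hb₁def
  have hb₁ : b₁ ∉ S.J := hk'2
  have hsub : b₁ ⊆ ⋂ i ∈ F, S.lit z.1 i := by
    rw [← hk]
    exact fun x hx => hx.1.2
  obtain ⟨y, hyZ, hymatch, hytrue, _⟩ := S.exists_match z.2 F hb₁ hsub
  refine ⟨y, S.Z_mono (fun x hx => hx.1.1) hyZ, hF (fun i hi => hymatch i hi), ?_⟩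
  intro hyc
  have hyk' : y.1 k' = true := hytrue k' (fun x hx => hx.2)
  have hopen : IsOpen {w : S.X | w.1 k' = true} :=
    (coord_open k' true).preimage continuous_subtype_val
  obtain ⟨w, hw1, hw2⟩ := (mem_closure_iff.mp hyc) _ hopen hyk'
  obtain ⟨d, hd, rfl⟩ := hw2
  have hdγ : d ∈ S.γ k' := by
    have h' : S.e d k' = true := hw1
    rwa [S.e_eq_true] at h'
  have : d ∈ a ∩ S.γ k' := ⟨hd, hdγ⟩
  rw [hk'1] at this
  exact this

lemma meagre_singleton {b : Set α} (hb : b ∉ S.J) (x : S.X) :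
    IsMeagre (Subtype.val ⁻¹' ({x} : Set S.X) : Set (S.Z b)) := by
  apply S.meagre_of_avoid _ isClosed_singleton
  intro z hz V hV hzV
  obtain ⟨F, hF⟩ := cyl_subset hV hzV
  obtain ⟨k, hk, hzk⟩ := S.exists_index z.2 F
  have hb₀ : b ∩ S.γ k ∉ S.J := hz k hzk
  obtain ⟨m, hm1, hm2⟩ := S.split hb₀
  have hsub₁ : (b ∩ S.γ k) ∩ S.γ m ⊆ ⋂ i ∈ F, S.lit z.1 i := by
    rw [← hk]; exact fun x hx => hx.1.2
  have hsub₂ : (b ∩ S.γ k) \ S.γ m ⊆ ⋂ i ∈ F, S.lit z.1 i := by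
    rw [← hk]; exact fun x hx => hx.1.2
  obtain ⟨y₁, hy₁Z, hy₁m, hy₁t, _⟩ := S.exists_match z.2 F hm1 hsub₁
  obtain ⟨y₂, hy₂Z, hy₂m, _, hy₂f⟩ := S.exists_match z.2 F hm2 hsub₂
  have hy₁mt : y₁.1 m = true := hy₁t m inter_subset_right
  have hy₂mf : y₂.1 m = false := hy₂f m (fun x hx => hx.2)
  have hne : y₁ ≠ y₂ := by
    intro h
    rw [h] at hy₁mt
    rw [hy₁mt] at hy₂mf
    cases hy₂mf
  have hy₁Zb : y₁ ∈ S.Z b := S.Z_mono (fun x hx => hx.1.1) hy₁Z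
  have hy₂Zb : y₂ ∈ S.Z b := S.Z_mono (fun x hx => hx.1.1) hy₂Z
  by_cases hxy : y₁ = x
  · refine ⟨y₂, hy₂Zb, hF (fun i hi => hy₂m i hi), ?_⟩
    intro hc
    rw [Set.mem_singleton_iff] at hc
    exact hne (by rw [hc, hxy])
  · exact ⟨y₁, hy₁Zb, hF (fun i hi => hy₁m i hi), fun hc => hxy (Set.mem_singleton_iff.mp hc)⟩

lemma not_meagre_univ {b : Set α} (hb : b ∉ S.J) :
    ¬ IsMeagre (Set.univ : Set (S.Z b)) := by
  haveI : CompactSpace S.X := S.compactSpace_X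
  haveI : CompactSpace (S.Z b) := isCompact_iff_compactSpace.mp ((S.Z_closed b).isCompact)
  haveI : T2Space (S.Z b) := inferInstance
  haveI : LocallyCompactSpace (S.Z b) := inferInstance
  haveI : RegularSpace (S.Z b) := inferInstance
  haveI : BaireSpace (S.Z b) := inferInstance
  intro h
  rw [IsMeagre, compl_univ] at h
  have hd : Dense (∅ : Set (S.Z b)) := dense_of_mem_residual h
  obtain ⟨y, hy, -, -⟩ := S.exists_point hb
  have := hd.closure_eq
  rw [closure_empty] at this
  exact (this ▸ Set.mem_univ (⟨y, hy⟩ : S.Z b) : (⟨y, hy⟩ : S.Z b) ∈ (∅ : Set (S.Z b)))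

end Setup


open Filter in
theorem Setup.rep {α : Type} [Countable α] (S : Setup α) : HasTopRep S.J := by
  classical
  refine ⟨S.X, inferInstance, inferInstance, inferInstance,
    {A : Set S.X | ∀ b ∉ S.J, IsMeagre (Subtype.val ⁻¹' A : Set (S.Z b))}, ⟨?_, ?_, ?_⟩,
    S.ρ, S.ρ_inj, Set.countable_range _, S.dense_ρ, ?_⟩
  · intro A B hAB hB b hb
    exact (hB b hb).mono (Set.preimage_mono hAB)
  · intro f hf b hb
    rw [Set.preimage_iUnion]
    exact isMeagre_iUnion (fun n => hf n b hb)
  · intro x b hb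
    exact S.meagre_singleton hb x
  · intro a
    constructor
    · intro ha b hb
      exact S.meagre_closure ha
    · intro hcl
      by_contra ha
      refine S.not_meagre_univ ha ?_
      exact (hcl a ha).mono (fun z _ => S.Z_subset_closure a z.2)

theorem main_construction {α : Type} [Countable α] (J : Set (Set α)) (hJ : IsIdeal J)
    (hdense : IdealDense J) (hcs : CtblySeparated J) : HasTopRep J := by
  classical
  obtain ⟨c, hsepc⟩ := hcs
  by_cases hemp : (∅ : Set α) ∈ J
  · obtain ⟨g, hg⟩ := exists_surjective_nat (Tm α)
    set γ : ℕ → Set α := fun k => Tm.eval c (g k) with hγ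
    have hrange : ∀ t : Tm α, ∃ k, γ k = Tm.eval c t := by
      intro t
      obtain ⟨k, hk⟩ := hg t
      exact ⟨k, by simp only [hγ, hk]⟩
    have hγc : ∀ n, ∃ k, γ k = c n := fun n => hrange (Tm.base n)
    have hsep' : ∀ a ∈ J, ∀ b ∉ J, ∃ k, a ∩ γ k = ∅ ∧ b ∩ γ k ∉ J := by
      intro a ha b hb
      obtain ⟨n, h1, h2⟩ := hsepc a ha b hb
      obtain ⟨k, hk⟩ := hγc n
      exact ⟨k, by rw [hk]; exact h1, by rw [hk]; exact h2⟩
    have hcompl' : ∀ n, ∃ k, γ k = (γ n)ᶜ := fun n => hrange (Tm.compl (g n))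
    have hinter' : ∀ n m, ∃ k, γ k = γ n ∩ γ m := fun n m => hrange (Tm.inter (g n) (g m))
    have hsngls' : ∀ d : α, ∃ k, γ k = {d} := fun d => hrange (Tm.sngl d)
    have htop' : ∃ k, γ k = Set.univ := hrange Tm.top
    exact Setup.rep ⟨J, γ, hJ.1, hJ.2.1, hemp, hJ.2.2, hdense, hsep', hcompl', hinter',
      hsngls', htop'⟩
  · haveI hαe : IsEmpty α := ⟨fun d => hemp (hJ.1 ∅ {d} (Set.empty_subset _) (hJ.2.2 d))⟩
    refine ⟨↥{p : ℕ → Bool | False}, inferInstance, inferInstance, inferInstance,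
      (∅ : Set (Set ↥{p : ℕ → Bool | False})), ⟨?_, ?_, ?_⟩,
      fun d => (hαe.false d).elim, ?_, ?_, ?_, ?_⟩
    · intro A B _ hB
      exact hB.elim
    · intro f hf
      exact (hf 0).elim
    · intro x
      exact x.2.elim
    · intro d
      exact (hαe.false d).elim
    · exact Set.countable_range _
    · intro x
      exact x.2.elim
    · intro a
      constructor
      · intro haJ
        exfalso
        have h0 : a = ∅ := Set.eq_empty_of_isEmpty a
        exact hemp (h0 ▸ haJ)
      · intro h
        exact h.elim

end Machinery

/-- Theorem 1 (main characterization): an ideal on a countable set has a topological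
representation if and only if it is dense and countably separated. -/
theorem ideal_hasTopRep_iff_dense_and_ctblySeparated
    {α : Type} [Countable α] (J : Set (Set α)) (hJ : IsIdeal J) :
    HasTopRep J ↔ (IdealDense J ∧ CtblySeparated J) := by
  constructor
  · exact fun h => rep_imp J h
  · exact fun h => main_construction J hJ h.1 h.2
end

section
/- If J and K are ideals on ω with J ≤_RB K and K is countably separated, then J is countably separated. -/
open Set TopologicalSpace

/-- `J ≤_RB K`: there is a finite-to-one `f : ω → ω` with `a ∈ J ↔ f ⁻¹' a ∈ K`. -/
def RBle (J K : Set (Set ℕ)) : Prop :=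
  ∃ f : ℕ → ℕ, (∀ n : ℕ, (f ⁻¹' {n}).Finite) ∧ ∀ a : Set ℕ, a ∈ J ↔ f ⁻¹' a ∈ K

/-- If `J ≤_RB K` and `K` is countably separated, then `J` is countably separated. -/
theorem ctblySeparated_of_RBle
    (J K : Set (Set ℕ)) (hJ : IsIdeal J) (hK : IsIdeal K)
    (hRB : RBle J K) (hsep : CtblySeparated K) :
    CtblySeparated J := by
  obtain ⟨f, _hfin, hf⟩ := hRB
  obtain ⟨c, hc⟩ := hsep
  refine ⟨fun n => f '' c n, fun a ha b hb => ?_⟩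
  obtain ⟨n, hn1, hn2⟩ := hc (f ⁻¹' a) ((hf a).1 ha) (f ⁻¹' b)
    (fun h => hb ((hf b).2 h))
  refine ⟨n, ?_, ?_⟩
  · ext m
    simp only [Set.mem_inter_iff, Set.mem_image, Set.mem_empty_iff_false, iff_false]
    rintro ⟨hma, k, hk, rfl⟩
    exact Set.eq_empty_iff_forall_notMem.1 hn1 k ⟨hma, hk⟩
  · intro h
    apply hn2
    have h' : f ⁻¹' (b ∩ (f '' c n)) ∈ K := (hf _).1 h
    refine hK.1 _ _ (fun k hk => ?_) h'
    exact ⟨hk.1, Set.mem_image_of_mem f hk.2⟩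
end

section
/- The class of ideals which have topological representations is invariant under Rudin–Blass equivalence: if J ≤_RB K, K ≤_RB J and J has a topological representation, then K has a topological representation. -/
open Set TopologicalSpace

namespace HTRAux

open Metric Filter

/-! ### Arithmetic of levels -/

noncomputable def lvl (n : ℕ) : ℝ := ((n : ℝ) + 1)⁻¹

lemma lvl_pos (n : ℕ) : 0 < lvl n := by
  have : (0:ℝ) < (n:ℝ) + 1 := by positivity
  exact inv_pos.mpr this

lemma lvl_le_one (n : ℕ) : lvl n ≤ 1 := by
  rw [lvl, inv_le_one_iff₀]
  right; linarith [Nat.cast_nonneg (α := ℝ) n]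

lemma lvl_anti : StrictAnti lvl := by
  intro m n h
  have h1 : (0:ℝ) < (m:ℝ) + 1 := by positivity
  have h2 : (m:ℝ) < n := by exact_mod_cast h
  exact inv_strictAnti₀ h1 (by linarith)

lemma lvl_injective : Function.Injective lvl := lvl_anti.injective

lemma lvl_ne_zero (n : ℕ) : lvl n ≠ 0 := ne_of_gt (lvl_pos n)

lemma lvl_tendsto : Tendsto lvl atTop (nhds 0) := by
  have := tendsto_one_div_add_atTop_nhds_zero_nat (𝕜 := ℝ)
  convert this using 2 with n
  rw [lvl, one_div]

lemma lvl_gap_pos (n : ℕ) : 0 < lvl n - lvl (n + 1) :=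
  sub_pos.mpr (lvl_anti (Nat.lt_succ_self n))

lemma lvl_gap_eq (n : ℕ) : lvl n - lvl (n + 1) = lvl n * lvl (n + 1) := by
  have h1 : ((n : ℝ) + 1) ≠ 0 := by positivity
  have h2 : ((n : ℝ) + 1 + 1) ≠ 0 := by positivity
  rw [lvl, lvl]
  push_cast
  rw [inv_sub_inv h1 h2]
  rw [show ((n:ℝ) + 1 + 1) - ((n:ℝ) + 1) = 1 by ring]
  rw [div_eq_mul_inv, one_mul, mul_inv]

lemma lvl_near {m n : ℕ} (h : |lvl m - lvl n| < lvl n - lvl (n + 1)) : m = n := by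
  rcases lt_trichotomy m n with hlt | heq | hgt
  · exfalso
    obtain ⟨k, rfl⟩ : ∃ k, n = k + 1 := ⟨n - 1, by omega⟩
    have h2 : lvl k ≤ lvl m := lvl_anti.antitone (by omega)
    have habs : lvl m - lvl (k + 1) ≤ |lvl m - lvl (k + 1)| := le_abs_self _
    have hgap : lvl (k + 1) - lvl (k + 2) ≤ lvl k - lvl (k + 1) := by
      rw [lvl_gap_eq, lvl_gap_eq]
      exact mul_le_mul (lvl_anti.antitone (by omega)) (lvl_anti.antitone (by omega))
        (lvl_pos _).le (lvl_pos _).le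
    rw [show k + 1 + 1 = k + 2 from rfl] at h
    linarith
  · exact heq
  · exfalso
    have h1 : lvl m ≤ lvl (n + 1) := lvl_anti.antitone (by omega)
    have habs : lvl n - lvl m ≤ |lvl m - lvl n| := by
      rw [abs_sub_comm]; exact le_abs_self _
    linarith

lemma lvl_mem_closure {s : Set ℕ} {r : ℝ} (hr : r ∈ closure (lvl '' s)) (h0 : r ≠ 0) :
    ∃ n ∈ s, r = lvl n := by
  have hrpos : 0 < r := by
    have h1 : r ∈ closure (Set.Ici (0 : ℝ)) :=
      closure_mono (by rintro _ ⟨n, _, rfl⟩; exact (lvl_pos n).le) hr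
    rw [IsClosed.closure_eq isClosed_Ici] at h1
    exact lt_of_le_of_ne h1 (Ne.symm h0)
  have hsplit : lvl '' s ⊆ lvl '' (s ∩ {n | r / 2 < lvl n}) ∪ Set.Iic (r / 2) := by
    rintro _ ⟨n, hn, rfl⟩
    by_cases h : r / 2 < lvl n
    · exact Or.inl ⟨n, ⟨hn, h⟩, rfl⟩
    · exact Or.inr (not_lt.mp h)
  have hfin : (s ∩ {n | r / 2 < lvl n}).Finite := by
    refine (Set.finite_Iic ⌈2 / r⌉₊).subset ?_
    rintro n ⟨-, hn⟩
    simp only [Set.mem_Iic]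
    have hpos : (0:ℝ) < (n:ℝ) + 1 := by positivity
    have h4 : (r / 2) * ((n:ℝ) + 1) < 1 := by
      simp only [lvl] at hn
      have h5 := mul_lt_mul_of_pos_right hn hpos
      rwa [inv_mul_cancel₀ (ne_of_gt hpos)] at h5
    have h3 : (n : ℝ) ≤ 2 / r := by
      rw [le_div_iff₀ hrpos]
      nlinarith
    exact_mod_cast le_trans h3 (Nat.le_ceil (2 / r))
  have h2 := closure_mono hsplit hr
  rw [closure_union, IsClosed.closure_eq isClosed_Iic,
    IsClosed.closure_eq (hfin.image lvl).isClosed] at h2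
  rcases h2 with h | h
  · obtain ⟨n, hn, he⟩ := h
    exact ⟨n, hn.1, he.symm⟩
  · exfalso
    have : r ≤ r / 2 := h
    linarith

/-! ### A generic "thinning" lemma -/

/-- Every infinite set of indices has an infinite subset whose image has countable closure. -/
lemma exists_thin {X : Type} [MetricSpace X] (u : ℕ → X) {S : Set ℕ} (hS : S.Infinite) :
    ∃ c, c ⊆ S ∧ c.Infinite ∧ (closure (u '' c)).Countable := by
  by_cases hacc : ∃ x : X, ∀ ε > 0, ∃ y ∈ u '' S, y ≠ x ∧ dist y x < ε
  · obtain ⟨x, hx⟩ := hacc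
    have hch : ∀ q : ℕ, ∃ y, y ∈ u '' S ∧ y ≠ x ∧ dist y x < lvl q := by
      intro q
      obtain ⟨y, h1, h2, h3⟩ := hx (lvl q) (lvl_pos q)
      exact ⟨y, h1, h2, h3⟩
    choose t ht1 ht2 ht3 using hch
    have hTsub : Set.range t ⊆ u '' S := by rintro _ ⟨q, rfl⟩; exact ht1 q
    have hT'cl : closure (Set.range t) ⊆ Set.range t ∪ {x} := by
      intro z hz
      by_cases hzx : z = x
      · exact Or.inr hzx
      · left
        have hr : 0 < dist z x := dist_pos.mpr hzx
        obtain ⟨N, hN⟩ := exists_nat_gt (2 / dist z x)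
        have hsub2 : Set.range t ⊆
            t '' {q | q ≤ N} ∪ Metric.ball x (dist z x / 2) := by
          rintro _ ⟨q, rfl⟩
          by_cases hq : q ≤ N
          · exact Or.inl ⟨q, hq, rfl⟩
          · right
            rw [Metric.mem_ball]
            refine lt_trans (ht3 q) ?_
            rw [lvl]
            rw [inv_lt_iff_one_lt_mul₀ (by positivity)]
            have hq' : (N : ℝ) < (q : ℝ) := by exact_mod_cast Nat.lt_of_not_le hq
            have h4 : 2 / dist z x < (q : ℝ) + 1 := by linarith
            rw [div_lt_iff₀ hr] at h4
            nlinarith [hr]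
        have h3 := closure_mono hsub2 hz
        rw [closure_union] at h3
        rcases h3 with h | h
        · have hfin : (t '' {q | q ≤ N}).Finite := (Set.finite_Iic N).image t
          rw [IsClosed.closure_eq hfin.isClosed] at h
          exact (Set.image_subset_range t _) h
        · exfalso
          have h5 := Metric.closure_ball_subset_closedBall h
          rw [Metric.mem_closedBall] at h5
          linarith
    have hT'inf : (Set.range t).Infinite := by
      intro hfin
      obtain ⟨b, hb, hmin⟩ := Set.exists_min_image (Set.range t) (fun y => dist y x)
        hfin ⟨t 0, Set.mem_range_self 0⟩
      have hbpos : 0 < dist b x := by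
        obtain ⟨q, rfl⟩ := hb
        exact dist_pos.mpr (ht2 q)
      obtain ⟨q, hq⟩ := exists_nat_gt (1 / dist b x)
      have h1 : lvl q < dist b x := by
        rw [lvl, inv_lt_iff_one_lt_mul₀ (by positivity)]
        have h4 : 1 / dist b x < (q : ℝ) + 1 := by linarith
        rw [div_lt_iff₀ hbpos] at h4
        nlinarith
      have h2 := hmin (t q) (Set.mem_range_self q)
      have h3 := ht3 q
      linarith
    refine ⟨{m ∈ S | u m ∈ Set.range t}, fun m hm => hm.1, ?_, ?_⟩
    · have himg : Set.range t ⊆ u '' {m ∈ S | u m ∈ Set.range t} := by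
        rintro v hv
        obtain ⟨m, hm, rfl⟩ := hTsub hv
        exact ⟨m, ⟨hm, hv⟩, rfl⟩
      exact Set.Infinite.of_image u (hT'inf.mono himg)
    · have hsub4 : closure (u '' {m ∈ S | u m ∈ Set.range t}) ⊆ Set.range t ∪ {x} := by
        refine subset_trans (closure_mono ?_) hT'cl
        rintro _ ⟨m, hm, rfl⟩
        exact hm.2
      exact ((Set.countable_range t).union (Set.countable_singleton x)).mono hsub4
  · push_neg at hacc
    refine ⟨S, subset_rfl, hS, ?_⟩
    have hcl : closure (u '' S) ⊆ u '' S := by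
      intro z hz
      obtain ⟨ε, hε, hno⟩ := hacc z
      obtain ⟨b, hb, hbd⟩ := Metric.mem_closure_iff.mp hz ε hε
      rcases eq_or_ne b z with rfl | hne
      · exact hb
      · have h5 : dist b z < ε := by rwa [dist_comm] at hbd
        exact absurd h5 (not_lt.mpr (hno b hb hne))
    exact ((Set.to_countable S).image u).mono hcl

/-- Points in the closure of a set, inside an open set, are in the closure of the
intersection. -/
lemma mem_closure_inter_open {Z : Type*} [TopologicalSpace Z] {s U : Set Z} {y : Z}
    (hU : IsOpen U) (hy : y ∈ closure s) (hyU : y ∈ U) : y ∈ closure (s ∩ U) := by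
  rw [_root_.mem_closure_iff] at hy ⊢
  intro o ho hyo
  obtain ⟨z, hz, hzs⟩ := hy (o ∩ U) (ho.inter hU) ⟨hyo, hyU⟩
  exact ⟨z, hz.1, hzs, hz.2⟩

/-! ### The construction -/

section Defs

variable {X : Type} [MetricSpace X] (ρ : ℕ → X) (g f : ℕ → ℕ)

/-- The part of the fiber of `g` over `n` lying in the range of `f`. -/
def Wset (n : ℕ) : Set ℕ := g ⁻¹' {n} ∩ Set.range f

/-- The finite nonempty subset of `X` attached to `n`. -/
def Fset (n : ℕ) : Set X := ρ '' (Wset g f n) ∪ {ρ 0}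

/-- The point of `(ℕ → ℝ) × ℝ` representing `n`. -/
noncomputable def sig (n : ℕ) : (ℕ → ℝ) × ℝ :=
  (fun k => min 1 (infDist (ρ k) (Fset ρ g f n)), lvl n)

/-- The "limit compactum" of a limit distance function. -/
def Ghat (φ : ℕ → ℝ) : Set X := {x | ∀ ε > 0, ∃ k, dist (ρ k) x < ε ∧ φ k < ε}

/-- The mass attached to a point of the new space. -/
noncomputable def Phi (y : (ℕ → ℝ) × ℝ) : Set X :=
  (⋃ n ∈ {n | sig ρ g f n = y}, Fset ρ g f n) ∪
    (if y.2 = 0 then Ghat ρ y.1 else ∅)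

/-- The total mass of the closure of `sig '' a`. -/
noncomputable def VPhi (a : Set ℕ) : Set X :=
  ⋃ y ∈ closure (sig ρ g f '' a), Phi ρ g f y

end Defs

/-- The compact box containing all the points `sig n`. -/
def Cbox : Set ((ℕ → ℝ) × ℝ) := (Set.univ.pi fun _ : ℕ => Set.Icc (0:ℝ) 1) ×ˢ Set.Icc (0:ℝ) 1

lemma Cbox_compact : IsCompact Cbox :=
  (isCompact_univ_pi fun _ => isCompact_Icc).prod isCompact_Icc

section Lemmas

variable {X : Type} [MetricSpace X] (ρ : ℕ → X) (g f : ℕ → ℕ)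

lemma Fset_nonempty (n : ℕ) : (Fset ρ g f n).Nonempty := ⟨ρ 0, Or.inr rfl⟩

lemma Fset_finite (hgf : ∀ n : ℕ, (g ⁻¹' {n}).Finite) (n : ℕ) : (Fset ρ g f n).Finite := by
  refine Set.Finite.union (Set.Finite.image _ ?_) (Set.finite_singleton _)
  exact (hgf n).subset Set.inter_subset_left

lemma sig_injective : Function.Injective (sig ρ g f) := by
  intro m n h
  exact lvl_injective (congrArg Prod.snd h)

lemma sig_mem_Cbox (n : ℕ) : sig ρ g f n ∈ Cbox := by
  constructor
  · intro k _
    exact ⟨le_min zero_le_one infDist_nonneg, min_le_left _ _⟩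
  · exact ⟨(lvl_pos n).le, lvl_le_one n⟩
/-- Level isolation: points in the closure of `sig '' a` are either points `sig n`, `n ∈ a`,
or have level `0`. -/
lemma closure_sig_cases {a : Set ℕ} {y : (ℕ → ℝ) × ℝ}
    (hy : y ∈ closure (sig ρ g f '' a)) :
    (∃ n ∈ a, y = sig ρ g f n) ∨ y.2 = 0 := by
  by_cases h2 : y.2 = 0
  · exact Or.inr h2
  left
  have hy2 : y.2 ∈ closure (lvl '' a) :=
    map_mem_closure continuous_snd hy (by rintro _ ⟨n, hn, rfl⟩; exact ⟨n, hn, rfl⟩)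
  obtain ⟨n₀, hn₀, hr⟩ := lvl_mem_closure hy2 h2
  set U : Set ((ℕ → ℝ) × ℝ) := {z | |z.2 - lvl n₀| < lvl n₀ - lvl (n₀ + 1)} with hU
  have hUopen : IsOpen U := by
    have he : U = Prod.snd ⁻¹' (Metric.ball (lvl n₀) (lvl n₀ - lvl (n₀ + 1))) := by
      ext z; simp [hU, Metric.mem_ball, Real.dist_eq]
    rw [he]
    exact continuous_snd.isOpen_preimage _ Metric.isOpen_ball
  have hyU : y ∈ U := by
    simp only [hU, Set.mem_setOf_eq, hr, sub_self, abs_zero]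
    exact lvl_gap_pos n₀
  have hmem := mem_closure_inter_open hUopen hy hyU
  have hsub : sig ρ g f '' a ∩ U ⊆ {sig ρ g f n₀} := by
    rintro z ⟨⟨m, _, rfl⟩, hzU⟩
    have : m = n₀ := lvl_near hzU
    simp [this]
  have hcl := closure_mono hsub hmem
  rw [closure_singleton] at hcl
  have hne : (sig ρ g f '' a ∩ U).Nonempty := by
    by_contra h
    rw [Set.not_nonempty_iff_eq_empty] at h
    rw [h, closure_empty] at hmem
    exact hmem
  obtain ⟨z, hz⟩ := hne
  have hz' : z = sig ρ g f n₀ := hsub hz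
  obtain ⟨⟨m, hm, hzm⟩, -⟩ := hz
  have hmn : m = n₀ := sig_injective ρ g f (hzm.trans hz')
  exact ⟨n₀, hmn ▸ hm, hcl⟩

/-- The limit compactum of any point in the closure of `sig '' a` is contained in the closure
of the mass over `a`. -/
lemma Ghat_subset_closure {a : Set ℕ} {y : (ℕ → ℝ) × ℝ}
    (hy : y ∈ closure (sig ρ g f '' a)) :
    Ghat ρ y.1 ⊆ closure (ρ '' (g ⁻¹' a ∩ Set.range f) ∪ {ρ 0}) := by
  intro x hx
  rw [Metric.mem_closure_iff]
  intro δ hδ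
  have hεpos : 0 < min (δ / 2) (1 / 2) := by positivity
  obtain ⟨k, hk1, hk2⟩ := hx _ hεpos
  set ε := min (δ / 2) (1 / 2) with hε
  set U : Set ((ℕ → ℝ) × ℝ) := (fun z : (ℕ → ℝ) × ℝ => z.1 k) ⁻¹' Set.Iio ε with hU
  have hUopen : IsOpen U :=
    ((continuous_apply k).comp continuous_fst).isOpen_preimage _ isOpen_Iio
  have hyU : y ∈ U := hk2
  obtain ⟨z, hzU, hzs⟩ := _root_.mem_closure_iff.mp hy U hUopen hyU
  obtain ⟨n, hn, rfl⟩ := hzs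
  have hzU' : min 1 (infDist (ρ k) (Fset ρ g f n)) < ε := hzU
  have hlt : infDist (ρ k) (Fset ρ g f n) < ε := by
    rcases min_lt_iff.mp hzU' with h | h
    · exfalso
      have : ε ≤ 1 / 2 := min_le_right _ _
      linarith
    · exact h
  obtain ⟨p, hp, hpd⟩ := (infDist_lt_iff (Fset_nonempty ρ g f n)).mp hlt
  refine ⟨p, ?_, ?_⟩
  · rcases hp with ⟨w, hw, rfl⟩ | hp0
    · left
      refine ⟨w, ⟨?_, hw.2⟩, rfl⟩
      have hgw : g w = n := hw.1
      show g w ∈ a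
      rw [hgw]; exact hn
    · exact Or.inr hp0
  · have h1 : dist x p ≤ dist x (ρ k) + dist (ρ k) p := dist_triangle _ _ _
    have h2 : dist x (ρ k) < ε := by rw [dist_comm]; exact hk1
    have h3 : ε ≤ δ / 2 := min_le_left _ _
    linarith

end Lemmas

section Ideals

variable {X : Type} [MetricSpace X]

lemma countable_mem (ρ : ℕ → X) (I : Set (Set X)) (hI : IsSigmaIdeal I) {A : Set X}
    (hA : A.Countable) : A ∈ I := by
  rcases Set.eq_empty_or_nonempty A with rfl | hne
  · exact hI.1 ∅ {ρ 0} (Set.empty_subset _) (hI.2.2 _)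
  · obtain ⟨u, hu⟩ := hA.exists_eq_range hne
    rw [hu, Set.range_eq_iUnion]
    exact hI.2.1 _ fun n => hI.2.2 _

lemma union_mem (I : Set (Set X)) (hI : IsSigmaIdeal I) {A B : Set X} (hA : A ∈ I)
    (hB : B ∈ I) : A ∪ B ∈ I := by
  have he : A ∪ B = ⋃ n : ℕ, (if n = 0 then A else B) := by
    ext x
    simp only [Set.mem_union, Set.mem_iUnion]
    constructor
    · rintro (h | h)
      · exact ⟨0, by simpa using h⟩
      · exact ⟨1, by simpa using h⟩
    · rintro ⟨n, h⟩
      by_cases hn : n = 0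
      · rw [hn] at h; simp only [if_pos rfl] at h; exact Or.inl h
      · rw [if_neg hn] at h; exact Or.inr h
  rw [he]
  exact hI.2.1 _ fun n => by by_cases hn : n = 0 <;> simp [hn, hA, hB]

lemma keyJ (g f : ℕ → ℕ) (J K : Set (Set ℕ)) (hJ : IsIdeal J)
    (h1 : ∀ b : Set ℕ, b ∈ J ↔ f ⁻¹' b ∈ K)
    (h2 : ∀ a : Set ℕ, a ∈ K ↔ g ⁻¹' a ∈ J) (a : Set ℕ) :
    a ∈ K ↔ g ⁻¹' a ∩ Set.range f ∈ J := by
  constructor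
  · intro ha
    exact hJ.1 _ _ Set.inter_subset_left ((h2 a).mp ha)
  · intro hS
    have h3 := (h1 _).mp hS
    have he : f ⁻¹' (g ⁻¹' a ∩ Set.range f) = f ⁻¹' (g ⁻¹' a) := by
      ext m
      simp [Set.mem_range_self]
    rw [he] at h3
    exact (h2 a).mpr ((h1 (g ⁻¹' a)).mpr h3)

lemma coh (ρ : ℕ → X) (g f : ℕ → ℕ) (I : Set (Set X)) (J K : Set (Set ℕ))
    (hJ : IsIdeal J) (hK : IsIdeal K) (h1 : ∀ b : Set ℕ, b ∈ J ↔ f ⁻¹' b ∈ K)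
    (h2 : ∀ a : Set ℕ, a ∈ K ↔ g ⁻¹' a ∈ J)
    (hrepJ : ∀ a : Set ℕ, a ∈ J ↔ closure (ρ '' a) ∈ I) {c : Set ℕ}
    (h : closure (ρ '' (f '' c)) ∈ I) :
    closure (ρ '' (g ⁻¹' c ∩ Set.range f)) ∈ I := by
  have hc1 : f '' c ∈ J := (hrepJ _).mpr h
  have hc2 : f ⁻¹' (f '' c) ∈ K := (h1 _).mp hc1
  have hc3 : c ∈ K := hK.1 _ _ (Set.subset_preimage_image f c) hc2
  have hc4 : g ⁻¹' c ∩ Set.range f ∈ J := hJ.1 _ _ Set.inter_subset_left ((h2 c).mp hc3)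
  exact (hrepJ _).mp hc4

/-- Singleton safety: limit points at level `0` carry `I`-small mass. -/
lemma GhatSmall (ρ : ℕ → X) (g f : ℕ → ℕ) (I : Set (Set X)) (J K : Set (Set ℕ))
    (hI : IsSigmaIdeal I) (hJ : IsIdeal J) (hK : IsIdeal K)
    (h1 : ∀ b : Set ℕ, b ∈ J ↔ f ⁻¹' b ∈ K) (h2 : ∀ a : Set ℕ, a ∈ K ↔ g ⁻¹' a ∈ J)
    (hrepJ : ∀ a : Set ℕ, a ∈ J ↔ closure (ρ '' a) ∈ I) {y : (ℕ → ℝ) × ℝ}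
    (hy : y ∈ closure (Set.range (sig ρ g f))) (h0 : y.2 = 0) :
    Ghat ρ y.1 ∈ I := by
  have hch : ∀ j : ℕ, ∃ n : ℕ,
      (∀ k ≤ j, |(sig ρ g f n).1 k - y.1 k| < lvl j) ∧ (sig ρ g f n).2 < lvl j := by
    intro j
    set U : Set ((ℕ → ℝ) × ℝ) :=
      (⋂ k ∈ Finset.range (j + 1), {z : (ℕ → ℝ) × ℝ | |z.1 k - y.1 k| < lvl j}) ∩
        {z : (ℕ → ℝ) × ℝ | z.2 < lvl j} with hUdef
    have hUopen : IsOpen U := by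
      refine IsOpen.inter (isOpen_biInter_finset fun k _ => ?_) ?_
      · have he : {z : (ℕ → ℝ) × ℝ | |z.1 k - y.1 k| < lvl j} =
            (fun z : (ℕ → ℝ) × ℝ => z.1 k) ⁻¹' Metric.ball (y.1 k) (lvl j) := by
          ext z; simp [Metric.mem_ball, Real.dist_eq]
        rw [he]
        exact ((continuous_apply k).comp continuous_fst).isOpen_preimage _ Metric.isOpen_ball
      · exact continuous_snd.isOpen_preimage _ isOpen_Iio
    have hyU : y ∈ U := by
      constructor
      · simp only [Set.mem_iInter]
        intro k _
        simpa using lvl_pos j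
      · show y.2 < lvl j
        rw [h0]; exact lvl_pos j
    obtain ⟨z, hzU, hzs⟩ := _root_.mem_closure_iff.mp hy U hUopen hyU
    obtain ⟨n, rfl⟩ := hzs
    refine ⟨n, ?_, hzU.2⟩
    intro k hk
    have h4 := hzU.1
    simp only [Set.mem_iInter] at h4
    exact h4 k (Finset.mem_range.mpr (Nat.lt_succ_of_le hk))
  choose η hη1 hη2 using hch
  have hηgt : ∀ j, j < η j := by
    intro j
    by_contra h
    push_neg at h
    exact absurd (hη2 j) (not_lt.mpr (lvl_anti.antitone h))
  have hSinf : (Set.range η).Infinite := by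
    apply Set.infinite_of_not_bddAbove
    rintro ⟨M, hM⟩
    exact absurd (hM (Set.mem_range_self M)) (not_le.mpr (hηgt M))
  obtain ⟨c, hcS, hcInf, hcCtble⟩ := exists_thin (fun m => ρ (f m)) hSinf
  have hc : closure (ρ '' (f '' c)) ∈ I := by
    have he : ρ '' (f '' c) = (fun m => ρ (f m)) '' c := Set.image_image ρ f c
    rw [he]
    exact countable_mem ρ I hI hcCtble
  have hEc := coh ρ g f I J K hJ hK h1 h2 hrepJ hc
  have hsub : Ghat ρ y.1 ⊆ closure (ρ '' (g ⁻¹' c ∩ Set.range f)) ∪ {ρ 0} := by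
    have h1s : Ghat ρ y.1 ⊆ closure (ρ '' (g ⁻¹' c ∩ Set.range f) ∪ {ρ 0}) := by
      intro x hx
      rw [Metric.mem_closure_iff]
      intro δ hδ
      have hεpos : 0 < min (δ / 3) (1 / 4) := by positivity
      obtain ⟨k, hk1, hk2⟩ := hx _ hεpos
      set ε := min (δ / 3) (1 / 4) with hεdef
      have hJc : {j | η j ∈ c}.Infinite := by
        intro hfin
        have hsub3 : c ⊆ η '' {j | η j ∈ c} := by
          intro m hm
          obtain ⟨j, hj⟩ := hcS hm
          exact ⟨j, by rw [Set.mem_setOf_eq, hj]; exact hm, hj⟩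
        exact hcInf (Set.Finite.subset (hfin.image η) hsub3)
      obtain ⟨N, hN⟩ := exists_nat_gt (1 / ε)
      obtain ⟨j, hjmem, hjge⟩ := hJc.exists_gt (max k N)
      have hjk : k ≤ j := le_of_lt (lt_of_le_of_lt (le_max_left _ _) hjge)
      have hlvlj : lvl j < ε := by
        have hjN : (N : ℝ) < (j : ℝ) := by
          exact_mod_cast lt_of_le_of_lt (le_max_right k N) hjge
        rw [lvl, inv_lt_iff_one_lt_mul₀ (by positivity)]
        have h4 : 1 / ε < (j : ℝ) + 1 := by linarith
        rw [div_lt_iff₀ hεpos] at h4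
        nlinarith
      have hco := hη1 j k hjk
      have hco2 : (sig ρ g f (η j)).1 k < 2 * ε := by
        have h4 : (sig ρ g f (η j)).1 k - y.1 k ≤ |(sig ρ g f (η j)).1 k - y.1 k| :=
          le_abs_self _
        linarith
      have hinf : infDist (ρ k) (Fset ρ g f (η j)) < 2 * ε := by
        rcases min_lt_iff.mp hco2 with h | h
        · exfalso
          have h5 : ε ≤ 1 / 4 := min_le_right _ _
          linarith
        · exact h
      obtain ⟨p, hp, hpd⟩ := (infDist_lt_iff (Fset_nonempty ρ g f (η j))).mp hinf
      refine ⟨p, ?_, ?_⟩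
      · rcases hp with ⟨w, hw, rfl⟩ | hp0
        · left
          refine ⟨w, ⟨?_, hw.2⟩, rfl⟩
          have hgw : g w = η j := hw.1
          show g w ∈ c
          rw [hgw]; exact hjmem
        · exact Or.inr hp0
      · have ht1 : dist x p ≤ dist x (ρ k) + dist (ρ k) p := dist_triangle _ _ _
        have ht2 : dist x (ρ k) < ε := by rw [dist_comm]; exact hk1
        have ht3 : ε ≤ δ / 3 := min_le_left _ _
        linarith
    intro x hx
    have h5 := h1s hx
    rwa [closure_union, closure_singleton] at h5
  exact hI.1 _ _ hsub (union_mem I hI hEc (hI.2.2 (ρ 0)))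

lemma Fset_sub (ρ : ℕ → X) (g f : ℕ → ℕ) {n : ℕ} {a : Set ℕ} (hn : n ∈ a) :
    Fset ρ g f n ⊆ ρ '' (g ⁻¹' a ∩ Set.range f) ∪ {ρ 0} := by
  rintro p (⟨w, hw, rfl⟩ | hp0)
  · left
    refine ⟨w, ⟨?_, hw.2⟩, rfl⟩
    have hgw : g w = n := hw.1
    show g w ∈ a
    rw [hgw]; exact hn
  · exact Or.inr hp0

lemma PhiSmall (ρ : ℕ → X) (g f : ℕ → ℕ) (I : Set (Set X)) (J K : Set (Set ℕ))
    (hI : IsSigmaIdeal I) (hJ : IsIdeal J) (hK : IsIdeal K)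
    (hgf : ∀ n : ℕ, (g ⁻¹' {n}).Finite)
    (h1 : ∀ b : Set ℕ, b ∈ J ↔ f ⁻¹' b ∈ K) (h2 : ∀ a : Set ℕ, a ∈ K ↔ g ⁻¹' a ∈ J)
    (hrepJ : ∀ a : Set ℕ, a ∈ J ↔ closure (ρ '' a) ∈ I) {y : (ℕ → ℝ) × ℝ}
    (hy : y ∈ closure (Set.range (sig ρ g f))) :
    Phi ρ g f y ∈ I := by
  have hy' : y ∈ closure (sig ρ g f '' Set.univ) := by rwa [Set.image_univ]
  rcases closure_sig_cases ρ g f hy' with ⟨n, -, rfl⟩ | h0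
  · refine hI.1 _ _ ?_ (countable_mem ρ I hI (Fset_finite ρ g f hgf n).countable)
    rintro x (hx1 | hx2)
    · simp only [Set.mem_iUnion] at hx1
      obtain ⟨m, hm, hxm⟩ := hx1
      have hmn : m = n := sig_injective ρ g f hm
      rwa [hmn] at hxm
    · exfalso
      rw [if_neg (show (sig ρ g f n).2 ≠ 0 from lvl_ne_zero n)] at hx2
      exact hx2
  · refine hI.1 _ _ ?_ (GhatSmall ρ g f I J K hI hJ hK h1 h2 hrepJ hy h0)
    rintro x (hx1 | hx2)
    · exfalso
      simp only [Set.mem_iUnion] at hx1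
      obtain ⟨m, hm, -⟩ := hx1
      have h4 : (sig ρ g f m).2 = 0 := by rw [hm, h0]
      exact lvl_ne_zero m h4
    · rwa [if_pos h0] at hx2

lemma L3 (ρ : ℕ → X) (g f : ℕ → ℕ) (I : Set (Set X)) (J K : Set (Set ℕ))
    (hI : IsSigmaIdeal I) (hJ : IsIdeal J)
    (h2 : ∀ a : Set ℕ, a ∈ K ↔ g ⁻¹' a ∈ J)
    (hrepJ : ∀ a : Set ℕ, a ∈ J ↔ closure (ρ '' a) ∈ I) {a : Set ℕ} (ha : a ∈ K) :
    VPhi ρ g f a ∈ I := by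
  have hE : closure (ρ '' (g ⁻¹' a ∩ Set.range f)) ∈ I :=
    (hrepJ _).mp (hJ.1 _ _ Set.inter_subset_left ((h2 a).mp ha))
  refine hI.1 _ _ ?_ (union_mem I hI hE (hI.2.2 (ρ 0)))
  intro x hx
  simp only [VPhi, Set.mem_iUnion] at hx
  obtain ⟨y, hy, hxy⟩ := hx
  rcases hxy with hx1 | hx2
  · simp only [Set.mem_iUnion] at hx1
    obtain ⟨n, hn, hxF⟩ := hx1
    rcases closure_sig_cases ρ g f hy with ⟨m, hm, hym⟩ | h0
    · have hmn : m = n := sig_injective ρ g f (hym.symm.trans hn.symm)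
      have hna : n ∈ a := hmn ▸ hm
      rcases Fset_sub ρ g f hna hxF with h | h
      · exact Or.inl (subset_closure h)
      · exact Or.inr h
    · exfalso
      have h4 : (sig ρ g f n).2 = 0 := by rw [hn, h0]
      exact lvl_ne_zero n h4
  · by_cases h0 : y.2 = 0
    · rw [if_pos h0] at hx2
      have h4 := Ghat_subset_closure ρ g f hy hx2
      rwa [closure_union, closure_singleton] at h4
    · rw [if_neg h0] at hx2
      exact absurd hx2 (Set.notMem_empty x)

lemma L4 (ρ : ℕ → X) (g f : ℕ → ℕ) (I : Set (Set X)) (J K : Set (Set ℕ))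
    (hI : IsSigmaIdeal I) (hJ : IsIdeal J) (hK : IsIdeal K)
    (hgf : ∀ n : ℕ, (g ⁻¹' {n}).Finite)
    (h1 : ∀ b : Set ℕ, b ∈ J ↔ f ⁻¹' b ∈ K) (h2 : ∀ a : Set ℕ, a ∈ K ↔ g ⁻¹' a ∈ J)
    (hrepJ : ∀ a : Set ℕ, a ∈ J ↔ closure (ρ '' a) ∈ I) {a : Set ℕ}
    (hV : VPhi ρ g f a ∈ I) : a ∈ K := by
  classical
  set S : Set ℕ := g ⁻¹' a ∩ Set.range f with hSdef
  suffices hsub : closure (ρ '' S) ⊆ VPhi ρ g f a by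
    exact (keyJ g f J K hJ h1 h2 a).mpr ((hrepJ _).mpr (hI.1 _ _ hsub hV))
  have hbase : ρ '' S ⊆ VPhi ρ g f a := by
    rintro _ ⟨j, hj, rfl⟩
    have hga : g j ∈ a := hj.1
    refine Set.mem_biUnion (subset_closure ⟨g j, hga, rfl⟩) ?_
    left
    refine Set.mem_biUnion (show g j ∈ {m | sig ρ g f m = sig ρ g f (g j)} from rfl) ?_
    exact Or.inl ⟨j, ⟨rfl, hj.2⟩, rfl⟩
  intro x' hx'
  by_cases hfin : ∃ G : Finset ℕ, x' ∈ closure (ρ '' (S ∩ g ⁻¹' (G : Set ℕ)))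
  · obtain ⟨G, hG⟩ := hfin
    have hGfin : (S ∩ g ⁻¹' (G : Set ℕ)).Finite := by
      refine Set.Finite.subset ?_ Set.inter_subset_right
      have he : g ⁻¹' (G : Set ℕ) = ⋃ m ∈ G, g ⁻¹' {m} := by ext; simp
      rw [he]
      exact G.finite_toSet.biUnion fun m _ => hgf m
    rw [IsClosed.closure_eq (hGfin.image ρ).isClosed] at hG
    exact hbase (Set.image_mono (f := ρ) Set.inter_subset_left hG)
  · push_neg at hfin
    have hstep : ∀ (G : Finset ℕ) (t : ℕ),
        ∃ j, j ∈ S ∧ g j ∉ G ∧ dist x' (ρ j) < lvl t := by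
      intro G t
      have hsplit : x' ∈ closure (ρ '' (S \ g ⁻¹' (G : Set ℕ))) := by
        have he : ρ '' S = ρ '' (S ∩ g ⁻¹' (G : Set ℕ)) ∪ ρ '' (S \ g ⁻¹' (G : Set ℕ)) := by
          rw [← Set.image_union, Set.inter_union_diff]
        rw [he, closure_union] at hx'
        rcases hx' with h | h
        · exact absurd h (hfin G)
        · exact h
      obtain ⟨b, hb, hbd⟩ := Metric.mem_closure_iff.mp hsplit (lvl t) (lvl_pos t)
      obtain ⟨j, hj, rfl⟩ := hb
      exact ⟨j, hj.1, by simpa using hj.2, hbd⟩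
    let pick : Finset ℕ → ℕ → ℕ := fun G t => (hstep G t).choose
    let Gs : ℕ → Finset ℕ := fun t => Nat.rec ∅ (fun t' G => insert (g (pick G t')) G) t
    let jj : ℕ → ℕ := fun t => pick (Gs t) t
    have hGs_succ : ∀ t, Gs (t + 1) = insert (g (jj t)) (Gs t) := fun t => rfl
    have hjmem : ∀ t, jj t ∈ S := fun t => (hstep (Gs t) t).choose_spec.1
    have hjnot : ∀ t, g (jj t) ∉ Gs t := fun t => (hstep (Gs t) t).choose_spec.2.1
    have hjd : ∀ t, dist x' (ρ (jj t)) < lvl t := fun t => (hstep (Gs t) t).choose_spec.2.2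
    have hGs_mono : ∀ s t : ℕ, s ≤ t → Gs s ⊆ Gs t := by
      intro s t h
      induction t with
      | zero => rw [Nat.le_zero.mp h]
      | succ t ih =>
        by_cases h' : s ≤ t
        · refine subset_trans (ih h') ?_
          rw [hGs_succ]
          exact Finset.subset_insert _ _
        · have he : s = t + 1 := by omega
          rw [he]
    have hninj : Function.Injective fun t => g (jj t) := by
      have key : ∀ s t : ℕ, s < t → g (jj s) ≠ g (jj t) := by
        intro s t hst heq
        have hmem1 : g (jj s) ∈ Gs (s + 1) := by
          rw [hGs_succ]; exact Finset.mem_insert_self _ _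
        have hmem2 : g (jj s) ∈ Gs t := hGs_mono _ _ (Nat.succ_le_of_lt hst) hmem1
        rw [heq] at hmem2
        exact hjnot t hmem2
      intro s t heq
      rcases lt_trichotomy s t with h | h | h
      · exact absurd heq (key s t h)
      · exact h
      · exact absurd heq.symm (key t s h)
    obtain ⟨y₀, -, ψ, hψ, hlim⟩ :=
      Cbox_compact.tendsto_subseq (x := fun t => sig ρ g f (g (jj t)))
        (fun t => sig_mem_Cbox ρ g f _)
    have hycl : y₀ ∈ closure (sig ρ g f '' a) := by
      refine mem_closure_of_tendsto hlim ?_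
      filter_upwards with t
      exact ⟨g (jj (ψ t)), (hjmem (ψ t)).1, rfl⟩
    have hy2 : y₀.2 = 0 := by
      have l1 : Tendsto (fun t => (sig ρ g f (g (jj (ψ t)))).2) atTop (nhds y₀.2) :=
        (continuous_snd.tendsto y₀).comp hlim
      have l2 : Tendsto (fun t => (sig ρ g f (g (jj (ψ t)))).2) atTop (nhds 0) := by
        have hinj : Function.Injective fun t => g (jj (ψ t)) := by
          intro s t h
          exact hψ.injective (hninj h)
        have htop : Tendsto (fun t => g (jj (ψ t))) atTop atTop := by
          rw [← Nat.cofinite_eq_atTop]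
          exact hinj.tendsto_cofinite
        exact lvl_tendsto.comp htop
      exact tendsto_nhds_unique l1 l2
    have hz : Tendsto (fun t => ρ (jj (ψ t))) atTop (nhds x') := by
      rw [tendsto_iff_dist_tendsto_zero]
      refine squeeze_zero (fun t => dist_nonneg) (fun t => ?_) lvl_tendsto
      have h5 := hjd (ψ t)
      have h6 : lvl (ψ t) ≤ lvl t := lvl_anti.antitone hψ.le_apply
      rw [dist_comm] at h5
      linarith
    have hxG : x' ∈ Ghat ρ y₀.1 := by
      intro ε hε
      obtain ⟨b, hb, hbd⟩ := Metric.mem_closure_iff.mp hx' ε hε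
      obtain ⟨k, hk, rfl⟩ := hb
      refine ⟨k, by rwa [dist_comm], ?_⟩
      have hcoord : Tendsto (fun t => (sig ρ g f (g (jj (ψ t)))).1 k) atTop
          (nhds (y₀.1 k)) :=
        (((continuous_apply k).comp continuous_fst).tendsto y₀).comp hlim
      have hwlim : Tendsto (fun t => dist (ρ k) (ρ (jj (ψ t)))) atTop
          (nhds (dist (ρ k) x')) := Filter.Tendsto.dist tendsto_const_nhds hz
      have hle : y₀.1 k ≤ dist (ρ k) x' := by
        refine le_of_tendsto_of_tendsto' hcoord hwlim ?_
        intro t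
        refine le_trans (min_le_right _ _) (infDist_le_dist_of_mem ?_)
        exact Or.inl ⟨jj (ψ t), ⟨rfl, (hjmem _).2⟩, rfl⟩
      calc y₀.1 k ≤ dist (ρ k) x' := hle
        _ < ε := by rwa [dist_comm]
    refine Set.mem_biUnion hycl ?_
    right
    rw [if_pos hy2]
    exact hxG

end Ideals

/-- The master construction: a topological representation for `K`. -/
lemma master {X : Type} [MetricSpace X] (ρ : ℕ → X) (g f : ℕ → ℕ)
    (I : Set (Set X)) (J K : Set (Set ℕ))
    (hI : IsSigmaIdeal I) (hJ : IsIdeal J) (hK : IsIdeal K)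
    (hgf : ∀ n : ℕ, (g ⁻¹' {n}).Finite)
    (h1 : ∀ b : Set ℕ, b ∈ J ↔ f ⁻¹' b ∈ K) (h2 : ∀ a : Set ℕ, a ∈ K ↔ g ⁻¹' a ∈ J)
    (hrepJ : ∀ a : Set ℕ, a ∈ J ↔ closure (ρ '' a) ∈ I) :
    HasTopRep K := by
  classical
  haveI hambient : MetrizableSpace ((ℕ → ℝ) × ℝ) := UniformSpace.metrizableSpace
  refine ⟨↥(closure (Set.range (sig ρ g f))), inferInstance, inferInstance, inferInstance,
    {A | (⋃ y ∈ A, Phi ρ g f (y : (ℕ → ℝ) × ℝ)) ∈ I}, ⟨?_, ?_, ?_⟩,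
    fun n => ⟨sig ρ g f n, subset_closure (Set.mem_range_self n)⟩, ?_,
    Set.countable_range _, ?_, ?_⟩
  · intro A B hAB hB
    exact hI.1 _ _ (Set.biUnion_subset_biUnion_left hAB) hB
  · intro A hA
    have he : (⋃ y ∈ ⋃ n, A n, Phi ρ g f (y : (ℕ → ℝ) × ℝ)) =
        ⋃ n, ⋃ y ∈ A n, Phi ρ g f (y : (ℕ → ℝ) × ℝ) := by
      ext x
      simp only [Set.mem_iUnion]
      tauto
    show (⋃ y ∈ ⋃ n, A n, Phi ρ g f (y : (ℕ → ℝ) × ℝ)) ∈ I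
    rw [he]
    exact hI.2.1 _ hA
  · intro y
    show (⋃ z ∈ ({y} : Set _), Phi ρ g f ((z : ↥(closure (Set.range (sig ρ g f)))) :
      (ℕ → ℝ) × ℝ)) ∈ I
    rw [Set.biUnion_singleton]
    exact PhiSmall ρ g f I J K hI hJ hK hgf h1 h2 hrepJ y.2
  · intro m n h
    exact sig_injective ρ g f (congrArg Subtype.val h)
  · -- density
    rw [dense_iff_closure_eq]
    have hemb : Topology.IsEmbedding
        (Subtype.val : ↥(closure (Set.range (sig ρ g f))) → (ℕ → ℝ) × ℝ) :=
      Topology.IsEmbedding.subtypeVal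
    ext y
    simp only [Set.mem_univ, iff_true]
    rw [hemb.closure_eq_preimage_closure_image]
    show (y : (ℕ → ℝ) × ℝ) ∈ closure (Subtype.val '' _)
    have he : (Subtype.val ''
        (Set.range fun n => (⟨sig ρ g f n, subset_closure (Set.mem_range_self n)⟩ :
          ↥(closure (Set.range (sig ρ g f)))))) = Set.range (sig ρ g f) := by
      ext z
      constructor
      · rintro ⟨w, ⟨n, rfl⟩, rfl⟩
        exact ⟨n, rfl⟩
      · rintro ⟨n, rfl⟩
        exact ⟨⟨sig ρ g f n, subset_closure (Set.mem_range_self n)⟩, ⟨n, rfl⟩, rfl⟩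
    rw [he]
    exact y.2
  · intro a
    have hemb : Topology.IsEmbedding
        (Subtype.val : ↥(closure (Set.range (sig ρ g f))) → (ℕ → ℝ) × ℝ) :=
      Topology.IsEmbedding.subtypeVal
    have hcleq : closure ((fun n => (⟨sig ρ g f n, subset_closure (Set.mem_range_self n)⟩ :
        ↥(closure (Set.range (sig ρ g f))))) '' a)
        = Subtype.val ⁻¹' closure (sig ρ g f '' a) := by
      rw [hemb.closure_eq_preimage_closure_image, Set.image_image]
    have hUeq : (⋃ y ∈ closure ((fun n =>
        (⟨sig ρ g f n, subset_closure (Set.mem_range_self n)⟩ :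
          ↥(closure (Set.range (sig ρ g f))))) '' a),
        Phi ρ g f (y : (ℕ → ℝ) × ℝ)) = VPhi ρ g f a := by
      rw [hcleq]
      ext x
      simp only [VPhi, Set.mem_iUnion]
      constructor
      · rintro ⟨y, hy, hx⟩
        exact ⟨(y : (ℕ → ℝ) × ℝ), hy, hx⟩
      · rintro ⟨z, hz, hx⟩
        refine ⟨⟨z, closure_mono (Set.image_subset_range _ _) hz⟩, hz, hx⟩
    constructor
    · intro ha
      show _ ∈ I
      rw [hUeq]
      exact L3 ρ g f I J K hI hJ h2 hrepJ ha
    · intro h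
      have hV : VPhi ρ g f a ∈ I := by rw [← hUeq]; exact h
      exact L4 ρ g f I J K hI hJ hK hgf h1 h2 hrepJ hV

end HTRAux

/-- The class of ideals with topological representations is invariant under
Rudin–Blass equivalence. -/
theorem hasTopRep_of_RBequiv
    (J K : Set (Set ℕ)) (hJ : IsIdeal J) (hK : IsIdeal K)
    (h1 : RBle J K) (h2 : RBle K J) (hrep : HasTopRep J) :
    HasTopRep K := by
  obtain ⟨f, hf, h1⟩ := h1
  obtain ⟨g, hg, h2⟩ := h2
  obtain ⟨X, tX, hmetr, hsep, I, hI, ρ, hinj, hctble, hdense, hrepJ⟩ := hrep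
  letI : MetricSpace X := metrizableSpaceMetric X
  exact HTRAux.master ρ g f I J K hI hJ hK hg h1 h2 hrepJ
end

section
/- Let I be a σ-ideal containing all singletons on a separable metric space X, and let D and E be two countable dense subsets of X. Then the ideals J = {a ⊆ D : cl(a) ∈ I} and K = {a ⊆ E : cl(a) ∈ I} are isomorphic: there is a bijection f : D → E such that for every a ⊆ D, a ∈ J if and only if f(a) ∈ K. -/
open Set TopologicalSpace

/-! ### Auxiliary material for the proof -/

section Aux

variable {X : Type} [MetricSpace X]

private lemma small_pow_finite {ε : ℝ} (hε : 0 < ε) : {m : ℕ | ε ≤ (2:ℝ)⁻¹ ^ m}.Finite := by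
  have h : Filter.Tendsto (fun m : ℕ => (2:ℝ)⁻¹ ^ m) Filter.atTop (nhds 0) :=
    tendsto_pow_atTop_nhds_zero_of_lt_one (by norm_num) (by norm_num)
  have h2 : ∀ᶠ m in Filter.atTop, (2:ℝ)⁻¹ ^ m < ε := h.eventually (gt_mem_nhds hε)
  rw [← Nat.cofinite_eq_atTop, Filter.eventually_cofinite] at h2
  convert h2 using 1
  ext m; simp [not_lt]

private lemma isolated_mem_dense {D : Set X} (hD : Dense D) {x : X}
    (hx : IsOpen ({x} : Set X)) : x ∈ D := by
  obtain ⟨y, hyD, hy⟩ := hD.exists_mem_open hx ⟨x, rfl⟩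
  rw [mem_singleton_iff] at hy; rwa [hy] at hyD

private lemma pool {D : Set X} (hD : Dense D) {x : X} (hx : ¬ IsOpen ({x} : Set X))
    {r : ℝ} (hr : 0 < r) : (D ∩ Metric.ball x r).Infinite := by
  by_contra h
  rw [Set.not_infinite] at h
  have hFfin : ((D ∩ Metric.ball x r) \ {x}).Finite := h.diff
  have hU : IsOpen (Metric.ball x r \ ((D ∩ Metric.ball x r) \ {x})) :=
    Metric.isOpen_ball.sdiff hFfin.isClosed
  have hU2 : IsOpen ((Metric.ball x r \ ((D ∩ Metric.ball x r) \ {x})) \ {x}) :=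
    hU.sdiff isClosed_singleton
  rcases Set.eq_empty_or_nonempty
      ((Metric.ball x r \ ((D ∩ Metric.ball x r) \ {x})) \ {x}) with he | hne
  · apply hx
    have hxmem : x ∈ Metric.ball x r \ ((D ∩ Metric.ball x r) \ {x}) :=
      ⟨Metric.mem_ball_self hr, fun hc => hc.2 rfl⟩
    have : Metric.ball x r \ ((D ∩ Metric.ball x r) \ {x}) = {x} := by
      apply subset_antisymm
      · intro z hz
        by_contra hzx
        exact (Set.eq_empty_iff_forall_notMem.mp he z) ⟨hz, hzx⟩
      · intro z hz; rw [mem_singleton_iff] at hz; rwa [hz]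
    rwa [this] at hU
  · obtain ⟨z, hzD, hz⟩ := hD.exists_mem_open hU2 hne
    exact hz.1.2 ⟨⟨hzD, hz.1.1⟩, hz.2⟩

/-- The record of one step of the greedy construction:
`x` is matched to `v`, chosen in the ball of radius `r` around the anchor `a`. -/
structure MyEnt (X : Type) where
  x : X
  v : X
  a : X
  r : ℝ

variable {D : Set X} {e : ℕ → X}

/-- Invariant of the greedy construction. -/
def MyInv (D : Set X) (e : ℕ → X) (L : List (MyEnt X)) : Prop :=
  ∀ m : ℕ, ∀ hm : m < L.length,
    (L[m].x = e m) ∧ (L[m].v ∈ D) ∧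
    (∀ k : ℕ, ∀ hk : k < L.length, k ≠ m → L[k].v ≠ L[m].v) ∧
    (0 < L[m].r ∧ L[m].r ≤ (2:ℝ)⁻¹ ^ m) ∧
    (L[m].v = L[m].x ∨
      (¬ IsOpen ({L[m].a} : Set X) ∧ dist L[m].v L[m].a < L[m].r ∧
        (L[m].a = L[m].x ∨ ∃ m' : ℕ, ∃ hm' : m' < m,
          (L[m']'(hm'.trans hm)).v = L[m].x ∧ (L[m']'(hm'.trans hm)).a = L[m].a ∧
            L[m].r ≤ (L[m']'(hm'.trans hm)).r)))

private lemma myStep (hDd : Dense D) (heInj : Function.Injective e)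
    (L : List (MyEnt X)) (hL : MyInv D e L) :
    ∃ p : MyEnt X, MyInv D e (L ++ [p]) := by
  classical
  set n := L.length with hn
  set x := e n with hxdef
  set Used : Set X := MyEnt.v '' {q | q ∈ L} with hUdef
  have hUsedFin : Used.Finite := (L.finite_toSet).image _
  have hUsed_iff : ∀ w, w ∈ Used ↔ ∃ m : ℕ, ∃ hm : m < L.length, L[m].v = w := by
    intro w
    constructor
    · rintro ⟨q, hq, rfl⟩
      obtain ⟨m, hm, rfl⟩ := List.mem_iff_getElem.mp hq
      exact ⟨m, hm, rfl⟩
    · rintro ⟨m, hm, rfl⟩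
      exact ⟨L[m], L.getElem_mem hm, rfl⟩
  -- the new entry, by cases
  have key : ∃ p : MyEnt X, p.x = x ∧ p.v ∈ D ∧ p.v ∉ Used ∧
      (0 < p.r ∧ p.r ≤ (2:ℝ)⁻¹ ^ n) ∧
      (p.v = p.x ∨
        (¬ IsOpen ({p.a} : Set X) ∧ dist p.v p.a < p.r ∧
          (p.a = p.x ∨ ∃ m' : ℕ, ∃ hm' : m' < n,
            L[m'].v = p.x ∧ L[m'].a = p.a ∧ p.r ≤ L[m'].r))) := by
    by_cases hst : ∃ m' : ℕ, ∃ hm' : m' < L.length, L[m'].v = x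
    · -- x was stolen earlier: use the anchor of the stealing entry
      obtain ⟨m', hm', hv'⟩ := hst
      obtain ⟨hx', hvD', hinj', ⟨hr0', hrle'⟩, h5'⟩ := hL m' hm'
      have hne : L[m'].v ≠ L[m'].x := by
        rw [hv', hx']
        intro hc
        exact absurd (heInj hc) (Nat.ne_of_lt' hm')
      rcases h5' with h5' | ⟨hiso, hdva, _⟩
      · exact absurd h5' hne
      · have hρ : 0 < min (L[m']'hm').r ((2:ℝ)⁻¹ ^ n) := by
          apply lt_min hr0'; positivity
        obtain ⟨v, hv⟩ := ((pool hDd hiso hρ).diff hUsedFin).nonempty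
        refine ⟨⟨x, v, (L[m']'hm').a, min (L[m']'hm').r ((2:ℝ)⁻¹ ^ n)⟩, rfl,
          hv.1.1, hv.2, ⟨hρ, min_le_right _ _⟩,
          Or.inr ⟨hiso, ?_, Or.inr ⟨m', hm', hv', rfl, min_le_left _ _⟩⟩⟩
        exact Metric.mem_ball.mp hv.1.2
    · by_cases hxD : x ∈ D
      · refine ⟨⟨x, x, x, (2:ℝ)⁻¹ ^ n⟩, rfl, hxD, ?_, ⟨by positivity, le_refl _⟩, Or.inl rfl⟩
        intro hc
        exact hst ((hUsed_iff x).mp hc)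
      · have hiso : ¬ IsOpen ({x} : Set X) := fun h => hxD (isolated_mem_dense hDd h)
        have hρ : (0:ℝ) < (2:ℝ)⁻¹ ^ n := by positivity
        obtain ⟨v, hv⟩ := ((pool hDd hiso hρ).diff hUsedFin).nonempty
        exact ⟨⟨x, v, x, (2:ℝ)⁻¹ ^ n⟩, rfl, hv.1.1, hv.2, ⟨hρ, le_refl _⟩,
          Or.inr ⟨hiso, Metric.mem_ball.mp hv.1.2, Or.inl rfl⟩⟩
  obtain ⟨p, hpx, hpvD, hpvU, hpr, hp5⟩ := key
  refine ⟨p, ?_⟩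
  intro m hm
  have hlen : (L ++ [p]).length = n + 1 := by simp [hn]
  rw [hlen] at hm
  rcases Nat.lt_succ_iff_lt_or_eq.mp hm with hmn | rfl
  · -- old entries
    have hgm : (L ++ [p])[m]'(by simp [hn]; omega) = L[m]'hmn := List.getElem_append_left hmn
    obtain ⟨h1, h2, h3, h4, h5⟩ := hL m hmn
    rw [hgm]
    refine ⟨h1, h2, ?_, h4, ?_⟩
    · intro k hk hkm
      rw [List.length_append, List.length_singleton] at hk
      rcases Nat.lt_succ_iff_lt_or_eq.mp hk with hkn | rfl
      · rw [List.getElem_append_left hkn]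
        exact h3 k hkn hkm
      · rw [List.getElem_concat_length (l := L) (a := p) hn]
        intro hc
        exact hpvU ((hUsed_iff p.v).mpr ⟨m, hmn, hc.symm⟩)
    · rcases h5 with h5 | ⟨ha, hb, hc⟩
      · exact Or.inl h5
      · refine Or.inr ⟨ha, hb, ?_⟩
        rcases hc with hc | ⟨m', hm', hc1, hc2, hc3⟩
        · exact Or.inl hc
        · exact Or.inr ⟨m', hm', by
            rw [List.getElem_append_left (hm'.trans hmn)]; exact ⟨hc1, hc2, hc3⟩⟩
  · -- the new entry
    have hg : (L ++ [p])[n]'(by simp [hn]) = p := List.getElem_concat_length (l := L) (a := p) hn (by simp [hn])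
    rw [hg]
    refine ⟨hpx, hpvD, ?_, hpr, ?_⟩
    · intro k hk hkm
      rw [List.length_append, List.length_singleton] at hk
      rcases Nat.lt_succ_iff_lt_or_eq.mp hk with hkn | rfl
      · rw [List.getElem_append_left hkn]
        intro hc
        exact hpvU ((hUsed_iff p.v).mpr ⟨k, hkn, hc⟩)
      · exact absurd rfl hkm
    · rcases hp5 with hp5 | ⟨ha, hb, hc⟩
      · exact Or.inl hp5
      · refine Or.inr ⟨ha, hb, ?_⟩
        rcases hc with hc | ⟨m', hm', hc1, hc2, hc3⟩
        · exact Or.inl hc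
        · exact Or.inr ⟨m', hm', by
            rw [List.getElem_append_left hm']; exact ⟨hc1, hc2, hc3⟩⟩

noncomputable def chain (hDd : Dense D) (heInj : Function.Injective e) :
    ℕ → {L : List (MyEnt X) // MyInv D e L}
  | 0 => ⟨[], by intro m hm; simp at hm⟩
  | n+1 =>
    ⟨(chain hDd heInj n).1 ++ [(myStep hDd heInj _ (chain hDd heInj n).2).choose],
      (myStep hDd heInj _ (chain hDd heInj n).2).choose_spec⟩

private lemma chain_length (hDd : Dense D) (heInj : Function.Injective e) (n : ℕ) :
    (chain hDd heInj n).1.length = n := by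
  induction n with
  | zero => simp [chain]
  | succ n ih => simp [chain, ih]

private lemma chain_getElem (hDd : Dense D) (heInj : Function.Injective e) :
    ∀ n m : ℕ, ∀ hm : m < n, ∀ h1 h2,
      ((chain hDd heInj n).1[m]'h1) = ((chain hDd heInj (m+1)).1[m]'h2) := by
  intro n
  induction n with
  | zero => intro m hm; omega
  | succ n ih =>
    intro m hm h1 h2
    rcases Nat.lt_succ_iff_lt_or_eq.mp hm with hmn | rfl
    · have h1' : m < (chain hDd heInj n).1.length := by rw [chain_length]; exact hmn
      have : ((chain hDd heInj (n+1)).1[m]'h1) = ((chain hDd heInj n).1[m]'h1') := by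
        show ((chain hDd heInj n).1 ++ _)[m]'_ = _
        exact List.getElem_append_left h1'
      rw [this]; exact ih m hmn h1' h2
    · rfl

/-- the approximating injection -/
noncomputable def sfun (hDd : Dense D) (heInj : Function.Injective e) (m : ℕ) : X :=
  ((chain hDd heInj (m+1)).1[m]'(by rw [chain_length]; omega)).v

private lemma sfun_spec (hDd : Dense D) (heInj : Function.Injective e) :
    (∀ m, sfun hDd heInj m ∈ D) ∧ Function.Injective (sfun hDd heInj) ∧
      ∀ ε : ℝ, 0 < ε → {m : ℕ | ε ≤ dist (e m) (sfun hDd heInj m)}.Finite := by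
  have hlen : ∀ n, (chain hDd heInj n).1.length = n := chain_length hDd heInj
  have hget : ∀ n m (hm : m < n) h1, ((chain hDd heInj n).1[m]'h1).v = sfun hDd heInj m := by
    intro n m hm h1
    rw [chain_getElem hDd heInj n m hm h1 (by rw [hlen]; omega)]; rfl
  refine ⟨?_, ?_, ?_⟩
  · intro m
    exact ((chain hDd heInj (m+1)).2 m (by rw [hlen]; omega)).2.1
  · intro m k hmk
    by_contra hne
    have hm : m < max m k + 1 := by omega
    have hk : k < max m k + 1 := by omega
    set N := max m k + 1
    have hm' : m < (chain hDd heInj N).1.length := by rw [hlen]; omega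
    have hk' : k < (chain hDd heInj N).1.length := by rw [hlen]; omega
    have h3 := ((chain hDd heInj N).2 k hk').2.2.1 m hm' hne
    apply h3
    rw [hget N m hm hm', hget N k hk hk']
    exact hmk
  · intro ε hε
    -- displacement disjunction
    have disp : ∀ m : ℕ, dist (e m) (sfun hDd heInj m) ≤ 2 * (2:ℝ)⁻¹ ^ m ∨
        ∃ m' : ℕ, m' < m ∧ sfun hDd heInj m' = e m ∧
          dist (e m) (sfun hDd heInj m) ≤ 2 * (2:ℝ)⁻¹ ^ m' := by
      intro m
      set L := (chain hDd heInj (m+1)).1 with hLdef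
      have hL : MyInv D e L := (chain hDd heInj (m+1)).2
      have hm : m < L.length := by rw [hLdef, hlen]; omega
      obtain ⟨hx, hvD, _, ⟨hr0, hrle⟩, h5⟩ := hL m hm
      have hs : L[m].v = sfun hDd heInj m := hget (m+1) m (by omega) hm
      rcases h5 with h5 | ⟨hiso, hdva, hor⟩
      · left
        rw [← hs, h5, hx, dist_self]
        positivity
      · rcases hor with haeq | ⟨m', hm'm, hv', ha', hr'⟩
        · left
          rw [← hs, ← hx, dist_comm]
          calc dist L[m].v (L[m].x) = dist L[m].v (L[m].a) := by rw [haeq]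
          _ ≤ 2 * (2:ℝ)⁻¹ ^ m := by nlinarith
        · right
          refine ⟨m', hm'm, ?_, ?_⟩
          · rw [← hget (m+1) m' (by omega) (hm'm.trans hm), hv', hx]
          · -- entry m' is an anchor entry
            obtain ⟨hx2, _, _, ⟨hr02, hrle2⟩, h52⟩ := hL m' (hm'm.trans hm)
            have hvne : (L[m']'(hm'm.trans hm)).v ≠ (L[m']'(hm'm.trans hm)).x := by
              rw [hv', hx, hx2]
              intro hc
              exact absurd (heInj hc) (Nat.ne_of_gt hm'm)
            rcases h52 with h52 | ⟨_, hdva2, _⟩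
            · exact absurd h52 hvne
            · rw [← hs, ← hx]
              have h1 : dist L[m].x (L[m].a) < (L[m']'(hm'm.trans hm)).r := by
                rw [← hv', ← ha']; exact hdva2
              have h2 : dist L[m].v (L[m].a) < (L[m']'(hm'm.trans hm)).r :=
                lt_of_lt_of_le hdva hr'
              have h3 := dist_triangle (L[m].x) (L[m].a) (L[m].v)
              rw [dist_comm]
              have h4 := dist_comm (L[m].a) (L[m].v)
              have h5 := dist_comm (L[m].v) (L[m].x)
              linarith
    -- now conclude finiteness
    have hsub : {m : ℕ | ε ≤ dist (e m) (sfun hDd heInj m)} ⊆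
        {m : ℕ | ε / 2 ≤ (2:ℝ)⁻¹ ^ m} ∪
          (e ⁻¹' (sfun hDd heInj '' {m : ℕ | ε / 2 ≤ (2:ℝ)⁻¹ ^ m})) := by
      intro m hm
      rcases disp m with h | ⟨m', _, hsm', h⟩
      · left
        simp only [mem_setOf_eq] at hm ⊢
        linarith
      · right
        simp only [mem_preimage]
        refine ⟨m', ?_, hsm'⟩
        simp only [mem_setOf_eq] at hm ⊢
        linarith
    refine Set.Finite.subset (Set.Finite.union (small_pow_finite (by linarith)) ?_) hsub
    apply Set.Finite.preimage (fun a _ b _ hab => heInj hab)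
    exact ((small_pow_finite (by linarith)).image _)

private lemma sb_with {α β : Type*} (s : β → α) (t : α → β)
    (hs : Function.Injective s) (ht : Function.Injective t) :
    ∃ f : α → β, Function.Bijective f ∧ ∀ x, f x = t x ∨ s (f x) = x := by
  classical
  let F : Set α →o Set α :=
    ⟨fun A => (s '' (t '' A)ᶜ)ᶜ, by
      intro A B hAB
      exact compl_subset_compl.mpr
        (Set.image_mono (compl_subset_compl.mpr (Set.image_mono hAB)))⟩
  set A := OrderHom.lfp F with hA
  have hfix : (s '' (t '' A)ᶜ)ᶜ = A := OrderHom.map_lfp F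
  have hcompl : Aᶜ = s '' (t '' A)ᶜ := by
    conv_lhs => rw [← hfix]
    rw [compl_compl]
  have hsel : ∀ x, x ∉ A → ∃ b, b ∉ t '' A ∧ s b = x := by
    intro x hx
    have : x ∈ s '' (t '' A)ᶜ := by rw [← hcompl]; exact hx
    obtain ⟨b, hb1, hb2⟩ := this
    exact ⟨b, hb1, hb2⟩
  let f : α → β := fun x => if h : x ∈ A then t x else (hsel x h).choose
  have hf_spec : ∀ x (h : x ∉ A), (f x ∉ t '' A ∧ s (f x) = x) := by
    intro x h
    simp only [f, dif_neg h]
    exact ⟨(hsel x h).choose_spec.1, (hsel x h).choose_spec.2⟩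
  have hfA : ∀ x (h : x ∈ A), f x = t x := by
    intro x h; simp only [f, dif_pos h]
  refine ⟨f, ⟨?_, ?_⟩, ?_⟩
  · intro x y hxy
    by_cases hx : x ∈ A <;> by_cases hy : y ∈ A
    · rw [hfA x hx, hfA y hy] at hxy; exact ht hxy
    · exfalso
      rw [hfA x hx] at hxy
      exact (hf_spec y hy).1 ⟨x, hx, hxy⟩
    · exfalso
      rw [hfA y hy] at hxy
      exact (hf_spec x hx).1 ⟨y, hy, hxy.symm⟩
    · have h1 := (hf_spec x hx).2
      have h2 := (hf_spec y hy).2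
      rw [← h1, ← h2, hxy]
  · intro b
    by_cases hb : ∃ x ∈ A, t x = b
    · obtain ⟨x, hx, hxb⟩ := hb
      exact ⟨x, by rw [hfA x hx]; exact hxb⟩
    · have hbA : b ∉ t '' A := by
        intro ⟨x, hx, hxb⟩; exact hb ⟨x, hx, hxb⟩
      have hsb : s b ∉ A := by
        intro hc
        rw [← hfix] at hc
        exact hc ⟨b, hbA, rfl⟩
      refine ⟨s b, ?_⟩
      have := (hf_spec (s b) hsb).2
      exact hs this
  · intro x
    by_cases hx : x ∈ A
    · exact Or.inl (hfA x hx)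
    · exact Or.inr (hf_spec x hx).2

private lemma closure_key {A B : Set X}
    (h : ∀ ε : ℝ, 0 < ε → ∃ G : Set X, G.Finite ∧ ∀ b ∈ B, b ∉ G → ∃ a ∈ A, dist a b < ε) :
    closure B ⊆ closure A ∪ B := by
  intro y hy
  by_contra hc
  rw [Set.mem_union] at hc
  push_neg at hc
  obtain ⟨hyA, hyB⟩ := hc
  rw [Metric.mem_closure_iff] at hyA
  push_neg at hyA
  obtain ⟨δ, hδ, hδA⟩ := hyA
  obtain ⟨G, hGfin, hG⟩ := h (δ/2) (by linarith)
  have hBsplit : closure B ⊆ closure (B \ G) ∪ (B ∩ G) := by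
    have : B = (B \ G) ∪ (B ∩ G) := (Set.diff_union_inter B G).symm
    nth_rewrite 1 [this]
    rw [closure_union]
    apply Set.union_subset_union_right
    rw [IsClosed.closure_eq ((hGfin.inter_of_right B).isClosed)]
  rcases hBsplit hy with hy2 | hy2
  · rw [Metric.mem_closure_iff] at hy2
    obtain ⟨b, hb, hdb⟩ := hy2 (δ/2) (by linarith)
    obtain ⟨a, ha, hab⟩ := hG b hb.1 hb.2
    have := hδA a ha
    have h1 := dist_triangle y b a
    rw [dist_comm b a] at h1
    linarith
  · exact hyB hy2.1

private lemma sigma_empty {I : Set (Set X)} (hI : IsSigmaIdeal I) [Nonempty X] :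
    (∅ : Set X) ∈ I := by
  obtain ⟨x⟩ := ‹Nonempty X›
  exact hI.1 ∅ {x} (Set.empty_subset _) (hI.2.2 x)

private lemma sigma_countable {I : Set (Set X)} (hI : IsSigmaIdeal I) [Nonempty X]
    {S : Set X} (hS : S.Countable) : S ∈ I := by
  rcases S.eq_empty_or_nonempty with rfl | hne
  · exact sigma_empty hI
  · obtain ⟨g, hg⟩ := hS.exists_eq_range hne
    rw [hg, Set.range_eq_iUnion]
    exact hI.2.1 _ (fun n => hI.2.2 _)

private lemma sigma_union {I : Set (Set X)} (hI : IsSigmaIdeal I) {A B : Set X}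
    (hA : A ∈ I) (hB : B ∈ I) : A ∪ B ∈ I := by
  have : A ∪ B = ⋃ n : ℕ, (if n = 0 then A else B) := by
    ext x
    simp only [Set.mem_union, Set.mem_iUnion]
    constructor
    · rintro (h | h)
      · exact ⟨0, by simpa⟩
      · exact ⟨1, by simpa⟩
    · rintro ⟨n, hn⟩
      split at hn
      · exact Or.inl hn
      · exact Or.inr hn
  rw [this]
  apply hI.2.1
  intro n
  split
  · exact hA
  · exact hB

/-- one direction of the main equivalence -/
private lemma main_dir {I : Set (Set X)} (hI : IsSigmaIdeal I) [Nonempty X]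
    {D E : Set X} [Countable ↥E] (f : ↥D ≃ ↥E)
    (hbad : ∀ ε : ℝ, 0 < ε → {x : ↥D | ε ≤ dist (x : X) ((f x : X))}.Finite)
    (a : Set ↥D) (h : closure (Subtype.val '' a) ∈ I) :
    closure (Subtype.val '' (⇑f '' a)) ∈ I := by
  set A : Set X := Subtype.val '' a with hAdef
  set B : Set X := Subtype.val '' (⇑f '' a) with hBdef
  have hkey : closure B ⊆ closure A ∪ B := by
    apply closure_key
    intro ε hε
    refine ⟨Subtype.val '' (⇑f '' {x : ↥D | ε ≤ dist (x : X) ((f x : X))}), 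
      ((hbad ε hε).image _).image _, ?_⟩
    rintro b ⟨w, ⟨z, hz, rfl⟩, rfl⟩ hbG
    by_cases hzb : ε ≤ dist (z : X) ((f z : X))
    · exact absurd ⟨f z, ⟨z, hzb, rfl⟩, rfl⟩ hbG
    · exact ⟨(z : X), ⟨z, hz, rfl⟩, by push_neg at hzb; exact hzb⟩
  have hBc : B.Countable := ((Set.to_countable (⇑f '' a))).image _
  exact hI.1 _ _ hkey (sigma_union hI h (sigma_countable hI hBc))

end Aux

/-- Independence of the choice of the dense set: the ideals
`{a ⊆ D : cl(a) ∈ I}` and `{a ⊆ E : cl(a) ∈ I}` are isomorphic. -/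
theorem topRep_independent_of_denseSet
    {X : Type} [MetricSpace X] [SeparableSpace X]
    (I : Set (Set X)) (hI : IsSigmaIdeal I)
    (D E : Set X) (hDc : D.Countable) (hDd : Dense D)
    (hEc : E.Countable) (hEd : Dense E) :
    ∃ f : D ≃ E, ∀ a : Set D,
      closure (Subtype.val '' a) ∈ I ↔ closure (Subtype.val '' (⇑f '' a)) ∈ I := by
  classical
  rcases D.finite_or_infinite with hDf | hDi
  · -- degenerate case : `D` finite, hence `X` finite and `D = E = X`.
    have hDu : D = univ := by rw [← hDf.isClosed.closure_eq, hDd.closure_eq]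
    have hXfin : Finite X := Set.finite_univ_iff.mp (hDu ▸ hDf)
    have hEu : E = univ := by rw [← E.toFinite.isClosed.closure_eq, hEd.closure_eq]
    have hDE : D = E := hDu.trans hEu.symm
    subst hDE
    exact ⟨Equiv.refl _, fun a => by simp⟩
  rcases E.finite_or_infinite with hEf | hEi
  · have hEu : E = univ := by rw [← hEf.isClosed.closure_eq, hEd.closure_eq]
    have hXfin : Finite X := Set.finite_univ_iff.mp (hEu ▸ hEf)
    exact absurd D.toFinite hDi
  -- main case
  haveI : Countable ↥D := hDc.to_subtype
  haveI : Countable ↥E := hEc.to_subtype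
  haveI : Infinite ↥D := hDi.to_subtype
  haveI : Infinite ↥E := hEi.to_subtype
  haveI : Nonempty X := ⟨(Classical.choice (inferInstance : Nonempty ↥D)).1⟩
  haveI := (nonempty_denumerable ↥D).some
  haveI := (nonempty_denumerable ↥E).some
  set ψD : ↥D ≃ ℕ := Denumerable.eqv ↥D with hψD
  set ψE : ↥E ≃ ℕ := Denumerable.eqv ↥E with hψE
  set dEnum : ℕ → X := fun n => ((ψD.symm n : ↥D) : X) with hdEnum
  set eEnum : ℕ → X := fun n => ((ψE.symm n : ↥E) : X) with heEnum
  have hdInj : Function.Injective dEnum := fun m k h =>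
    ψD.symm.injective (Subtype.coe_injective h)
  have heInj : Function.Injective eEnum := fun m k h =>
    ψE.symm.injective (Subtype.coe_injective h)
  -- approximating injections
  obtain ⟨hsD, hsInj, hsBad⟩ := sfun_spec hDd heInj
  obtain ⟨htE, htInj, htBad⟩ := sfun_spec hEd hdInj
  set s' : ℕ → X := sfun hDd heInj with hs'
  set t' : ℕ → X := sfun hEd hdInj with ht'
  set sMap : ↥E → ↥D := fun y => ⟨s' (ψE y), hsD _⟩ with hsMap
  set tMap : ↥D → ↥E := fun x => ⟨t' (ψD x), htE _⟩ with htMap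
  have hsMapInj : Function.Injective sMap := by
    intro y1 y2 h
    apply ψE.injective
    apply hsInj
    exact Subtype.ext_iff.mp h
  have htMapInj : Function.Injective tMap := by
    intro x1 x2 h
    apply ψD.injective
    apply htInj
    exact Subtype.ext_iff.mp h
  obtain ⟨f0, hf0bij, hf0⟩ := sb_with sMap tMap hsMapInj htMapInj
  set f : ↥D ≃ ↥E := Equiv.ofBijective f0 hf0bij with hf
  have hfapp : ∀ x, f x = f0 x := fun x => rfl
  -- coordinates
  have hcoordD : ∀ x : ↥D, dEnum (ψD x) = (x : X) := by
    intro x; rw [hdEnum]; simp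
  have hcoordE : ∀ y : ↥E, eEnum (ψE y) = (y : X) := by
    intro y; rw [heEnum]; simp
  -- the bad sets of f are finite
  have hbad : ∀ ε : ℝ, 0 < ε → {x : ↥D | ε ≤ dist (x : X) ((f x : X))}.Finite := by
    intro ε hε
    have hsubset : {x : ↥D | ε ≤ dist (x : X) ((f x : X))} ⊆
        (⇑ψD ⁻¹' {n : ℕ | ε ≤ dist (dEnum n) (t' n)}) ∪
          (f0 ⁻¹' (⇑ψE ⁻¹' {n : ℕ | ε ≤ dist (eEnum n) (s' n)})) := by
      intro x hx
      simp only [mem_setOf_eq] at hx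
      rcases hf0 x with hcase | hcase
      · left
        simp only [mem_preimage, mem_setOf_eq, hcoordD x]
        have : ((f x : ↥E) : X) = t' (ψD x) := by
          rw [hfapp, hcase, htMap]
        rwa [this] at hx
      · right
        simp only [mem_preimage, mem_setOf_eq, hcoordE (f0 x)]
        have hxv : (x : X) = s' (ψE (f0 x)) := by
          conv_lhs => rw [← hcase]
        rw [dist_comm]
        rw [hfapp] at hx
        rwa [← hxv]
    refine Set.Finite.subset (Set.Finite.union ?_ ?_) hsubset
    · exact (htBad ε hε).preimage (fun a _ b _ hab => ψD.injective hab)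
    · exact ((hsBad ε hε).preimage (fun a _ b _ hab => ψE.injective hab)).preimage
        (fun a _ b _ hab => hf0bij.1 hab)
  have hbadsymm : ∀ ε : ℝ, 0 < ε → {y : ↥E | ε ≤ dist (y : X) ((f.symm y : X))}.Finite := by
    intro ε hε
    apply Set.Finite.subset ((hbad ε hε).image ⇑f)
    intro y hy
    simp only [mem_setOf_eq] at hy
    refine ⟨f.symm y, ?_, by simp⟩
    simp only [mem_setOf_eq]
    rw [dist_comm]
    rwa [Equiv.apply_symm_apply]
  refine ⟨f, fun a => ⟨fun h => main_dir hI f hbad a h, fun h => ?_⟩⟩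
  have := main_dir hI f.symm hbadsymm (⇑f '' a) h
  rwa [Equiv.symm_image_image] at this
end

section
/- If J = ⋂_{l ∈ Λ} J_l is an intersection of a family of ideals on ω each of which has a topological representation, then J is weakly selective. -/
open Set TopologicalSpace

/-- `J` is weakly selective: for every `J`-positive `b` and `f : b → ω` there is a
`J`-positive `a ⊆ b` on which `f` is one-to-one or constant. -/
def WeaklySelective (J : Set (Set ℕ)) : Prop :=
  ∀ b : Set ℕ, b ∉ J → ∀ f : ℕ → ℕ,
    ∃ a : Set ℕ, a ⊆ b ∧ a ∉ J ∧ (Set.InjOn f a ∨ ∃ c : ℕ, ∀ n ∈ a, f n = c)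

/-- An intersection of a family of ideals with topological representations is
weakly selective. -/
theorem weaklySelective_of_iInter_topRep
    {Λ : Type} (Js : Λ → Set (Set ℕ))
    (hid : ∀ l, IsIdeal (Js l)) (hrep : ∀ l, HasTopRep (Js l))
    (J : Set (Set ℕ)) (hJ : J = ⋂ l, Js l) :
    WeaklySelective J := by
  subst hJ
  intro b hb f
  rw [Set.mem_iInter] at hb
  push_neg at hb
  obtain ⟨l, hbl⟩ := hb
  obtain ⟨X, _t, hmetr, hsep, I, ⟨Idown, Iunion, Ising⟩, ρ, hρinj, hρcount, hρdense, hiff⟩ :=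
    hrep l
  suffices h : ∃ a, a ⊆ b ∧ a ∉ Js l ∧ (Set.InjOn f a ∨ ∃ c, ∀ n ∈ a, f n = c) by
    obtain ⟨a, h1, h2, h3⟩ := h
    exact ⟨a, h1, fun hA => h2 (Set.mem_iInter.1 hA l), h3⟩
  by_cases hc : ∃ c, b ∩ f ⁻¹' {c} ∉ Js l
  · obtain ⟨c, hc⟩ := hc
    exact ⟨_, Set.inter_subset_left, hc, Or.inr ⟨c, fun n hn => hn.2⟩⟩
  push_neg at hc
  haveI := hmetr
  haveI := hsep
  letI : MetricSpace X := TopologicalSpace.metrizableSpaceMetric X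
  haveI : SecondCountableTopology X := UniformSpace.secondCountable_of_separable X
  -- all fibers are small
  set F : ℕ → Set X := fun c => closure (ρ '' (b ∩ f ⁻¹' {c})) with hF
  have hFI : ∀ c, F c ∈ I := fun c => (hiff _).1 (hc c)
  have hBI : closure (ρ '' b) ∉ I := fun h => hbl ((hiff b).2 h)
  set B' : Set X := closure (ρ '' b) \ ⋃ c, F c with hB'
  have hB'I : B' ∉ I := by
    intro h
    apply hBI
    have hg : ∀ n, (fun n => Nat.rec B' (fun k _ => F k) n : ℕ → Set X) n ∈ I := by
      intro n; cases n with
      | zero => exact h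
      | succ k => exact hFI k
    refine Idown _ _ ?_ (Iunion _ hg)
    intro x hx
    by_cases hxf : x ∈ ⋃ c, F c
    · obtain ⟨c, hxc⟩ := Set.mem_iUnion.1 hxf
      exact Set.mem_iUnion.2 ⟨c + 1, hxc⟩
    · exact Set.mem_iUnion.2 ⟨0, ⟨hx, hxf⟩⟩
  -- countable basis
  obtain ⟨S, hScount, -, hSbasis⟩ := TopologicalSpace.exists_countable_basis X
  obtain ⟨U, hU⟩ : ∃ U : ℕ → Set X, insert ∅ S = Set.range U :=
    (hScount.insert ∅).exists_eq_range ⟨∅, Set.mem_insert _ _⟩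
  have hUopen : ∀ n, IsOpen (U n) := by
    intro n
    have : U n ∈ insert ∅ S := hU ▸ Set.mem_range_self n
    rcases this with h | h
    · rw [h]; exact isOpen_empty
    · exact hSbasis.isOpen h
  have hUbasis : ∀ (x : X) (V : Set X), IsOpen V → x ∈ V → ∃ n, x ∈ U n ∧ U n ⊆ V := by
    intro x V hV hxV
    obtain ⟨v, hvS, hxv, hvV⟩ := hSbasis.exists_subset_of_mem_open hxV hV
    have : v ∈ insert ∅ S := Set.mem_insert_of_mem _ hvS
    rw [hU] at this
    obtain ⟨n, rfl⟩ := this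
    exact ⟨n, hxv, hvV⟩
  -- the key one-step selection lemma
  have key : ∀ (s : Finset ℕ) (n : ℕ), (U n ∩ B').Nonempty →
      ∃ m, m ∈ b ∧ ρ m ∈ U n ∧ ∀ m' ∈ s, f m ≠ f m' := by
    rintro s n ⟨x, hxU, hxB'⟩
    have hxcl : x ∈ closure (ρ '' b) := hxB'.1
    have hxF : ∀ c, x ∉ F c := fun c hxc => hxB'.2 (Set.mem_iUnion.2 ⟨c, hxc⟩)
    set W : Set X := U n ∩ ⋂ m' ∈ s, (F (f m'))ᶜ with hW
    have hWopen : IsOpen W :=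
      (hUopen n).inter (isOpen_biInter_finset fun m' _ => isClosed_closure.isOpen_compl)
    have hxW : x ∈ W := ⟨hxU, Set.mem_iInter₂.2 fun m' _ => hxF (f m')⟩
    obtain ⟨y, hyW, m, hmb, rfl⟩ := mem_closure_iff.1 hxcl W hWopen hxW
    refine ⟨m, hmb, hyW.1, ?_⟩
    intro m' hm' heq
    have hmem : ρ m ∈ F (f m') :=
      subset_closure ⟨m, ⟨hmb, by simp [heq]⟩, rfl⟩
    exact (Set.mem_iInter₂.1 hyW.2 m' hm') hmem
  classical
  -- recursive construction
  let choice : Finset ℕ → ℕ → Option ℕ := fun s n =>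
    if h : (U n ∩ B').Nonempty then some (key s n h).choose else none
  let picks : ℕ → Finset ℕ := fun n => Nat.rec ∅ (fun k acc => acc ∪ (choice acc k).toFinset) n
  have hpicks_succ : ∀ k, picks (k + 1) = picks k ∪ (choice (picks k) k).toFinset := fun k => rfl
  have hpicks_mono : Monotone picks := by
    apply monotone_nat_of_le_succ
    intro k
    rw [hpicks_succ k]
    exact Finset.subset_union_left
  have hchoice_spec : ∀ (s : Finset ℕ) (k m), choice s k = some m →
      m ∈ b ∧ ρ m ∈ U k ∧ ∀ m' ∈ s, f m ≠ f m' := by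
    intro s k m hm
    by_cases h : (U k ∩ B').Nonempty
    · have he : choice s k = some (key s k h).choose := by
        simp only [choice]; rw [dif_pos h]
      rw [he] at hm
      obtain rfl : (key s k h).choose = m := Option.some_injective _ hm
      exact (key s k h).choose_spec
    · have he : choice s k = none := by
        simp only [choice]; rw [dif_neg h]
      rw [he] at hm
      cases hm
  set a : Set ℕ := {m | ∃ n, m ∈ picks n} with ha
  have hmem_succ : ∀ m k, m ∈ picks (k + 1) → m ∈ picks k ∨ choice (picks k) k = some m := by
    intro m k hm
    rw [hpicks_succ k] at hm
    rcases Finset.mem_union.1 hm with h | h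
    · exact Or.inl h
    · exact Or.inr (Option.mem_toFinset.1 h)
  -- a ⊆ b
  have hab : a ⊆ b := by
    rintro m ⟨n, hmn⟩
    induction n with
    | zero => exact absurd hmn (by simp [picks])
    | succ k ih =>
      rcases hmem_succ m k hmn with h | h
      · exact ih h
      · exact (hchoice_spec _ _ _ h).1
  -- f is injective on a
  have hinj : Set.InjOn f a := by
    let fnd : ∀ m : ℕ, (∃ n, m ∈ picks n) → ℕ :=
      fun m h => @Nat.find _ (fun n => Classical.dec _) h
    have fnd_spec : ∀ m h, m ∈ picks (fnd m h) :=
      fun m h => @Nat.find_spec _ (fun n => Classical.dec _) h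
    have fnd_min : ∀ m h k, k < fnd m h → m ∉ picks k :=
      fun m h k hk => @Nat.find_min _ (fun n => Classical.dec _) h _ hk
    have aux : ∀ m1 m2 : ℕ, ∀ h1 : ∃ n, m1 ∈ picks n, ∀ h2 : ∃ n, m2 ∈ picks n,
        fnd m1 h1 ≤ fnd m2 h2 → f m1 = f m2 → m1 = m2 := by
      intro m1 m2 h1 h2 hle hf
      have hm2 : m2 ∈ picks (fnd m2 h2) := fnd_spec m2 h2
      have hpos : fnd m2 h2 ≠ 0 := by
        intro h0; rw [h0] at hm2; exact absurd hm2 (by simp [picks])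
      obtain ⟨k, hk⟩ := Nat.exists_eq_succ_of_ne_zero hpos
      rw [hk] at hm2
      have hm2new : m2 ∉ picks k := fnd_min m2 h2 k (by omega)
      have hm2choice : choice (picks k) k = some m2 := by
        rcases hmem_succ m2 k hm2 with h | h
        · exact absurd h hm2new
        · exact h
      rcases lt_or_eq_of_le hle with hlt | heqt
      · have hm1k : m1 ∈ picks k := hpicks_mono (by omega) (fnd_spec m1 h1)
        exact absurd hf ((hchoice_spec _ _ _ hm2choice).2.2 m1 hm1k).symm
      · have hm1 : m1 ∈ picks (k + 1) := by
          have := fnd_spec m1 h1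
          rwa [heqt, hk] at this
        have hm1new : m1 ∉ picks k := fnd_min m1 h1 k (by omega)
        have hm1choice : choice (picks k) k = some m1 := by
          rcases hmem_succ m1 k hm1 with h | h
          · exact absurd h hm1new
          · exact h
        rw [hm1choice] at hm2choice
        exact Option.some_injective _ hm2choice
    rintro m1 hm1 m2 hm2 hf
    rcases le_total (fnd m1 hm1) (fnd m2 hm2) with h | h
    · exact aux m1 m2 hm1 hm2 h hf
    · exact (aux m2 m1 hm2 hm1 h hf.symm).symm
  -- B' ⊆ closure (ρ '' a)
  have hdense : B' ⊆ closure (ρ '' a) := by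
    intro x hx
    rw [mem_closure_iff]
    intro V hV hxV
    obtain ⟨n, hxU, hUV⟩ := hUbasis x V hV hxV
    have hne : (U n ∩ B').Nonempty := ⟨x, hxU, hx⟩
    have : choice (picks n) n = some (key (picks n) n hne).choose := by
      simp only [choice]; rw [dif_pos hne]
    set m := (key (picks n) n hne).choose with hm
    have hspec := hchoice_spec (picks n) n m this
    refine ⟨ρ m, hUV hspec.2.1, m, ⟨n + 1, ?_⟩, rfl⟩
    rw [hpicks_succ n]
    exact Finset.mem_union_right _ (Option.mem_toFinset.2 this)
  -- a is positive
  have hanot : a ∉ Js l := by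
    intro hmem
    exact hB'I (Idown _ _ hdense ((hiff a).1 hmem))
  exact ⟨a, hab, hanot, Or.inl hinj⟩
end

section
/- If an ideal J on ω is countably separated and dense, then there is a countable family witnessing that J is countably separated which separates points of ω (for all m ≠ n there is a member containing m but not n) and is such that every Boolean combination of its elements is either infinite or empty. -/
open Set TopologicalSpace

/-- Boolean combinations of the members of the family `c`. -/
inductive IsBoolComb (c : ℕ → Set ℕ) : Set ℕ → Prop
  | basic (n : ℕ) : IsBoolComb c (c n)
  | compl {s : Set ℕ} : IsBoolComb c s → IsBoolComb c sᶜ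
  | inter {s t : Set ℕ} : IsBoolComb c s → IsBoolComb c t → IsBoolComb c (s ∩ t)
  | union {s t : Set ℕ} : IsBoolComb c s → IsBoolComb c t → IsBoolComb c (s ∪ t)

namespace ImpSepAux

attribute [local instance] Classical.propDecidable

/-- The atom of the family `e` at level `N` with pattern `p`. -/
def Atom (e : ℕ → Set ℕ) (N : ℕ) (p : ℕ → Bool) : Set ℕ :=
  {x | ∀ n, n < N → (x ∈ e n ↔ p n = true)}

def Inv (e : ℕ → Set ℕ) (N : ℕ) : Prop :=
  ∀ p : ℕ → Bool, (Atom e N p).Infinite ∨ Atom e N p = ∅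

def Split (e : ℕ → Set ℕ) (N : ℕ) (d : Set ℕ) : Prop :=
  ∀ p : ℕ → Bool,
    ((Atom e N p ∩ d).Infinite ∨ Atom e N p ∩ d = ∅) ∧
    ((Atom e N p \ d).Infinite ∨ Atom e N p \ d = ∅)

lemma atom_zero (e : ℕ → Set ℕ) (p : ℕ → Bool) : Atom e 0 p = Set.univ := by
  ext x; simp [Atom]

lemma atom_succ (e : ℕ → Set ℕ) (N : ℕ) (p : ℕ → Bool) :
    Atom e (N+1) p = if p N = true then Atom e N p ∩ e N else Atom e N p \ e N := by
  by_cases hp : p N = true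
  · rw [if_pos hp]
    ext x
    constructor
    · intro hx
      exact ⟨fun n hn => hx n (by omega), (hx N (by omega)).mpr hp⟩
    · rintro ⟨h1, h2⟩ n hn
      rcases Nat.lt_succ_iff_lt_or_eq.mp hn with h | h
      · exact h1 n h
      · subst h; exact ⟨fun _ => hp, fun _ => h2⟩
  · rw [if_neg hp]
    ext x
    constructor
    · intro hx
      refine ⟨fun n hn => hx n (by omega), fun hxe => hp ((hx N (by omega)).mp hxe)⟩
    · rintro ⟨h1, h2⟩ n hn
      rcases Nat.lt_succ_iff_lt_or_eq.mp hn with h | h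
      · exact h1 n h
      · subst h; exact ⟨fun hxe => absurd hxe h2, fun hpn => absurd hpn hp⟩

lemma atom_mono (e : ℕ → Set ℕ) {N M : ℕ} (h : N ≤ M) (p : ℕ → Bool) :
    Atom e M p ⊆ Atom e N p :=
  fun _x hx n hn => hx n (lt_of_lt_of_le hn h)

lemma atom_congr_pattern (e : ℕ → Set ℕ) (N : ℕ) {p q : ℕ → Bool}
    (h : ∀ n, n < N → p n = q n) : Atom e N p = Atom e N q := by
  ext x
  constructor <;> intro hx n hn
  · rw [← h n hn]; exact hx n hn
  · rw [h n hn]; exact hx n hn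

lemma atom_congr_family {e e' : ℕ → Set ℕ} (N : ℕ) (p : ℕ → Bool)
    (h : ∀ k, k < N → e k = e' k) : Atom e N p = Atom e' N p := by
  ext x
  constructor <;> intro hx n hn
  · rw [← h n hn]; exact hx n hn
  · rw [h n hn]; exact hx n hn

lemma atom_eq_of_mem {e : ℕ → Set ℕ} {N : ℕ} {p q : ℕ → Bool} {x : ℕ}
    (hx : x ∈ Atom e N p) (hx' : x ∈ Atom e N q) : Atom e N p = Atom e N q := by
  ext y
  constructor <;> intro hy n hn
  · exact (hy n hn).trans (((hx n hn).symm.trans (hx' n hn)))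
  · exact (hy n hn).trans (((hx' n hn).symm.trans (hx n hn)))

lemma mem_atom_self (e : ℕ → Set ℕ) (N : ℕ) (x : ℕ) :
    x ∈ Atom e N (fun n => decide (x ∈ e n)) := by
  intro n _
  simp

lemma inv_succ {e : ℕ → Set ℕ} {N : ℕ} (h1 : Inv e N) (h2 : Split e N (e N)) :
    Inv e (N+1) := by
  intro p
  rw [atom_succ]
  by_cases hp : p N = true
  · rw [if_pos hp]; exact (h2 p).1
  · rw [if_neg hp]; exact (h2 p).2

lemma split_empty {e : ℕ → Set ℕ} {N : ℕ} (h1 : Inv e N) : Split e N ∅ := by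
  intro p
  constructor
  · right; simp
  · simpa using h1 p

/-- Boolean combinations are invariant on sufficiently deep atoms. -/
lemma boolcomb_invariant {e : ℕ → Set ℕ} {s : Set ℕ} (h : IsBoolComb e s) :
    ∃ N, ∀ p : ℕ → Bool, ∀ x ∈ Atom e N p, ∀ y ∈ Atom e N p, x ∈ s → y ∈ s := by
  induction h with
  | basic n =>
      exact ⟨n + 1, fun p x hx y hy hxs =>
        (hy n (by omega)).mpr ((hx n (by omega)).mp hxs)⟩
  | @compl t _ ih =>
      obtain ⟨N, hN⟩ := ih
      exact ⟨N, fun p x hx y hy hxs hyt => hxs (hN p y hy x hx hyt)⟩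
  | @inter t u _ _ ih1 ih2 =>
      obtain ⟨N1, h1⟩ := ih1
      obtain ⟨N2, h2⟩ := ih2
      refine ⟨max N1 N2, fun p x hx y hy hxs => ?_⟩
      exact ⟨h1 p x (atom_mono e (le_max_left _ _) p hx) y
          (atom_mono e (le_max_left _ _) p hy) hxs.1,
        h2 p x (atom_mono e (le_max_right _ _) p hx) y
          (atom_mono e (le_max_right _ _) p hy) hxs.2⟩
  | @union t u _ _ ih1 ih2 =>
      obtain ⟨N1, h1⟩ := ih1
      obtain ⟨N2, h2⟩ := ih2
      refine ⟨max N1 N2, fun p x hx y hy hxs => ?_⟩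
      rcases hxs with hxs | hxs
      · exact Or.inl (h1 p x (atom_mono e (le_max_left _ _) p hx) y
          (atom_mono e (le_max_left _ _) p hy) hxs)
      · exact Or.inr (h2 p x (atom_mono e (le_max_right _ _) p hx) y
          (atom_mono e (le_max_right _ _) p hy) hxs)

lemma combo_infinite_or_empty {e : ℕ → Set ℕ} (hInv : ∀ N, Inv e N)
    {s : Set ℕ} (h : IsBoolComb e s) : s.Infinite ∨ s = ∅ := by
  rcases s.eq_empty_or_nonempty with h0 | ⟨x, hx⟩
  · exact Or.inr h0
  obtain ⟨N, hN⟩ := boolcomb_invariant h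
  have hxA := mem_atom_self e N x
  have hsub : Atom e N (fun n => decide (x ∈ e n)) ⊆ s :=
    fun y hy => hN _ x hxA y hy hx
  have hinf : (Atom e N (fun n => decide (x ∈ e n))).Infinite := by
    rcases hInv N (fun n => decide (x ∈ e n)) with h | h
    · exact h
    · rw [h] at hxA; exact absurd hxA (Set.notMem_empty x)
  exact Or.inl (hinf.mono hsub)


section Ideal

variable {J : Set (Set ℕ)}

def IsIdeal' (J : Set (Set ℕ)) : Prop :=
  (∀ a b : Set ℕ, a ⊆ b → b ∈ J → a ∈ J) ∧
  (∀ a b : Set ℕ, a ∈ J → b ∈ J → a ∪ b ∈ J) ∧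
  (∀ x : ℕ, {x} ∈ J)

lemma empty_mem (hJ : IsIdeal' J) : ∅ ∈ J :=
  hJ.1 ∅ {0} (empty_subset _) (hJ.2.2 0)

lemma finite_mem (hJ : IsIdeal' J) {s : Set ℕ} (hs : s.Finite) : s ∈ J := by
  refine Set.Finite.induction_on (motive := fun s _ => s ∈ J) s hs (empty_mem hJ) ?_
  intro a t _ _ ih
  rw [Set.insert_eq]
  exact hJ.2.1 _ _ (hJ.2.2 _) ih

lemma iUnion_mem (hJ : IsIdeal' J) {ι : Type} [Fintype ι] (f : ι → Set ℕ)
    (hf : ∀ i, f i ∈ J) : (⋃ i, f i) ∈ J := by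
  classical
  have : ∀ t : Finset ι, (⋃ i ∈ t, f i) ∈ J := by
    intro t
    induction t using Finset.induction_on with
    | empty => simpa using empty_mem hJ
    | insert _ _ hnew ih =>
        rw [Finset.set_biUnion_insert]
        exact hJ.2.1 _ _ (hf _) ih
  have h := this Finset.univ
  simpa using h

/-- Split an infinite set into two infinite pieces. -/
lemma exists_split {s : Set ℕ} (hs : s.Infinite) :
    ∃ t, t ⊆ s ∧ t.Infinite ∧ (s \ t).Infinite := by
  let f := hs.natEmbedding
  refine ⟨Set.range (fun k => (f (2 * k) : ℕ)), ?_, ?_, ?_⟩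
  · rintro x ⟨k, rfl⟩; exact (f (2 * k)).2
  · apply Set.infinite_range_of_injective
    intro a b hab
    have : f (2 * a) = f (2 * b) := Subtype.ext hab
    have := f.injective this
    omega
  · have hsub : Set.range (fun k => (f (2 * k + 1) : ℕ)) ⊆
        s \ Set.range (fun k => (f (2 * k) : ℕ)) := by
      rintro x ⟨k, rfl⟩
      refine ⟨(f (2 * k + 1)).2, ?_⟩
      rintro ⟨j, hj⟩
      have : f (2 * j) = f (2 * k + 1) := Subtype.ext hj
      have := f.injective this
      omega
    refine Set.Infinite.mono hsub ?_
    apply Set.infinite_range_of_injective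
    intro a b hab
    have : f (2 * a + 1) = f (2 * b + 1) := Subtype.ext hab
    have := f.injective this
    omega

def IdealDense' (J : Set (Set ℕ)) : Prop :=
  ∀ b : Set ℕ, b.Infinite → ∃ a : Set ℕ, a ⊆ b ∧ a.Infinite ∧ a ∈ J

/-- Main shrinking lemma: any set `c` can be shrunk by a `J`-set so that it
splits every atom at level `N` into infinite-or-empty pieces. -/
lemma shrink (hJ : IsIdeal' J) (hd : IdealDense' J) (e : ℕ → Set ℕ) (N : ℕ)
    (hInv : Inv e N) (c : Set ℕ) :
    ∃ d, d ⊆ c ∧ c \ d ∈ J ∧ Split e N d := by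
  classical
  set P : (Fin N → Bool) → (ℕ → Bool) :=
    fun q n => if h : n < N then q ⟨n, h⟩ else false with hP
  have hW : ∀ q : Fin N → Bool, ∃ w : Set ℕ,
      w ⊆ Atom e N (P q) ∩ c ∧ w ∈ J ∧
      (((Atom e N (P q) ∩ c) \ w).Infinite ∨ (Atom e N (P q) ∩ c) \ w = ∅) ∧
      (((Atom e N (P q) \ c) ∪ w).Infinite ∨ (Atom e N (P q) \ c) ∪ w = ∅) := by
    intro q
    set s := Atom e N (P q) with hs
    rcases hInv (P q) with hsi | hse
    · by_cases hf : (s ∩ c).Finite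
      · refine ⟨s ∩ c, subset_rfl, finite_mem hJ hf, Or.inr (by simp), Or.inl ?_⟩
        rw [Set.diff_union_inter]
        exact hsi
      · have hinf : (s ∩ c).Infinite := hf
        obtain ⟨z, hzsub, hzinf, hzJ⟩ := hd _ hinf
        obtain ⟨z1, hz1z, hz1inf, hz2inf⟩ := exists_split hzinf
        refine ⟨z1, hz1z.trans hzsub, hJ.1 _ _ hz1z hzJ, Or.inl ?_,
          Or.inl (hz1inf.mono subset_union_right)⟩
        exact hz2inf.mono (fun x hx => ⟨hzsub hx.1, hx.2⟩)
    · rw [← hs] at hse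
      refine ⟨∅, empty_subset _, empty_mem hJ, Or.inr ?_, Or.inr ?_⟩ <;>
        simp [hse]
  choose W hW1 hW2 hW3 hW4 using hW
  set U : Set ℕ := ⋃ q : Fin N → Bool, W q with hU
  have hUJ : U ∈ J := iUnion_mem hJ W hW2
  refine ⟨c \ U, diff_subset, ?_, ?_⟩
  · refine hJ.1 _ _ ?_ hUJ
    intro x hx
    simp only [mem_diff, not_and, not_not] at hx
    exact hx.2 hx.1
  · intro p
    set s := Atom e N p with hs
    rcases s.eq_empty_or_nonempty with h0 | ⟨x, hx⟩
    · constructor <;> right <;> simp [h0]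
    · set q0 : Fin N → Bool := fun i => p i with hq0
      have hPq0 : Atom e N (P q0) = s := by
        rw [hs]
        apply atom_congr_pattern
        intro n hn
        simp [hP, hq0, hn]
      have hsU : s ∩ U = W q0 := by
        apply Subset.antisymm
        · rintro y ⟨hys, hyU⟩
          obtain ⟨q, hyW⟩ := by
            simpa only [hU, Set.mem_iUnion] using hyU
          by_cases hq : q = q0
          · rwa [← hq]
          · exfalso
            obtain ⟨i, hi⟩ := Function.ne_iff.mp hq
            have hyA : y ∈ Atom e N (P q) := ((hW1 q) hyW).1
            have h1 : y ∈ e i ↔ P q i = true := hyA i i.2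
            have h2 : y ∈ e i ↔ p i = true := hys i i.2
            have hPq : P q (i : ℕ) = q i := by simp [hP]
            apply hi
            rw [hPq] at h1
            have : (q i = true) ↔ (q0 i = true) := by
              constructor
              · intro h; exact h2.mp (h1.mpr h)
              · intro h; exact h1.mp (h2.mpr h)
            cases hqi : q i <;> cases hqi0 : q0 i <;> simp_all
        · intro y hy
          have hysc := (hW1 q0) hy
          rw [hPq0] at hysc
          exact ⟨hysc.1, Set.mem_iUnion.mpr ⟨q0, hy⟩⟩
      have hWsub : W q0 ⊆ s ∩ c := by rw [← hPq0]; exact hW1 q0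
      constructor
      · have heq : s ∩ (c \ U) = (Atom e N (P q0) ∩ c) \ W q0 := by
          rw [hPq0]
          ext y
          constructor
          · rintro ⟨hys, hyc, hyU⟩
            exact ⟨⟨hys, hyc⟩, fun hyW => hyU (Set.mem_iUnion.mpr ⟨q0, hyW⟩)⟩
          · rintro ⟨⟨hys, hyc⟩, hyW⟩
            refine ⟨hys, hyc, fun hyU => hyW ?_⟩
            rw [← hsU]; exact ⟨hys, hyU⟩
        rw [heq]; exact hW3 q0
      · have heq : s \ (c \ U) = (Atom e N (P q0) \ c) ∪ W q0 := by
          rw [hPq0]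
          ext y
          constructor
          · rintro ⟨hys, hy⟩
            simp only [mem_diff, not_and, not_not] at hy
            by_cases hyc : y ∈ c
            · right; rw [← hsU]; exact ⟨hys, hy hyc⟩
            · left; exact ⟨hys, hyc⟩
          · rintro (⟨hys, hyc⟩ | hyW)
            · exact ⟨hys, fun h => hyc h.1⟩
            · have h2 := hWsub hyW
              exact ⟨h2.1, fun h => h.2 (Set.mem_iUnion.mpr ⟨q0, hyW⟩)⟩
        rw [heq]; exact hW4 q0

/-- Separator lemma: a set containing `m` but not `n` splitting all atoms well. -/
lemma seplem (e : ℕ → Set ℕ) (N : ℕ) (hInv : Inv e N) (m n : ℕ) (hmn : m ≠ n) :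
    ∃ d, m ∈ d ∧ n ∉ d ∧ Split e N d := by
  classical
  have hm : m ∈ Atom e N (fun k => decide (m ∈ e k)) := mem_atom_self e N m
  set p0 : ℕ → Bool := fun k => decide (m ∈ e k) with hp0
  have hsi : (Atom e N p0).Infinite := by
    rcases hInv p0 with h | h
    · exact h
    · rw [h] at hm; exact absurd hm (Set.notMem_empty m)
  have htinf : (Atom e N p0 \ ({m, n} : Set ℕ)).Infinite :=
    hsi.diff (Set.toFinite _)
  obtain ⟨z1, hz1sub, hz1inf, hz2inf⟩ := exists_split htinf
  refine ⟨Atom e N p0 \ ({n} ∪ z1), ⟨hm, ?_⟩, ?_, ?_⟩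
  · rintro (h | h)
    · exact hmn h
    · exact (hz1sub h).2 (Or.inl rfl)
  · rintro ⟨_, h⟩
    exact h (Or.inl rfl)
  · intro p
    rcases (Atom e N p).eq_empty_or_nonempty with h0 | ⟨x, hx⟩
    · constructor <;> right <;> simp [h0]
    by_cases hxs : x ∈ Atom e N p0
    · have hts : Atom e N p = Atom e N p0 := atom_eq_of_mem hx hxs
      rw [hts]
      constructor
      · left
        refine hz2inf.mono ?_
        rintro y ⟨⟨hys, hymn⟩, hyz1⟩
        refine ⟨hys, hys, ?_⟩
        rintro (h | h)
        · exact hymn (Or.inr h)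
        · exact hyz1 h
      · left
        refine hz1inf.mono ?_
        intro y hy
        have h' := hz1sub hy
        exact ⟨h'.1, fun h => h.2 (Or.inr hy)⟩
    · have hdisj : ∀ y, y ∈ Atom e N p → y ∉ Atom e N p0 := by
        intro y hyt hys
        exact hxs ((atom_eq_of_mem hyt hys) ▸ hx)
      constructor
      · right
        rw [Set.eq_empty_iff_forall_notMem]
        rintro y ⟨hyt, hyd⟩
        exact hdisj y hyt hyd.1
      · have heq : Atom e N p \ (Atom e N p0 \ ({n} ∪ z1)) = Atom e N p := by
          ext y
          constructor
          · exact fun h => h.1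
          · intro hyt
            exact ⟨hyt, fun h => hdisj y hyt h.1⟩
        rw [heq]
        simpa using hInv p

end Ideal

section Rec

def StepSpec (J : Set (Set ℕ)) (c : ℕ → Set ℕ) (N : ℕ) (prev : ℕ → Set ℕ)
    (d : Set ℕ) : Prop :=
  Split prev N d ∧
  (∀ j, N = 2 * j → d ⊆ c j ∧ c j \ d ∈ J) ∧
  (∀ m n, N = 2 * Nat.pair m n + 1 → m ≠ n → m ∈ d ∧ n ∉ d)

lemma step_exists {J : Set (Set ℕ)} (hJ : IsIdeal' J) (hd : IdealDense' J)
    (c : ℕ → Set ℕ) (N : ℕ) (prev : ℕ → Set ℕ) (hInv : Inv prev N) :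
    ∃ d, StepSpec J c N prev d := by
  rcases Nat.even_or_odd N with ⟨j, hj⟩ | ⟨t, ht⟩
  · obtain ⟨h1, h2, h3⟩ := (shrink hJ hd prev N hInv (c j)).choose_spec
    refine ⟨_, h3, fun j' hj' => ?_, fun m n hN _ => by omega⟩
    have : j' = j := by omega
    subst this; exact ⟨h1, h2⟩
  · by_cases hmn : (Nat.unpair t).1 ≠ (Nat.unpair t).2
    · obtain ⟨d, h1, h2, h3⟩ := seplem prev N hInv _ _ hmn
      refine ⟨d, h3, fun j hj => by omega, fun m n hN _ => ?_⟩
      have hpt : Nat.pair m n = t := by omega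
      have hu : Nat.unpair t = (m, n) := by rw [← hpt, Nat.unpair_pair]
      have e1 : (Nat.unpair t).1 = m := by rw [hu]
      have e2 : (Nat.unpair t).2 = n := by rw [hu]
      rw [e1] at h1; rw [e2] at h2
      exact ⟨h1, h2⟩
    · push_neg at hmn
      refine ⟨∅, split_empty hInv, fun j hj => by omega, fun m n hN hne => ?_⟩
      exfalso
      have hpt : Nat.pair m n = t := by omega
      have hu : Nat.unpair t = (m, n) := by rw [← hpt, Nat.unpair_pair]
      apply hne
      have e1 : (Nat.unpair t).1 = m := by rw [hu]
      have e2 : (Nat.unpair t).2 = n := by rw [hu]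
      rw [← e1, ← e2, hmn]

noncomputable def prefF (J : Set (Set ℕ)) (c : ℕ → Set ℕ) : ℕ → ℕ → Set ℕ
  | 0 => fun _ => ∅
  | (N+1) => Function.update (prefF J c N) N
      (Classical.epsilon (StepSpec J c N (prefF J c N)))

noncomputable def eF (J : Set (Set ℕ)) (c : ℕ → Set ℕ) (k : ℕ) : Set ℕ :=
  prefF J c (k+1) k

lemma prefF_stab (J : Set (Set ℕ)) (c : ℕ → Set ℕ) :
    ∀ N k, k < N → prefF J c N k = eF J c k := by
  intro N
  induction N with
  | zero => intro k hk; omega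
  | succ N ih =>
      intro k hk
      rcases Nat.lt_succ_iff_lt_or_eq.mp hk with h | h
      · show Function.update (prefF J c N) N _ k = _
        rw [Function.update_of_ne (by omega : k ≠ N)]
        exact ih k h
      · subst h; rfl

lemma atom_prefF (J : Set (Set ℕ)) (c : ℕ → Set ℕ) (N : ℕ) (p : ℕ → Bool) :
    Atom (eF J c) N p = Atom (prefF J c N) N p :=
  atom_congr_family N p (fun k hk => (prefF_stab J c N k hk).symm)

lemma eF_succ_def (J : Set (Set ℕ)) (c : ℕ → Set ℕ) (N : ℕ) :
    eF J c N = Classical.epsilon (StepSpec J c N (prefF J c N)) := by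
  show Function.update (prefF J c N) N _ N = _
  rw [Function.update_self]

lemma inv_all {J : Set (Set ℕ)} (hJ : IsIdeal' J) (hd : IdealDense' J)
    (c : ℕ → Set ℕ) : ∀ N, Inv (eF J c) N := by
  intro N
  induction N with
  | zero => intro p; left; rw [atom_zero]; exact Set.infinite_univ
  | succ N ih =>
      have hIp : Inv (prefF J c N) N := fun p => by
        rw [← atom_prefF]; exact ih p
      have hspec : StepSpec J c N (prefF J c N) (eF J c N) := by
        rw [eF_succ_def]
        exact Classical.epsilon_spec (step_exists hJ hd c N (prefF J c N) hIp)
      have hSp : Split (eF J c) N (eF J c N) := by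
        intro p; rw [atom_prefF]; exact hspec.1 p
      exact inv_succ ih hSp

lemma spec_all {J : Set (Set ℕ)} (hJ : IsIdeal' J) (hd : IdealDense' J)
    (c : ℕ → Set ℕ) (N : ℕ) : StepSpec J c N (prefF J c N) (eF J c N) := by
  have hIp : Inv (prefF J c N) N := fun p => by
    rw [← atom_prefF]; exact inv_all hJ hd c N p
  rw [eF_succ_def]
  exact Classical.epsilon_spec (step_exists hJ hd c N _ hIp)

end Rec

end ImpSepAux

theorem improved_separating_family'
    (J : Set (Set ℕ)) (hJ : ImpSepAux.IsIdeal' J) (hd : ImpSepAux.IdealDense' J)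
    (hcs : ∃ c : ℕ → Set ℕ, ∀ a ∈ J, ∀ b : Set ℕ, b ∉ J →
        ∃ n, a ∩ c n = ∅ ∧ b ∩ c n ∉ J) :
    ∃ c : ℕ → Set ℕ, (∀ a ∈ J, ∀ b : Set ℕ, b ∉ J →
        ∃ n, a ∩ c n = ∅ ∧ b ∩ c n ∉ J) ∧
      (∀ m n : ℕ, m ≠ n → ∃ k, m ∈ c k ∧ n ∉ c k) ∧
      (∀ s : Set ℕ, IsBoolComb c s → s.Infinite ∨ s = ∅) := by
  obtain ⟨c, hc⟩ := hcs
  refine ⟨ImpSepAux.eF J c, ?_, ?_, ?_⟩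
  · intro a ha b hb
    obtain ⟨n, h1, h2⟩ := hc a ha b hb
    obtain ⟨hsub, hdiff⟩ := (ImpSepAux.spec_all hJ hd c (2 * n)).2.1 n rfl
    refine ⟨2 * n, ?_, ?_⟩
    · exact Set.subset_eq_empty (Set.inter_subset_inter_right a hsub) h1
    · intro hbe
      apply h2
      refine hJ.1 _ _ ?_ (hJ.2.1 _ _ hbe hdiff)
      intro x hx
      by_cases hxe : x ∈ ImpSepAux.eF J c (2 * n)
      · exact Or.inl ⟨hx.1, hxe⟩
      · exact Or.inr ⟨hx.2, hxe⟩
  · intro m n hmn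
    exact ⟨2 * Nat.pair m n + 1,
      (ImpSepAux.spec_all hJ hd c _).2.2 m n rfl hmn⟩
  · intro s hs
    exact ImpSepAux.combo_infinite_or_empty (ImpSepAux.inv_all hJ hd c) hs

/-- Lemma: a countably separated dense ideal admits a separating family which
separates points and whose Boolean combinations are all infinite or empty. -/
theorem improved_separating_family
    (J : Set (Set ℕ)) (hJ : IsIdeal J) (hd : IdealDense J)
    (hcs : CtblySeparated J) :
    ∃ c : ℕ → Set ℕ, SeparatesIdeal J c ∧
      (∀ m n : ℕ, m ≠ n → ∃ k, m ∈ c k ∧ n ∉ c k) ∧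
      (∀ s : Set ℕ, IsBoolComb c s → s.Infinite ∨ s = ∅) := by
  exact improved_separating_family' J hJ hd hcs
end

section
/- Let D be a countable dense subset of the Cantor space 2^ω and let J be a dense ideal on D which is countably separated by a family of sets of the form C ∩ D with C ⊆ 2^ω clopen. Then I = {A ⊆ 2^ω : A compact and ∃ a ∈ J with A ⊆ cl(a)} is a σ-ideal of compact sets: it contains all singletons, is closed under compact subsets, and whenever a compact set is a countable union of members of I it belongs to I. -/
open Set TopologicalSpace

abbrev XX := ℕ → Bool

def cyl (x : XX) (n : ℕ) : Set XX := {y | ∀ i < n, y i = x i}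

lemma mem_cyl_self (x : XX) (n : ℕ) : x ∈ cyl x n := fun _ _ => rfl

lemma cyl_anti (x : XX) {m n : ℕ} (h : m ≤ n) : cyl x n ⊆ cyl x m :=
  fun _ hy i hi => hy i (lt_of_lt_of_le hi h)

lemma isOpen_cyl (x : XX) (n : ℕ) : IsOpen (cyl x n) := by
  have : cyl x n = ⋂ i ∈ Finset.range n, (fun y : XX => y i) ⁻¹' {x i} := by
    ext y; simp [cyl]
  rw [this]
  exact isOpen_biInter_finset fun i _ => (continuous_apply i).isOpen_preimage _ (isOpen_discrete _)

lemma exists_cyl_subset {U : Set XX} (hU : IsOpen U) {x : XX} (hx : x ∈ U) :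
    ∃ n, cyl x n ⊆ U := by
  obtain ⟨I, u, hu, hsub⟩ := isOpen_pi_iff.mp hU x hx
  refine ⟨I.sup id + 1, fun y hy => hsub ?_⟩
  intro i hi
  have : y i = x i := hy i (Nat.lt_succ_of_le (Finset.le_sup (f := id) hi))
  rw [this]; exact (hu i hi).2

section Main

variable (D : Set XX) (J : Set (Set XX))
  (hsub : ∀ a ∈ J, a ⊆ D)
  (hdown : ∀ a b : Set XX, a ⊆ b → b ∈ J → a ∈ J)
  (hunion : ∀ a b : Set XX, a ∈ J → b ∈ J → a ∪ b ∈ J)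
  (hsing : ∀ d ∈ D, ({d} : Set XX) ∈ J)
  (c : ℕ → Set XX) (hclop : ∀ n, IsClopen (c n))
  (hsep : ∀ a ∈ J, ∀ b : Set XX, b ⊆ D → b ∉ J →
      ∃ n, a ∩ (c n ∩ D) = ∅ ∧ b ∩ (c n ∩ D) ∉ J)
  (hDd : Dense D)

include hdown hsing hDd in
lemma empty_mem : (∅ : Set XX) ∈ J := by
  obtain ⟨d, hd⟩ := hDd.nonempty
  exact hdown ∅ {d} (empty_subset _) (hsing d hd)

include hdown hunion hsing hDd in
lemma finsetU {ι : Type*} (t : Finset ι) (g : ι → Set XX) (hg : ∀ i ∈ t, g i ∈ J) :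
    (⋃ i ∈ t, g i) ∈ J := by
  classical
  induction t using Finset.induction_on with
  | empty => simpa using empty_mem D J hdown hsing hDd
  | @insert a s hnotmem ih =>
    rw [Finset.set_biUnion_insert]
    exact hunion _ _ (hg a (Finset.mem_insert_self a s))
      (ih fun i hi => hg i (Finset.mem_insert_of_mem hi))

include hsub hsep in
lemma crit {e : Set XX} (he : e ⊆ D) {w : Set XX} (hw : w ∈ J)
    (h : ∀ k, w ∩ c k = ∅ → e ∩ c k ∈ J) : e ∈ J := by
  by_contra hne
  obtain ⟨k, hk1, hk2⟩ := hsep w hw e he hne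
  have hwD : w ⊆ D := hsub w hw
  have h1 : w ∩ c k = ∅ := by
    rw [← hk1]; ext p
    exact ⟨fun ⟨hp1, hp2⟩ => ⟨hp1, hp2, hwD hp1⟩, fun ⟨hp1, hp2, _⟩ => ⟨hp1, hp2⟩⟩
  have h2 : e ∩ (c k ∩ D) = e ∩ c k := by
    ext p
    exact ⟨fun ⟨hp1, hp2, _⟩ => ⟨hp1, hp2⟩, fun ⟨hp1, hp2⟩ => ⟨hp1, hp2, he hp1⟩⟩
  exact hk2 (by rw [h2]; exact h k h1)

include hsub hdown hunion hsing hDd in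
lemma cover_lemma (C : Set XX) (hC : IsCompact C)
    (h : ∀ y ∈ C, ∃ V, IsOpen V ∧ y ∈ V ∧ ∃ e ∈ J, C ∩ V ⊆ closure e) :
    ∃ E ∈ J, C ⊆ closure E := by
  classical
  have h' : ∀ y : ↥C, ∃ V, IsOpen V ∧ (y : XX) ∈ V ∧ ∃ e ∈ J, C ∩ V ⊆ closure e :=
    fun y => h y y.2
  choose V hVo hVm e heJ hVe using h'
  have hcov : C ⊆ ⋃ y : ↥C, V y := fun x hx => mem_iUnion.mpr ⟨⟨x, hx⟩, hVm ⟨x, hx⟩⟩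
  obtain ⟨t, ht⟩ := hC.elim_finite_subcover V hVo hcov
  refine ⟨⋃ y ∈ t, e y, finsetU D J hdown hunion hsing hDd t e (fun i _ => heJ i), ?_⟩
  intro x hx
  have h2 := ht hx
  simp only [mem_iUnion] at h2
  obtain ⟨y, hyt, hyV⟩ := h2
  exact closure_mono (subset_biUnion_of_mem (u := e) hyt) (hVe y ⟨hx, hyV⟩)

include hsub hdown hunion hsing hDd hclop hsep in
lemma key (K aB B' : Set XX) (hK : IsCompact K) (haB : aB ∈ J)
    (hB'c : IsClosed B') (hB'cl : B' ⊆ closure aB)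
    (hgood : ∀ y ∈ K, y ∉ B' → ∃ V, IsOpen V ∧ y ∈ V ∧ ∃ e ∈ J, K ∩ V ⊆ closure e) :
    ∃ e ∈ J, K ⊆ closure e := by
  classical
  set W : ℕ → Set XX := fun m => {y | ∃ z ∈ B', z ∈ cyl y m} with hWdef
  have hWopen : ∀ m, IsOpen (W m) := by
    intro m
    rw [isOpen_iff_forall_mem_open]
    rintro y ⟨z, hzB, hzc⟩
    exact ⟨cyl y m, fun y' hy' => ⟨z, hzB, fun i hi => (hzc i hi).trans (hy' i hi).symm⟩,
      isOpen_cyl y m, mem_cyl_self y m⟩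
  have hWanti : ∀ {m₁ m₂ : ℕ}, m₁ ≤ m₂ → W m₂ ⊆ W m₁ := by
    rintro m₁ m₂ h y ⟨z, hz, hzc⟩; exact ⟨z, hz, cyl_anti y h hzc⟩
  have hWcopen : ∀ m, IsOpen (W m)ᶜ := by
    intro m
    rw [isOpen_iff_forall_mem_open]
    intro y hy
    refine ⟨cyl y m, ?_, isOpen_cyl y m, mem_cyl_self y m⟩
    rintro y' hy' ⟨z, hzB, hzc⟩
    exact hy ⟨z, hzB, fun i hi => (hzc i hi).trans (hy' i hi)⟩
  have hB'W : ∀ m, B' ⊆ W m := fun m y hy => ⟨y, hy, mem_cyl_self y m⟩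
  set Km : ℕ → Set XX := fun m => K ∩ (W m)ᶜ with hKmdef
  have hKmcomp : ∀ m, IsCompact (Km m) := fun m => hK.inter_right (hWopen m).isClosed_compl
  have hKmmono : ∀ {m₁ m₂ : ℕ}, m₁ ≤ m₂ → Km m₁ ⊆ Km m₂ := by
    rintro m₁ m₂ h y ⟨hyK, hyW⟩
    exact ⟨hyK, fun hc => hyW (hWanti h hc)⟩
  have hKmB' : ∀ m, ∀ y ∈ Km m, y ∉ B' := fun m y hy hyB => hy.2 (hB'W m hyB)
  have hexhaust : ∀ y ∈ K, y ∉ B' → ∃ m, y ∈ Km m := by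
    intro y hyK hyB
    obtain ⟨m, hm⟩ := exists_cyl_subset hB'c.isOpen_compl hyB
    refine ⟨m, hyK, ?_⟩
    rintro ⟨z, hzB, hzc⟩
    exact hm hzc hzB
  have hEex : ∀ m, ∃ E ∈ J, Km m ⊆ closure E := by
    intro m
    apply cover_lemma D J hsub hdown hunion hsing hDd _ (hKmcomp m)
    intro y hy
    obtain ⟨V, hVo, hyV, e, heJ, hVe⟩ := hgood y hy.1 (hKmB' m y hy)
    exact ⟨V, hVo, hyV, e, heJ, fun p hp => hVe ⟨hp.1.1, hp.2⟩⟩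
  choose E hEJ hEcl using hEex
  set E' : ℕ → Set XX := fun m => aB ∪ ⋃ i ∈ Finset.range (m+1), E i with hE'def
  have hE'J : ∀ m, E' m ∈ J := fun m =>
    hunion _ _ haB (finsetU D J hdown hunion hsing hDd _ E (fun i _ => hEJ i))
  have hE'mono : ∀ {m₁ m₂ : ℕ}, m₁ ≤ m₂ → E' m₁ ⊆ E' m₂ := by
    intro m₁ m₂ h
    apply union_subset_union_right
    intro p hp
    simp only [mem_iUnion, Finset.mem_range] at hp ⊢
    obtain ⟨i, hi, hpi⟩ := hp
    exact ⟨i, by omega, hpi⟩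
  have hKmE' : ∀ m, Km m ⊆ closure (E' m) := by
    intro m
    refine (hEcl m).trans (closure_mono ?_)
    refine subset_union_of_subset_right ?_ _
    intro p hp
    simp only [mem_iUnion, Finset.mem_range]
    exact ⟨m, Nat.lt_succ_self m, hp⟩
  have hnex : ∀ k, ∃ mk, aB ∩ c k = ∅ → K ∩ c k ⊆ (W mk)ᶜ := by
    intro k
    by_cases h : aB ∩ c k = ∅
    · have hB'ck : ∀ z ∈ B', z ∉ c k := by
        intro z hz hzc
        obtain ⟨p, hp1, hp2⟩ := mem_closure_iff.mp (hB'cl hz) (c k) (hclop k).isOpen hzc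
        have : p ∈ aB ∩ c k := ⟨hp2, hp1⟩
        rw [h] at this
        exact this
      have hcov : K ∩ c k ⊆ ⋃ m, (W m)ᶜ := by
        intro y hy
        obtain ⟨m, hm⟩ := hexhaust y hy.1 (fun hB => hB'ck y hB hy.2)
        exact mem_iUnion.mpr ⟨m, hm.2⟩
      obtain ⟨t, ht⟩ := (hK.inter_right (hclop k).isClosed).elim_finite_subcover
        (fun m => (W m)ᶜ) hWcopen hcov
      refine ⟨t.sup id, fun _ y hy => ?_⟩
      have h2 := ht hy
      simp only [mem_iUnion] at h2
      obtain ⟨i, hit, hyi⟩ := h2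
      exact fun hc => hyi (hWanti (Finset.le_sup (f := id) hit) hc)
    · exact ⟨0, fun hc => absurd hc h⟩
  choose n hn using hnex
  have hLex : ∀ (x : XX) (m : ℕ), ∃ Lv, m ≤ Lv ∧ ∀ k ≤ m,
      (x ∈ c k → cyl x Lv ⊆ c k) ∧ (x ∉ c k → cyl x Lv ∩ c k = ∅) := by
    intro x m
    have hk : ∀ k, ∃ Lk, (x ∈ c k → cyl x Lk ⊆ c k) ∧ (x ∉ c k → cyl x Lk ∩ c k = ∅) := by
      intro k
      by_cases hx : x ∈ c k
      · obtain ⟨Lk, hLk⟩ := exists_cyl_subset (hclop k).isOpen hx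
        exact ⟨Lk, fun _ => hLk, fun hh => absurd hx hh⟩
      · obtain ⟨Lk, hLk⟩ := exists_cyl_subset (hclop k).isClosed.isOpen_compl hx
        refine ⟨Lk, fun hh => absurd hh hx, fun _ => ?_⟩
        rw [eq_empty_iff_forall_notMem]
        rintro p ⟨hp1, hp2⟩
        exact hLk hp1 hp2
    choose g hg using hk
    refine ⟨m + (Finset.range (m+1)).sup g, Nat.le_add_right _ _, ?_⟩
    intro k hkm
    have hgk : g k ≤ m + (Finset.range (m+1)).sup g :=
      le_trans (Finset.le_sup (Finset.mem_range.mpr (Nat.lt_succ_of_le hkm))) (Nat.le_add_left _ _)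
    constructor
    · exact fun hx => (cyl_anti x hgk).trans ((hg k).1 hx)
    · intro hx
      rw [eq_empty_iff_forall_notMem]
      rintro p ⟨hp1, hp2⟩
      have hmem : p ∈ cyl x (g k) := cyl_anti x hgk hp1
      have h0 := (hg k).2 hx
      rw [eq_empty_iff_forall_notMem] at h0
      exact h0 p ⟨hmem, hp2⟩
  choose L hLm hLs using hLex
  have hjex : ∀ (x : XX) (m : ℕ), ∃ jv, jv ≤ m ∧
      (∀ k ≤ m, aB ∩ c k = ∅ → x ∈ c k → jv ≤ n k) ∧
      (x ∈ Km m → x ∈ closure (E' jv)) := by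
    intro x m
    have hQne : ({i | i = m ∨ ∃ k, k ≤ m ∧ aB ∩ c k = ∅ ∧ x ∈ c k ∧ i = n k} : Set ℕ).Nonempty :=
      ⟨m, Or.inl rfl⟩
    refine ⟨sInf {i | i = m ∨ ∃ k, k ≤ m ∧ aB ∩ c k = ∅ ∧ x ∈ c k ∧ i = n k},
      Nat.sInf_le (Or.inl rfl), ?_, ?_⟩
    · intro k hkm h1 h2
      exact Nat.sInf_le (Or.inr ⟨k, hkm, h1, h2, rfl⟩)
    · intro hx
      have hmem := Nat.sInf_mem hQne
      rcases hmem with hmm | ⟨k, hk1, hk2, hk3, hk4⟩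
      · rw [hmm]
        exact hKmE' m hx
      · rw [hk4]
        exact hKmE' (n k) ⟨hx.1, hn k hk2 ⟨hx.1, hk3⟩⟩
  choose j hjm hjle hjcl using hjex
  have hdex : ∀ (x : XX) (m : ℕ), ∃ p, x ∈ Km m → p ∈ E' (j x m) ∧ p ∈ cyl x (L x m) := by
    intro x m
    by_cases hx : x ∈ Km m
    · obtain ⟨p, hp1, hp2⟩ := mem_closure_iff.mp (hjcl x m hx) (cyl x (L x m))
        (isOpen_cyl _ _) (mem_cyl_self _ _)
      exact ⟨p, fun _ => ⟨hp2, hp1⟩⟩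
    · exact ⟨x, fun hh => absurd hh hx⟩
  choose d hd using hdex
  set T : Set XX := {p | ∃ m x, x ∈ Km m ∧ p = d x m} with hTdef
  set e : Set XX := aB ∪ T with hedef
  have heD : e ⊆ D := by
    rintro p (hp | ⟨m, x, hx, rfl⟩)
    · exact hsub aB haB hp
    · exact hsub _ (hE'J (j x m)) (hd x m hx).1
  have hek : ∀ k, aB ∩ c k = ∅ → e ∩ c k ∈ J := by
    intro k hk
    apply hdown _ (E' (max (n k) k)) _ (hE'J _)
    rintro p ⟨hp | ⟨m, x, hx, rfl⟩, hpc⟩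
    · have hcontra : p ∈ aB ∩ c k := ⟨hp, hpc⟩
      rw [hk] at hcontra
      exact hcontra.elim
    · obtain ⟨hpE, hpcyl⟩ := hd x m hx
      by_cases hkm : k ≤ m
      · by_cases hxc : x ∈ c k
        · exact hE'mono (le_trans (hjle x m k hkm hk hxc) (le_max_left _ _)) hpE
        · have h0 := (hLs x m k hkm).2 hxc
          rw [eq_empty_iff_forall_notMem] at h0
          exact absurd ⟨hpcyl, hpc⟩ (h0 _)
      · push_neg at hkm
        exact hE'mono (le_trans (le_trans (hjm x m) (le_of_lt hkm)) (le_max_right _ _)) hpE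
  have heJ : e ∈ J := crit D J hsub c hsep heD haB hek
  refine ⟨e, heJ, ?_⟩
  intro x hxK
  by_cases hxB : x ∈ B'
  · exact closure_mono subset_union_left (hB'cl hxB)
  · obtain ⟨m₀, hm₀⟩ := hexhaust x hxK hxB
    rw [mem_closure_iff]
    intro U hU hxU
    obtain ⟨L₀, hL₀⟩ := exists_cyl_subset hU hxU
    have hxKm : x ∈ Km (max m₀ L₀) := hKmmono (le_max_left _ _) hm₀
    obtain ⟨hpE, hpcyl⟩ := hd x (max m₀ L₀) hxKm
    exact ⟨d x (max m₀ L₀),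
      hL₀ (cyl_anti x (le_max_right m₀ L₀) (cyl_anti x (hLm x _) hpcyl)),
      Or.inr ⟨max m₀ L₀, x, hxKm, rfl⟩⟩

end Main

lemma baire_aux (B : Set XX) (F : ℕ → Set XX) (hBne : B.Nonempty) (hBcomp : IsCompact B)
    (hF : ∀ n, IsClosed (F n)) (hcov : B ⊆ ⋃ n, F n) :
    ∃ n U, IsOpen U ∧ (B ∩ U).Nonempty ∧ B ∩ U ⊆ F n := by
  haveI : Nonempty ↥B := hBne.to_subtype
  haveI : CompactSpace ↥B := isCompact_iff_compactSpace.mp hBcomp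
  haveI : LocallyCompactSpace ↥B := WeaklyLocallyCompactSpace.locallyCompactSpace
  haveI : BaireSpace ↥B := BaireSpace.of_t2Space_locallyCompactSpace
  have h := nonempty_interior_of_iUnion_of_closed
    (f := fun n => ((↑) ⁻¹' F n : Set ↥B))
    (fun n => (hF n).preimage continuous_subtype_val) ?_
  · obtain ⟨n, x, hx⟩ := h
    obtain ⟨t, hts, hto, hxt⟩ := mem_interior.mp hx
    obtain ⟨U, hUo, hUt⟩ := isOpen_induced_iff.mp hto
    refine ⟨n, U, hUo, ⟨x, x.2, by rw [← hUt] at hxt; exact hxt⟩, ?_⟩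
    rintro y ⟨hyB, hyU⟩
    have hyt : (⟨y, hyB⟩ : ↥B) ∈ t := by rw [← hUt]; exact hyU
    exact hts hyt
  · ext x
    simp only [mem_iUnion, mem_preimage, mem_univ, iff_true]
    exact mem_iUnion.mp (hcov x.2)

lemma isClosed_cyl (x : XX) (n : ℕ) : IsClosed (cyl x n) := by
  have : cyl x n = ⋂ i ∈ Finset.range n, (fun y : XX => y i) ⁻¹' {x i} := by
    ext y; simp [cyl]
  rw [this]
  exact isClosed_biInter fun i _ => (IsClosed.preimage (continuous_apply i) (isClosed_discrete _))


/-- Lemma: for a dense ideal `J` on a countable dense `D ⊆ 2^ω` which is countably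
separated by traces of clopen sets, the family
`I = {A compact : ∃ a ∈ J, A ⊆ cl(a)}` is a σ-ideal of compact sets. -/
theorem sigmaIdeal_of_compacts_from_ideal
    (D : Set (ℕ → Bool)) (hDc : D.Countable) (hDd : Dense D)
    (J : Set (Set (ℕ → Bool)))
    (hsub : ∀ a ∈ J, a ⊆ D)
    (hdown : ∀ a b : Set (ℕ → Bool), a ⊆ b → b ∈ J → a ∈ J)
    (hunion : ∀ a b : Set (ℕ → Bool), a ∈ J → b ∈ J → a ∪ b ∈ J)
    (hsing : ∀ d ∈ D, ({d} : Set (ℕ → Bool)) ∈ J)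
    (hdense : ∀ b : Set (ℕ → Bool), b ⊆ D → b.Infinite →
      ∃ a : Set (ℕ → Bool), a ⊆ b ∧ a.Infinite ∧ a ∈ J)
    (c : ℕ → Set (ℕ → Bool)) (hclop : ∀ n, IsClopen (c n))
    (hsep : ∀ a ∈ J, ∀ b : Set (ℕ → Bool), b ⊆ D → b ∉ J →
      ∃ n, a ∩ (c n ∩ D) = ∅ ∧ b ∩ (c n ∩ D) ∉ J) :
    (∀ x : ℕ → Bool,
      ({x} : Set (ℕ → Bool)) ∈ {A | IsCompact A ∧ ∃ a ∈ J, A ⊆ closure a}) ∧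
    (∀ A B : Set (ℕ → Bool), A ⊆ B → IsCompact A →
      B ∈ {A | IsCompact A ∧ ∃ a ∈ J, A ⊆ closure a} →
      A ∈ {A | IsCompact A ∧ ∃ a ∈ J, A ⊆ closure a}) ∧
    (∀ f : ℕ → Set (ℕ → Bool),
      (∀ n, f n ∈ {A | IsCompact A ∧ ∃ a ∈ J, A ⊆ closure a}) →
      IsCompact (⋃ n, f n) →
      (⋃ n, f n) ∈ {A | IsCompact A ∧ ∃ a ∈ J, A ⊆ closure a}) := by
  classical
  refine ⟨?_, ?_, ?_⟩
  · -- singletons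
    intro x
    by_cases hx : x ∈ D
    · exact ⟨isCompact_singleton, {x}, hsing x hx, subset_closure⟩
    · have hgex : ∀ m : ℕ, ∃ p, p ∈ D ∧ p ∈ cyl x m := by
        intro m
        obtain ⟨p, hp1, hp2⟩ := hDd.exists_mem_open (isOpen_cyl x m) ⟨x, mem_cyl_self x m⟩
        exact ⟨p, hp1, hp2⟩
      choose g hgD hgc using hgex
      have hclx : x ∈ closure (range g) := by
        rw [mem_closure_iff]
        intro U hU hxU
        obtain ⟨m, hm⟩ := exists_cyl_subset hU hxU
        exact ⟨g m, hm (hgc m), mem_range_self m⟩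
      have hinf : (range g).Infinite := by
        intro hfin
        have : x ∈ range g := by
          rw [← hfin.isClosed.closure_eq]
          exact hclx
        obtain ⟨m, hmx⟩ := this
        exact hx (hmx ▸ hgD m)
      obtain ⟨a, haR, hainf, haJ⟩ := hdense (range g) (range_subset_iff.mpr hgD) hinf
      refine ⟨isCompact_singleton, a, haJ, singleton_subset_iff.mpr ?_⟩
      rw [mem_closure_iff]
      intro U hU hxU
      obtain ⟨m₀, hm₀⟩ := exists_cyl_subset hU hxU
      have hne : (a \ (g '' {i | i < m₀})).Nonempty :=
        (hainf.diff ((Set.finite_lt_nat m₀).image g)).nonempty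
      obtain ⟨p, hpa, hpim⟩ := hne
      obtain ⟨m, hmp⟩ := haR hpa
      have hm₀m : m₀ ≤ m := by
        by_contra hlt
        push_neg at hlt
        exact hpim ⟨m, hlt, hmp⟩
      exact ⟨p, hm₀ (hmp ▸ cyl_anti x hm₀m (hgc m)), hpa⟩
  · rintro A B hAB hAc ⟨-, a, haJ, hBa⟩
    exact ⟨hAc, a, haJ, hAB.trans hBa⟩
  · intro f hf hcomp
    have hf' : ∀ nn, ∃ av, av ∈ J ∧ f nn ⊆ closure av := fun nn => (hf nn).2
    choose a haJ hfa using hf'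
    set A := ⋃ nn, f nn with hA
    have hAcl : IsClosed A := hcomp.isClosed
    set Good : Set XX := {x | ∃ V, IsOpen V ∧ x ∈ V ∧ ∃ e ∈ J, A ∩ V ⊆ closure e} with hGood
    have hGoodOpen : IsOpen Good := by
      rw [isOpen_iff_forall_mem_open]
      rintro x ⟨V, hVo, hxV, he⟩
      exact ⟨V, fun x' hx' => ⟨V, hVo, hx', he⟩, hVo, hxV⟩
    have hAGood : ∀ x ∈ A, x ∈ Good := by
      by_contra hcon
      push_neg at hcon
      obtain ⟨x₀, hx₀A, hx₀G⟩ := hcon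
      have hBcomp : IsCompact (A ∩ Goodᶜ) := hcomp.inter_right hGoodOpen.isClosed_compl
      have hBne : (A ∩ Goodᶜ).Nonempty := ⟨x₀, hx₀A, hx₀G⟩
      have hcov : A ∩ Goodᶜ ⊆ ⋃ nn, closure (a nn) := by
        rintro y ⟨hyA, -⟩
        obtain ⟨nn, hynn⟩ := mem_iUnion.mp hyA
        exact mem_iUnion.mpr ⟨nn, hfa nn hynn⟩
      obtain ⟨n₀, U, hUo, hBUne, hBU⟩ :=
        baire_aux (A ∩ Goodᶜ) _ hBne hBcomp (fun _ => isClosed_closure) hcov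
      obtain ⟨x₁, hx₁⟩ := hBUne
      obtain ⟨m₁, hm₁⟩ := exists_cyl_subset hUo hx₁.2
      have hKcomp : IsCompact (A ∩ cyl x₁ m₁) := hcomp.inter_right (isClosed_cyl x₁ m₁)
      have hB'c : IsClosed ((A ∩ Goodᶜ) ∩ cyl x₁ m₁) :=
        (hAcl.inter hGoodOpen.isClosed_compl).inter (isClosed_cyl x₁ m₁)
      have hB'cl : (A ∩ Goodᶜ) ∩ cyl x₁ m₁ ⊆ closure (a n₀) := fun y hy =>
        hBU ⟨hy.1, hm₁ hy.2⟩
      have hgood : ∀ y ∈ A ∩ cyl x₁ m₁, y ∉ (A ∩ Goodᶜ) ∩ cyl x₁ m₁ →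
          ∃ V, IsOpen V ∧ y ∈ V ∧ ∃ e ∈ J, (A ∩ cyl x₁ m₁) ∩ V ⊆ closure e := by
        rintro y ⟨hyA, hycyl⟩ hyB'
        have hyGood : y ∈ Good := by
          by_contra hyG
          exact hyB' ⟨⟨hyA, hyG⟩, hycyl⟩
        obtain ⟨V, hVo, hyV, e, heJ, hVe⟩ := hyGood
        exact ⟨V, hVo, hyV, e, heJ, fun p hp => hVe ⟨hp.1.1, hp.2⟩⟩
      obtain ⟨e, heJ, hKe⟩ := key D J hsub hdown hunion hsing c hclop hsep hDd
        (A ∩ cyl x₁ m₁) (a n₀) ((A ∩ Goodᶜ) ∩ cyl x₁ m₁)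
        hKcomp (haJ n₀) hB'c hB'cl hgood
      exact hx₁.1.2 ⟨cyl x₁ m₁, isOpen_cyl _ _, mem_cyl_self _ _, e, heJ, hKe⟩
    have hgoodA : ∀ y ∈ A, y ∉ (∅ : Set XX) →
        ∃ V, IsOpen V ∧ y ∈ V ∧ ∃ e ∈ J, A ∩ V ⊆ closure e := by
      intro y hy _
      exact hAGood y hy
    obtain ⟨e, heJ, hAe⟩ := key D J hsub hdown hunion hsing c hclop hsep hDd
      A ∅ ∅ hcomp (empty_mem D J hdown hsing hDd) isClosed_empty (empty_subset _) hgoodA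
    exact ⟨hcomp, e, heJ, hAe⟩
end

section
/- An ideal J on ω is weakly selective if and only if for every J-positive set b ⊆ ω, every tree T ⊆ b^{<ω} all of whose splitting sets are co-(J↾b) (i.e. b \ split_T(t) ∈ J for every t ∈ T) has a J-positive branch. -/
open Set TopologicalSpace

/-- The splitting set of a node `t` in a tree `T` of finite sequences. -/
def splitT (T : Set (List ℕ)) (t : List ℕ) : Set ℕ := {n : ℕ | t ++ [n] ∈ T}

section Aux
variable {J : Set (Set ℕ)}

lemma ideal_empty (hJ : IsIdeal J) : (∅ : Set ℕ) ∈ J :=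
  hJ.1 ∅ {0} (empty_subset _) (hJ.2.2 0)

lemma ideal_finite (hJ : IsIdeal J) {s : Set ℕ} (hs : s.Finite) : s ∈ J := by
  refine Set.Finite.induction_on _ hs (ideal_empty hJ) ?_
  intro x t _ _ ih
  have h : insert x t = {x} ∪ t := by ext y; simp
  rw [h]
  exact hJ.2.1 _ _ (hJ.2.2 x) ih

lemma ideal_sub_union (hJ : IsIdeal J) {a s t : Set ℕ} (h : a ⊆ s ∪ t)
    (hs : s ∈ J) (ht : t ∈ J) : a ∈ J :=
  hJ.1 a (s ∪ t) h (hJ.2.1 _ _ hs ht)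

lemma ideal_infinite (hJ : IsIdeal J) {a : Set ℕ} (ha : a ∉ J) : a.Infinite := by
  intro hfin
  exact ha (ideal_finite hJ hfin)

lemma ideal_list_fibers (hJ : IsIdeal J) (b : Set ℕ) (f : ℕ → ℕ)
    (hfib : ∀ c, {n ∈ b | f n = c} ∈ J) :
    ∀ l : List ℕ, {n ∈ b | f n ∈ l} ∈ J := by
  intro l
  induction l with
  | nil => exact hJ.1 _ _ (by simp) (ideal_empty hJ)
  | cons c l ih =>
    refine ideal_sub_union hJ ?_ (hfib c) ih
    intro n hn
    rcases hn with ⟨hnb, hnl⟩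
    simp only [List.mem_cons] at hnl
    rcases hnl with h | h
    · exact Or.inl ⟨hnb, h⟩
    · exact Or.inr ⟨hnb, h⟩

end Aux
lemma finite_bounded_lists (N m : ℕ) :
    {l : List ℕ | l.length ≤ N ∧ ∀ i ∈ l, i ≤ m}.Finite := by
  induction N with
  | zero =>
    apply Set.Finite.subset (Set.finite_singleton ([] : List ℕ))
    rintro l ⟨hl, -⟩
    simp [List.length_eq_zero_iff.mp (Nat.le_zero.mp hl)]
  | succ N ih =>
    apply Set.Finite.subset
      ((Set.finite_singleton ([] : List ℕ)).union
        (Set.Finite.image2 List.cons (Set.finite_Iic m) ih))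
    rintro l ⟨hl, hb⟩
    cases l with
    | nil => exact Or.inl rfl
    | cons a l =>
      refine Or.inr (Set.mem_image2_of_mem ?_ ?_)
      · exact hb a List.mem_cons_self
      · exact ⟨(by simpa using hl), fun i hi => hb i (List.mem_cons_of_mem a hi)⟩

lemma finite_sorted_bounded (m : ℕ) :
    {t : List ℕ | t.Pairwise (· < ·) ∧ ∀ i ∈ t, i ≤ m}.Finite := by
  apply Set.Finite.subset (finite_bounded_lists (m + 1) m)
  rintro t ⟨hsort, hb⟩
  refine ⟨?_, hb⟩
  have hnd : t.Nodup := hsort.nodup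
  have : t.length = t.toFinset.card := (List.toFinset_card_of_nodup hnd).symm
  rw [this]
  have hsub : t.toFinset ⊆ Finset.range (m + 1) := by
    intro i hi
    simp only [List.mem_toFinset] at hi
    exact Finset.mem_range.mpr (Nat.lt_succ_of_le (hb i hi))
  simpa using Finset.card_le_card hsub

/-- The increasing enumeration of a suitable set is a branch. -/
lemma branch_of_good (T : Set (List ℕ)) (A : Set ℕ) (hAinf : A.Infinite)
    (hnil : ([] : List ℕ) ∈ T)
    (h0 : ∀ t ∈ T, t.Pairwise (· < ·) → (∀ i ∈ t, i ∈ A) → ∀ n ∈ A,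
        (∀ i ∈ t, i < n) → t ++ [n] ∈ T) :
    ∃ x : ℕ → ℕ, (∀ k : ℕ, (List.ofFn fun i : Fin k => x i) ∈ T) ∧ Set.range x = A := by
  classical
  set x : ℕ → ℕ := Nat.nth (· ∈ A) with hx
  have hAset : {n | n ∈ A}.Infinite := hAinf
  have hmem : ∀ k, x k ∈ A := fun k => Nat.nth_mem_of_infinite hAset k
  have hmono : StrictMono x := Nat.nth_strictMono hAset
  have key : ∀ k : ℕ, (List.ofFn fun i : Fin k => x i) ∈ T ∧
      (∀ i ∈ (List.ofFn fun i : Fin k => x i), i ∈ A ∧ i < x k) := by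
    intro k
    induction k with
    | zero => exact ⟨by simpa using hnil, by simp⟩
    | succ k ih =>
      have hconc : (List.ofFn fun i : Fin (k+1) => x i)
          = (List.ofFn fun i : Fin k => x i) ++ [x k] := by
        rw [List.ofFn_succ']
        simp [List.concat_eq_append]
      have hsort : (List.ofFn fun i : Fin k => x i).Pairwise (· < ·) := by
        rw [List.pairwise_ofFn]
        exact fun i j hij => hmono (by exact_mod_cast hij)
      have hT : (List.ofFn fun i : Fin k => x i) ++ [x k] ∈ T := by
        refine h0 _ ih.1 hsort (fun i hi => (ih.2 i hi).1) (x k) (hmem k)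
          (fun i hi => (ih.2 i hi).2)
      constructor
      · rw [hconc]; exact hT
      · intro i hi
        rw [hconc, List.mem_append] at hi
        rcases hi with hi | hi
        · exact ⟨(ih.2 i hi).1, lt_trans (ih.2 i hi).2 (hmono (Nat.lt_succ_self k))⟩
        · simp only [List.mem_singleton] at hi
          subst hi
          exact ⟨hmem k, hmono (Nat.lt_succ_self k)⟩
  exact ⟨x, fun k => (key k).1, Nat.range_nth_of_infinite hAset⟩

/-- Lemma (Grigorieff-style characterization): `J` is weakly selective iff for every
`J`-positive `b`, every nonempty tree `T ⊆ b^{<ω}` all of whose splitting sets are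
co-`(J↾b)` has a `J`-positive branch. -/
theorem weaklySelective_iff_coSplitting_trees_have_positive_branch
    (J : Set (Set ℕ)) (hJ : IsIdeal J) :
    WeaklySelective J ↔
      ∀ b : Set ℕ, b ∉ J →
        ∀ T : Set (List ℕ),
          (∀ t ∈ T, ∀ s : List ℕ, s <+: t → s ∈ T) →
          ([] : List ℕ) ∈ T →
          (∀ t ∈ T, ∀ n ∈ t, n ∈ b) →
          (∀ t ∈ T, b \ splitT T t ∈ J) →
          ∃ x : ℕ → ℕ, (∀ n : ℕ, (List.ofFn fun i : Fin n => x i) ∈ T) ∧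
            Set.range x ∉ J := by
  classical
  constructor
  · -- Forward direction
    intro hWS b hb T htree hnilT hTb hsplit
    set F : ℕ → Set (List ℕ) := fun n =>
      {t | t ∈ T ∧ t.Pairwise (· < ·) ∧ (∀ i ∈ t, i < n) ∧ t ++ [n] ∉ T} with hF
    set f₁ : ℕ → ℕ := fun n => sInf ((fun t => Encodable.encode t + 1) '' F n) with hf₁
    have hf₁le : ∀ n t, t ∈ F n → f₁ n ≤ Encodable.encode t + 1 := by
      intro n t ht
      exact Nat.sInf_le ⟨t, ht, rfl⟩
    have hzero : ∀ n, f₁ n = 0 → F n = ∅ := by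
      intro n h0
      by_contra hne
      obtain ⟨t, ht⟩ := Set.nonempty_iff_ne_empty.2 hne
      have himg : ((fun t => Encodable.encode t + 1) '' F n).Nonempty := ⟨_, t, ht, rfl⟩
      have hmem := Nat.sInf_mem himg
      obtain ⟨s, _, hs⟩ := hmem
      have hs' : Encodable.encode s + 1 = f₁ n := hs
      omega
    have hwitness : ∀ n, f₁ n ≠ 0 → ∃ t ∈ F n, Encodable.encode t + 1 = f₁ n := by
      intro n h0
      have hne : F n ≠ ∅ := fun h => h0 (by simp [hf₁, h, Nat.sInf_empty])
      obtain ⟨t, ht⟩ := Set.nonempty_iff_ne_empty.2 hne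
      have himg : ((fun t => Encodable.encode t + 1) '' F n).Nonempty := ⟨_, t, ht, rfl⟩
      have hmem := Nat.sInf_mem himg
      obtain ⟨s, hs, hse⟩ := hmem
      exact ⟨s, hs, hse⟩
    obtain ⟨a₁, ha₁b, ha₁, hcase⟩ := hWS b hb f₁
    rcases hcase with hinj | ⟨c, hc⟩
    · -- injective case
      have hBl : ∀ t ∈ T, t.Pairwise (· < ·) →
          {n | n ∈ a₁ ∧ (∀ i ∈ t, i < n) ∧ t ++ [n] ∉ T}.Finite := by
        intro t htT hts
        have hsub : {n | n ∈ a₁ ∧ (∀ i ∈ t, i < n) ∧ t ++ [n] ∉ T} ⊆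
            {n | n ∈ a₁ ∧ f₁ n ≤ Encodable.encode t + 1} := by
          rintro n ⟨hn, h1, h2⟩
          exact ⟨hn, hf₁le n t ⟨htT, hts, h1, h2⟩⟩
        refine Set.Finite.subset ?_ hsub
        refine Set.Finite.of_finite_image ?_ (hinj.mono (fun n hn => hn.1))
        refine Set.Finite.subset (Set.finite_Iic (Encodable.encode t + 1)) ?_
        rintro _ ⟨n, ⟨_, hn⟩, rfl⟩
        exact hn
      set Bl' : ℕ → Set ℕ := fun m =>
        ⋃ t ∈ {t : List ℕ | t ∈ T ∧ t.Pairwise (· < ·) ∧ ∀ i ∈ t, i ≤ m},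
          {n | n ∈ a₁ ∧ (∀ i ∈ t, i < n) ∧ t ++ [n] ∉ T} with hBl'def
      have hBl'fin : ∀ m, (Bl' m).Finite := by
        intro m
        refine Set.Finite.biUnion ?_ ?_
        · exact Set.Finite.subset (finite_sorted_bounded m) (fun t ht => ⟨ht.2.1, ht.2.2⟩)
        · intro t ht
          exact hBl t ht.1 ht.2.1
      have hKex : ∀ m, ∃ B : ℕ, ∀ n ∈ Bl' m, n < B := by
        intro m
        obtain ⟨B, hB⟩ := (hBl'fin m).bddAbove
        exact ⟨B + 1, fun n hn => Nat.lt_succ_of_le (hB hn)⟩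
      set K0 : ℕ → ℕ := fun m => (hKex m).choose with hK0def
      have hK0 : ∀ m, ∀ n ∈ Bl' m, n < K0 m := fun m => (hKex m).choose_spec
      set K : ℕ → ℕ := fun m => (Finset.range (m + 1)).sup K0 with hKdef
      have hKmono : Monotone K := by
        intro i j hij
        exact Finset.sup_mono (Finset.range_subset_range.mpr (by omega))
      have hK0le : ∀ m, K0 m ≤ K m := fun m =>
        Finset.le_sup (Finset.mem_range.mpr (Nat.lt_succ_self m))
      set cseq : ℕ → ℕ := fun j => Nat.rec 0 (fun _ cj => cj + K cj + 1) j with hcseq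
      have hcstep : ∀ j, cseq (j + 1) = cseq j + K (cseq j) + 1 := fun j => rfl
      have hcmono : StrictMono cseq := by
        apply strictMono_nat_of_lt_succ
        intro j
        rw [hcstep]
        omega
      have hcge : ∀ j, j ≤ cseq j := by
        intro j
        induction j with
        | zero => simp
        | succ j ih => rw [hcstep]; omega
      have hex : ∀ n : ℕ, ∃ j, n < cseq (j + 1) := by
        intro n
        exact ⟨n, lt_of_lt_of_le (Nat.lt_succ_self n) (hcge (n + 1))⟩
      set f₂ : ℕ → ℕ := fun n => Nat.find (hex n) with hf₂def
      have hf₂spec : ∀ n, n < cseq (f₂ n + 1) := fun n => Nat.find_spec (hex n)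
      have hf₂min : ∀ n j, n < cseq (j + 1) → f₂ n ≤ j := fun n j h => Nat.find_min' (hex n) h
      have hf₂mono : ∀ m n : ℕ, m ≤ n → f₂ m ≤ f₂ n := fun m n h =>
        hf₂min m _ (lt_of_le_of_lt h (hf₂spec n))
      have hcz : cseq 0 = 0 := rfl
      have hc2 : ∀ n, cseq (f₂ n) ≤ n := by
        intro n
        cases h : f₂ n with
        | zero => rw [hcz]; exact Nat.zero_le n
        | succ j =>
          by_contra hlt
          push_neg at hlt
          have := hf₂min n j hlt
          omega
      obtain ⟨a₂, ha₂a₁, ha₂, hcase₂⟩ := hWS a₁ ha₁ f₂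
      rcases hcase₂ with hinj₂ | ⟨c₂, hc₂⟩
      · -- doubly injective: parity split
        have hPsplit : a₂ ⊆ {n ∈ a₂ | f₂ n % 2 = 0} ∪ {n ∈ a₂ | f₂ n % 2 = 1} := by
          intro n hn
          rcases Nat.mod_two_eq_zero_or_one (f₂ n) with h | h
          · exact Or.inl ⟨hn, h⟩
          · exact Or.inr ⟨hn, h⟩
        have hone : ∃ p, {n ∈ a₂ | f₂ n % 2 = p} ∉ J := by
          by_contra h
          push_neg at h
          exact ha₂ (ideal_sub_union hJ hPsplit (h 0) (h 1))
        obtain ⟨p, hp⟩ := hone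
        set astar := {n ∈ a₂ | f₂ n % 2 = p} with hastar
        have hgap : ∀ m ∈ astar, ∀ n ∈ astar, m < n → K m < n := by
          intro m hm n hn hmn
          have hne2 : f₂ m ≠ f₂ n := fun h => (ne_of_lt hmn) (hinj₂ hm.1 hn.1 h)
          have hlt2 : f₂ m < f₂ n :=
            lt_of_le_of_ne (hf₂mono m n (le_of_lt hmn)) hne2
          have hpar : f₂ m % 2 = f₂ n % 2 := hm.2.trans hn.2.symm
          have h2 : f₂ m + 2 ≤ f₂ n := by omega
          calc K m ≤ K (cseq (f₂ m + 1)) := hKmono (le_of_lt (hf₂spec m))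
            _ < cseq (f₂ m + 2) := by rw [hcstep (f₂ m + 1)]; omega
            _ ≤ cseq (f₂ n) := hcmono.monotone h2
            _ ≤ n := hc2 n
        set A := {n ∈ astar | [n] ∈ T} with hA
        have hdiff : astar \ A ⊆ {n | n ∈ a₁ ∧ (∀ i ∈ ([] : List ℕ), i < n) ∧
            ([] : List ℕ) ++ [n] ∉ T} := by
          rintro n ⟨hn, hnA⟩
          refine ⟨ha₂a₁ hn.1, by simp, ?_⟩
          simp only [List.nil_append]
          intro h
          exact hnA ⟨hn, h⟩
        have hdifffin : (astar \ A).Finite :=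
          Set.Finite.subset (hBl [] hnilT List.Pairwise.nil) hdiff
        have hApos : A ∉ J := by
          intro h
          refine hp (ideal_sub_union hJ ?_ h (ideal_finite hJ hdifffin))
          intro n hn
          by_cases hnA : n ∈ A
          · exact Or.inl hnA
          · exact Or.inr ⟨hn, hnA⟩
        have hgood : ∀ t ∈ T, t.Pairwise (· < ·) → (∀ i ∈ t, i ∈ A) → ∀ n ∈ A,
            (∀ i ∈ t, i < n) → t ++ [n] ∈ T := by
          intro t htT hts htA n hnA hlt
          cases t with
          | nil => simpa using hnA.2
          | cons a l =>
            set t := a :: l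
            have hne : t.toFinset.Nonempty := ⟨a, by simp [t]⟩
            set m := t.toFinset.max' hne with hm
            have hmmem : m ∈ t := List.mem_toFinset.mp (Finset.max'_mem _ hne)
            have hmle : ∀ i ∈ t, i ≤ m := fun i hi =>
              Finset.le_max' _ _ (List.mem_toFinset.mpr hi)
            by_contra happ
            have hnBl : n ∈ Bl' m := by
              refine Set.mem_biUnion (show t ∈ _ from ⟨htT, hts, hmle⟩) ?_
              exact ⟨ha₂a₁ hnA.1.1, hlt, happ⟩
            have h1 : n < K0 m := hK0 m n hnBl
            have h2 : K m < n := hgap m (htA m hmmem).1 n hnA.1 (hlt m hmmem)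
            have := hK0le m
            omega
        obtain ⟨x, hxT, hxr⟩ := branch_of_good T A (ideal_infinite hJ hApos) hnilT hgood
        exact ⟨x, hxT, by rw [hxr]; exact hApos⟩
      · -- f₂ constant: a₂ finite, contradiction
        exfalso
        apply ha₂
        apply ideal_finite hJ
        refine Set.Finite.subset (Set.finite_Iio (cseq (c₂ + 1))) ?_
        intro n hn
        have := hf₂spec n
        rw [hc₂ n hn] at this
        exact this
    · -- f₁ constant
      rcases Nat.eq_zero_or_pos c with rfl | hcpos
      · -- c = 0: all of a₁ is everywhere-good
        have hgood : ∀ t ∈ T, t.Pairwise (· < ·) → (∀ i ∈ t, i ∈ a₁) → ∀ n ∈ a₁,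
            (∀ i ∈ t, i < n) → t ++ [n] ∈ T := by
          intro t htT hts _ n hn hlt
          by_contra happ
          have hmem : t ∈ F n := ⟨htT, hts, hlt, happ⟩
          rw [hzero n (hc n hn)] at hmem
          exact hmem
        obtain ⟨x, hxT, hxr⟩ := branch_of_good T a₁ (ideal_infinite hJ ha₁) hnilT hgood
        exact ⟨x, hxT, by rw [hxr]; exact ha₁⟩
      · -- c > 0: everyone rejects the same node, contradiction
        exfalso
        have hA1ne : a₁.Nonempty := by
          rcases Set.eq_empty_or_nonempty a₁ with h | h
          · exact absurd (h ▸ ideal_empty hJ) ha₁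
          · exact h
        obtain ⟨n₀, hn₀⟩ := hA1ne
        obtain ⟨tstar, htstar, hts_enc⟩ := hwitness n₀ (by rw [hc n₀ hn₀]; omega)
        have hall : ∀ n ∈ a₁, tstar ∈ F n := by
          intro n hn
          obtain ⟨t, ht, ht_enc⟩ := hwitness n (by rw [hc n hn]; omega)
          have : Encodable.encode t = Encodable.encode tstar := by
            rw [hc n hn] at ht_enc
            rw [hc n₀ hn₀] at hts_enc
            omega
          rwa [Encodable.encode_injective this] at ht
        apply ha₁
        refine hJ.1 a₁ (b \ splitT T tstar) ?_ (hsplit tstar htstar.1)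
        intro n hn
        exact ⟨ha₁b hn, (hall n hn).2.2.2⟩
  · -- Backward direction
    intro hT b hb f
    by_cases hfib : ∀ c, {n ∈ b | f n = c} ∈ J
    · set T : Set (List ℕ) := {t | (∀ n ∈ t, n ∈ b) ∧ (t.map f).Nodup} with hTdef
      have h1 : ∀ t ∈ T, ∀ s : List ℕ, s <+: t → s ∈ T := by
        rintro t ⟨htb, htnd⟩ s hs
        exact ⟨fun n hn => htb n (hs.sublist.subset hn),
          htnd.sublist (hs.map f).sublist⟩
      have h2 : ([] : List ℕ) ∈ T := ⟨by simp, by simp⟩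
      have h3 : ∀ t ∈ T, ∀ n ∈ t, n ∈ b := fun t ht => ht.1
      have h4 : ∀ t ∈ T, b \ splitT T t ∈ J := by
        intro t ht
        refine hJ.1 _ {n ∈ b | f n ∈ t.map f} ?_ (ideal_list_fibers hJ b f hfib _)
        rintro n ⟨hnb, hns⟩
        refine ⟨hnb, ?_⟩
        by_contra hfn
        apply hns
        refine ⟨?_, ?_⟩
        · intro m hm
          rw [List.mem_append] at hm
          rcases hm with hm | hm
          · exact ht.1 m hm
          · simp only [List.mem_singleton] at hm
            exact hm ▸ hnb
        · rw [List.map_append]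
          rw [List.nodup_append]
          refine ⟨ht.2, List.nodup_singleton _, ?_⟩
          intro a ha b' hb'
          simp only [List.map_singleton, List.mem_singleton] at hb'
          exact fun h => hfn (hb' ▸ h ▸ ha)
      obtain ⟨x, hxT, hxr⟩ := hT b hb T h1 h2 h3 h4
      refine ⟨Set.range x, ?_, hxr, Or.inl ?_⟩
      · rintro _ ⟨n, rfl⟩
        exact h3 _ (hxT (n + 1)) (x n)
          (List.mem_ofFn.mpr ⟨⟨n, Nat.lt_succ_self n⟩, rfl⟩)
      · rintro _ ⟨i, rfl⟩ _ ⟨j, rfl⟩ hf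
        have hT' := hxT (max i j + 1)
        have hnd : ((List.ofFn fun k : Fin (max i j + 1) => x k).map f).Nodup := hT'.2
        rw [List.map_ofFn] at hnd
        rw [List.nodup_ofFn] at hnd
        have hij : (⟨i, by omega⟩ : Fin (max i j + 1)) = ⟨j, by omega⟩ := by
          apply hnd
          simpa using hf
        have : i = j := by
          simpa using congrArg Fin.val hij
        rw [this]
    · push_neg at hfib
      obtain ⟨c, hc⟩ := hfib
      exact ⟨{n ∈ b | f n = c}, fun n hn => hn.1, hc, Or.inr ⟨c, fun n hn => hn.2⟩⟩
end
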